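/- arXiv:1606.01647 — 8 statements merged into one kernel-verified Lean document; each statement's English description precedes it below -/
import Mathlib

section
/- Let M be a left R-module with simple submodules S and T such that S ∩ T = 0, S + T = M, and S ≅ T as R-modules. Then the cardinality of the set of nontrivial submodules of M equals |End(S)| + 1, where End(S) is the ring of R-module endomorphisms of S. In particular, if End(S) is infinite then M has infinitely many nontrivial submodules. -/
/-- Let `M` be a left `R`-module with simple submodules `S` and `T` such that
`S ⊓ T = ⊥`, `S ⊔ T = ⊤`, and `S ≅ T`.  Then the cardinality of the set of nontrivial
submodules of `M` equals `|End(S)| + 1`.  In particular, if `End(S)` is infinite then `M`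
has infinitely many nontrivial submodules. -/
theorem statement2 {R : Type*} [Ring R] {M : Type*} [AddCommGroup M] [Module R M]
    (S T : Submodule R M) (hS : IsSimpleModule R S) (hT : IsSimpleModule R T)
    (h1 : S ⊓ T = ⊥) (h2 : S ⊔ T = ⊤) (hiso : Nonempty (S ≃ₗ[R] T)) :
    Cardinal.mk {N : Submodule R M | N ≠ ⊥ ∧ N ≠ ⊤} =
      Cardinal.mk (Module.End R S) + 1 ∧
    (Infinite (Module.End R S) →
      {N : Submodule R M | N ≠ ⊥ ∧ N ≠ ⊤}.Infinite) := by
  obtain ⟨e⟩ := hiso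
  have hSa : IsAtom S := isSimpleModule_iff_isAtom.mp hS
  have hTa : IsAtom T := isSimpleModule_iff_isAtom.mp hT
  have hc : IsCompl S T := ⟨disjoint_iff.2 h1, codisjoint_iff.2 h2⟩
  set πS := S.projectionOnto T hc with hπS
  set πT := T.projectionOnto S hc.symm with hπT
  set G : (S →ₗ[R] T) → Submodule R M :=
    fun f => LinearMap.range (S.subtype + T.subtype ∘ₗ f) with hG
  have hmemG : ∀ (f : S →ₗ[R] T) (x : M),
      x ∈ G f ↔ ∃ s : S, (s : M) + (f s : M) = x := by
    intro f x
    simp [hG, LinearMap.mem_range]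
  -- G f ⊓ T = ⊥
  have hGT : ∀ f, G f ⊓ T = ⊥ := by
    intro f
    rw [eq_bot_iff]
    rintro x ⟨hx1, hx2⟩
    obtain ⟨s, hs⟩ := (hmemG f x).1 hx1
    have hsST : (s : M) ∈ S ⊓ T := by
      refine ⟨s.2, ?_⟩
      have hse : (s : M) = x - (f s : M) := eq_sub_of_add_eq hs
      rw [hse]
      exact sub_mem hx2 (f s).2
    rw [h1] at hsST
    have hs0 : s = 0 := Subtype.ext hsST
    simp only [Submodule.mem_bot]
    rw [← hs, hs0]
    simp
  have hTnetop : T ≠ ⊤ := fun h => hSa.1 (by rw [← h1, h, inf_top_eq])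
  set A := {N : Submodule R M | N ≠ ⊥ ∧ N ≠ ⊤} with hA
  have hGmem : ∀ f, G f ∈ A := by
    intro f
    constructor
    · obtain ⟨s, hsS, hs0⟩ := Submodule.ne_bot_iff S |>.1 hSa.1
      intro h
      have hmem : ((⟨s, hsS⟩ : S) : M) + (f ⟨s, hsS⟩ : M) ∈ G f :=
        (hmemG f _).2 ⟨⟨s, hsS⟩, rfl⟩
      rw [h, Submodule.mem_bot] at hmem
      apply hs0
      have hst : s ∈ S ⊓ T := by
        refine ⟨hsS, ?_⟩
        have hneg : s = -(f ⟨s, hsS⟩ : M) := by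
          rw [eq_neg_iff_add_eq_zero]; exact hmem
        rw [hneg]
        exact neg_mem (f _).2
      rw [h1] at hst
      exact hst
    · intro h
      apply hTa.1
      rw [← hGT f, h, top_inf_eq]
  have hTneG : ∀ f, T ≠ G f := by
    intro f h
    apply hTa.1
    rw [← hGT f, ← h, inf_idem]
  have hGinj : Function.Injective G := by
    intro f g hfg
    ext s
    have hmem : (s : M) + (f s : M) ∈ G g := by
      rw [← hfg]; exact (hmemG f _).2 ⟨s, rfl⟩
    obtain ⟨s', hs'⟩ := (hmemG g _).1 hmem
    have hdiff : (s : M) - (s' : M) ∈ S ⊓ T := by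
      refine ⟨sub_mem s.2 s'.2, ?_⟩
      have heq : (s : M) - (s' : M) = (g s' : M) - (f s : M) := by
        rw [sub_eq_sub_iff_add_eq_add, ← hs']
        abel
      rw [heq]
      exact sub_mem (g s').2 (f s).2
    rw [h1, Submodule.mem_bot, sub_eq_zero] at hdiff
    have hss' : s = s' := Subtype.ext hdiff
    subst hss'
    have : (f s : M) = (g s : M) := by
      have := hs'
      exact (add_right_injective (s : M)).eq_iff.mp (by rw [this])
    exact this
  -- the bijection
  set Φ : Option (S →ₗ[R] T) → A := fun o =>
    Option.rec ⟨T, hTa.1, hTnetop⟩ (fun f => ⟨G f, hGmem f⟩) o with hΦ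
  have hΦbij : Function.Bijective Φ := by
    constructor
    · rintro (_ | f) (_ | g) h <;> simp only [hΦ, Subtype.mk.injEq] at h
      · rfl
      · exact absurd h (hTneG g)
      · exact absurd h.symm (hTneG f)
      · rw [hGinj h]
    · rintro ⟨N, hNbot, hNtop⟩
      by_cases hTN : T ≤ N
      · -- N = T
        refine ⟨none, ?_⟩
        have hSN : S ⊓ N = ⊥ := by
          rcases (hSa.le_iff.mp inf_le_left) with h | h
          · exact h
          · exfalso
            apply hNtop
            rw [eq_top_iff, ← h2]
            exact sup_le (h ▸ inf_le_right) hTN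
        have hNT' : N = T := by
          have hmod := sup_inf_assoc_of_le S hTN
          rw [sup_comm T S, h2, top_inf_eq] at hmod
          rw [hmod, hSN, sup_bot_eq]
        exact Subtype.ext hNT'.symm
      · -- N is a graph
        have hNT : N ⊓ T = ⊥ := by
          rcases (hTa.le_iff.mp inf_le_right) with h | h
          · exact h
          · exact absurd (h ▸ inf_le_left) hTN
        have hNsup : N ⊔ T = ⊤ := by
          have hle : S ⊓ (N ⊔ T) ≤ S := inf_le_left
          rcases (hSa.le_iff.mp hle) with h | h
          · exfalso
            have hmod := sup_inf_assoc_of_le S (le_sup_right : T ≤ N ⊔ T)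
            rw [sup_comm T S, h2, top_inf_eq, h, sup_bot_eq] at hmod
            have hNle : N ≤ T := hmod ▸ le_sup_left
            exact hNbot (by rw [← hNT, inf_eq_left.mpr hNle])
          · rw [eq_top_iff, ← h2]
            exact sup_le (h ▸ inf_le_right) le_sup_right
        have hcN : IsCompl N T := ⟨disjoint_iff.2 hNT, codisjoint_iff.2 hNsup⟩
        set gN : N →ₗ[R] S := πS ∘ₗ N.subtype with hgN
        have hgNinj : Function.Injective gN := by
          rw [← LinearMap.ker_eq_bot, eq_bot_iff]
          rintro ⟨x, hx⟩ hker
          have hxT : x ∈ T := by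
            have : πS x = 0 := hker
            rwa [hπS, Submodule.projectionOnto_apply_eq_zero_iff] at this
          have : x ∈ N ⊓ T := ⟨hx, hxT⟩
          rw [hNT, Submodule.mem_bot] at this
          exact Submodule.mem_bot _ |>.2 (Subtype.ext this)
        have hgNsurj : Function.Surjective gN := by
          intro s
          have hmem : (s : M) ∈ N ⊔ T := by rw [hNsup]; trivial
          obtain ⟨n, hn, t, ht, hnt⟩ := Submodule.mem_sup.1 hmem
          refine ⟨⟨n, hn⟩, ?_⟩
          have : πS n = s := by
            have h1' : πS n + πS t = πS (s : M) := by rw [← map_add, hnt]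
            rw [hπS] at h1' ⊢
            rw [Submodule.projectionOnto_apply_of_mem_right hc ht, add_zero,
              Submodule.projectionOnto_apply_left hc s] at h1'
            exact h1'
          exact this
        set eN := LinearEquiv.ofBijective gN ⟨hgNinj, hgNsurj⟩ with heN
        set f : S →ₗ[R] T := (πT ∘ₗ N.subtype) ∘ₗ (eN.symm : S →ₗ[R] N) with hf
        have key : ∀ s : S, (s : M) + (f s : M) = ((eN.symm s : N) : M) := by
          intro s
          have h1' : πS ((eN.symm s : N) : M) = s := by
            have := eN.apply_symm_apply s
            rw [heN] at this
            exact this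
          have h2' : (f s : M) = πT ((eN.symm s : N) : M) := rfl
          have h1'' : ((πS ((eN.symm s : N) : M)) : M) = (s : M) :=
            congrArg Subtype.val h1'
          rw [h2', ← h1'']
          exact Submodule.projection_add_projection_eq_self hc _
        refine ⟨some f, ?_⟩
        simp only [hΦ, Subtype.mk.injEq]
        apply le_antisymm
        · intro x hx
          obtain ⟨s, hs⟩ := (hmemG f x).1 hx
          rw [← hs, key s]
          exact (eN.symm s : N).2
        · intro x hx
          rw [hmemG]
          refine ⟨gN ⟨x, hx⟩, ?_⟩
          rw [key]
          rw [heN]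
          exact congrArg _ (eN.symm_apply_apply ⟨x, hx⟩)
  -- cardinality computations
  have hcard : Cardinal.mk A = Cardinal.mk (Module.End R S) + 1 := by
    have h1' : Cardinal.mk A = Cardinal.mk (Option (S →ₗ[R] T)) :=
      (Cardinal.mk_congr (Equiv.ofBijective Φ hΦbij)).symm
    have h2' : Cardinal.mk (Option (S →ₗ[R] T)) = Cardinal.mk (S →ₗ[R] T) + 1 :=
      Cardinal.mk_option
    have h3' : Cardinal.mk (S →ₗ[R] T) = Cardinal.mk (Module.End R S) := by
      refine Cardinal.mk_congr ?_
      exact {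
        toFun := fun g => (e.symm : T →ₗ[R] S) ∘ₗ g
        invFun := fun g => (e : S →ₗ[R] T) ∘ₗ g
        left_inv := fun g => by ext x; simp
        right_inv := fun g => by ext x; simp }
    rw [h1', h2', h3']
  refine ⟨hcard, ?_⟩
  intro hinf
  rw [← Set.infinite_coe_iff]
  rw [Cardinal.infinite_iff] at hinf ⊢
  calc Cardinal.aleph0 ≤ Cardinal.mk (Module.End R S) := hinf
    _ ≤ Cardinal.mk (Module.End R S) + 1 := le_self_add
    _ = Cardinal.mk A := hcard.symm
end

section
/- Let T be a maximal submodule of a left R-module M. The following conditions are equivalent: (1) |G(M)| is infinite and deg(T) < |G(M)|; (2) all of the following hold: (i) there exists a simple submodule S of M with S ∩ T = 0 and S + T = M; (ii) T contains an essential simple submodule S' with S ≅ S' as R-modules; (iii) |End(S)| = |G(M)| and this cardinal is infinite; (iv) |G(M/S')| + 1 < |G(M)| (as cardinals). -/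
/-- The degree of a submodule `N` in the intersection graph `G(M)`. -/
noncomputable def subdeg {R : Type*} [Ring R] {M : Type*} [AddCommGroup M] [Module R M]
    (N : Submodule R M) : Cardinal :=
  Cardinal.mk {K : Submodule R M | K ≠ ⊥ ∧ K ≠ ⊤ ∧ K ≠ N ∧ K ⊓ N ≠ ⊥}

/-- The order `|G(M)|` of the intersection graph: the cardinality of the set of
nontrivial submodules of `M`. -/
noncomputable def graphOrder (R : Type*) [Ring R] (M : Type*) [AddCommGroup M]
    [Module R M] : Cardinal :=
  Cardinal.mk {N : Submodule R M | N ≠ ⊥ ∧ N ≠ ⊤}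

section aux
variable {R : Type*} [Ring R] {M : Type*} [AddCommGroup M] [Module R M]



/-- The graph of a homomorphism `f : S →ₗ T`, as a submodule of `M`. -/
noncomputable def graphMap (S T : Submodule R M) (f : ↥S →ₗ[R] ↥T) : Submodule R M :=
  LinearMap.range (S.subtype + T.subtype ∘ₗ f)

lemma mem_graphMap {S T : Submodule R M} {f : ↥S →ₗ[R] ↥T} {x : M} :
    x ∈ graphMap S T f ↔ ∃ s : ↥S, (s : M) + (f s : M) = x := by
  simp [graphMap, LinearMap.mem_range]

lemma graphMap_inf {S T : Submodule R M} (hST : S ⊓ T = ⊥) (f : ↥S →ₗ[R] ↥T) :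
    graphMap S T f ⊓ T = ⊥ := by
  rw [eq_bot_iff]
  rintro x ⟨hx1, hx2⟩
  obtain ⟨s, rfl⟩ := mem_graphMap.1 hx1
  have hs : (s : M) ∈ T := by
    have h : (s : M) = ((s : M) + (f s : M)) - (f s : M) := by abel
    rw [h]; exact T.sub_mem hx2 (f s).2
  have hs0 : (s : M) ∈ S ⊓ T := ⟨s.2, hs⟩
  rw [hST, Submodule.mem_bot] at hs0
  have : s = 0 := Subtype.ext hs0
  subst this
  simp

lemma graphMap_ne_bot {S T : Submodule R M} (hST : S ⊓ T = ⊥) (hS : S ≠ ⊥)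
    (f : ↥S →ₗ[R] ↥T) : graphMap S T f ≠ ⊥ := by
  obtain ⟨x, hx, hx0⟩ := Submodule.ne_bot_iff S |>.1 hS
  intro h
  have hmem : (⟨x, hx⟩ : ↥S) + (f ⟨x, hx⟩ : M) ∈ graphMap S T f := mem_graphMap.2 ⟨_, rfl⟩
  rw [h, Submodule.mem_bot] at hmem
  have hxT : x ∈ T := by
    have : (x : M) = -(f ⟨x, hx⟩ : M) := by
      rw [eq_neg_iff_add_eq_zero]; exact hmem
    rw [this]; exact T.neg_mem (f ⟨x, hx⟩).2
  have : x ∈ S ⊓ T := ⟨hx, hxT⟩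
  rw [hST, Submodule.mem_bot] at this
  exact hx0 this

lemma graphMap_injective {S T : Submodule R M} (hST : S ⊓ T = ⊥) :
    Function.Injective (graphMap S T) := by
  intro f f' h
  ext s
  have hmem : (s : M) + (f s : M) ∈ graphMap S T f' := by
    rw [← h]; exact mem_graphMap.2 ⟨s, rfl⟩
  obtain ⟨s', hs'⟩ := mem_graphMap.1 hmem
  have hd : (s : M) - (s' : M) ∈ S ⊓ T := by
    constructor
    · exact S.sub_mem s.2 s'.2
    · have : (s : M) - (s' : M) = (f' s' : M) - (f s : M) := by
        rw [sub_eq_sub_iff_add_eq_add, ← hs']; abel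
      rw [this]; exact T.sub_mem (f' s').2 (f s).2
  rw [hST, Submodule.mem_bot, sub_eq_zero] at hd
  have hss' : s = s' := Subtype.ext hd
  subst hss'
  exact (add_left_cancel hs').symm

lemma graphMap_surjective {S T : Submodule R M} (hST : IsCompl S T) (hT : IsCoatom T)
    (K : Submodule R M) (hK1 : K ≠ ⊥) (hK2 : K ⊓ T = ⊥) :
    ∃ f : ↥S →ₗ[R] ↥T, graphMap S T f = K := by
  have hKnle : ¬K ≤ T := by
    intro h
    exact hK1 (by rw [← hK2, inf_eq_left.mpr h])
  have htop : T ⊔ K = ⊤ := hT.2 _ (left_lt_sup.2 hKnle)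
  have hTK : IsCompl T K :=
    ⟨disjoint_iff.2 (by rw [inf_comm]; exact hK2), codisjoint_iff.2 htop⟩
  set π := T.projectionOnto K hTK with hπ
  refine ⟨-(π ∘ₗ S.subtype), ?_⟩
  have hπK : ∀ y : M, y - (π y : M) ∈ K := by
    intro y
    rw [← Submodule.linearProjOfIsCompl_apply_eq_zero_iff (h := hTK)]
    rw [map_sub]
    have : π ((π y : M)) = π y := Submodule.linearProjOfIsCompl_apply_left hTK (π y)
    rw [this, sub_self]
  apply le_antisymm
  · intro x hx
    obtain ⟨s, rfl⟩ := mem_graphMap.1 hx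
    have : ((-(π ∘ₗ S.subtype)) s : M) = -(π (s : M) : M) := by simp
    rw [this, ← sub_eq_add_neg]
    exact hπK (s : M)
  · intro k hk
    have hk' : k ∈ S ⊔ T := by rw [(codisjoint_iff.1 hST.2 : S ⊔ T = ⊤)]; trivial
    obtain ⟨s, hs, t, ht, hst⟩ := Submodule.mem_sup.1 hk'
    refine mem_graphMap.2 ⟨⟨s, hs⟩, ?_⟩
    have hπk : π k = 0 := Submodule.projectionOnto_apply_of_mem_right hTK hk
    have hπt : π t = ⟨t, ht⟩ := Submodule.linearProjOfIsCompl_apply_left hTK ⟨t, ht⟩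
    have hπs : π s = -⟨t, ht⟩ := by
      have : s = k - t := eq_sub_of_add_eq hst
      rw [this, map_sub, hπk, hπt, zero_sub]
    have : ((-(π ∘ₗ S.subtype)) ⟨s, hs⟩ : M) = t := by
      simp [hπs]
    rw [this]
    exact hst



lemma mk_hom_le_mul (S T : Submodule R M) (hS : IsSimpleModule R ↥S) (hTtop : T ≠ ⊤) :
    Cardinal.mk (↥S →ₗ[R] ↥T) ≤ (subdeg T + 2) * Cardinal.mk (↥S →ₗ[R] ↥S) := by
  classical
  set D := {K : Submodule R M | K ≠ ⊥ ∧ K ≠ ⊤ ∧ K ≠ T ∧ K ⊓ T ≠ ⊥} with hD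
  set B := D ∪ ({T} ∪ {⊥}) with hB
  have hrange_le : ∀ g : ↥S →ₗ[R] ↥T, LinearMap.range (T.subtype ∘ₗ g) ≤ T := by
    intro g
    rintro x ⟨y, rfl⟩
    exact (g y).2
  have hmemB : ∀ g : ↥S →ₗ[R] ↥T, LinearMap.range (T.subtype ∘ₗ g) ∈ B := by
    intro g
    set K := LinearMap.range (T.subtype ∘ₗ g) with hK
    by_cases h1 : K = ⊥
    · exact Or.inr (Or.inr h1)
    by_cases h2 : K = T
    · exact Or.inr (Or.inl h2)
    refine Or.inl ⟨h1, ?_, h2, ?_⟩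
    · intro h
      exact hTtop (top_unique (h ▸ hrange_le g))
    · rw [inf_eq_left.mpr (hrange_le g)]
      exact h1
  set φ : (↥S →ₗ[R] ↥T) → ↥B := fun g => ⟨_, hmemB g⟩ with hφ
  have hfib : ∀ b : ↥B, Cardinal.mk ↥(φ ⁻¹' {b}) ≤ Cardinal.mk (↥S →ₗ[R] ↥S) := by
    intro b
    rcases Set.eq_empty_or_nonempty (φ ⁻¹' {b}) with h | ⟨g₁, hg₁⟩
    · rw [h]; simp
    have hg₁' : LinearMap.range (T.subtype ∘ₗ g₁) = b.1 := congrArg Subtype.val hg₁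
    by_cases hb : b.1 = ⊥
    · -- fiber is a subsingleton
      have hsub : (φ ⁻¹' {b}).Subsingleton := by
        intro g hg g' hg'
        have e1 : LinearMap.range (T.subtype ∘ₗ g) = ⊥ :=
          (congrArg Subtype.val hg).trans hb
        have e2 : LinearMap.range (T.subtype ∘ₗ g') = ⊥ :=
          (congrArg Subtype.val hg').trans hb
        rw [LinearMap.range_eq_bot] at e1 e2
        ext x
        have h1 : (T.subtype ∘ₗ g) x = 0 := by rw [e1]; rfl
        have h2 : (T.subtype ∘ₗ g') x = 0 := by rw [e2]; rfl
        simp only [LinearMap.comp_apply, Submodule.subtype_apply,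
          Submodule.coe_eq_zero] at h1 h2
        rw [h1, h2]
      calc Cardinal.mk ↥(φ ⁻¹' {b}) ≤ 1 := Cardinal.mk_le_one_iff_set_subsingleton.2 hsub
        _ ≤ Cardinal.mk (↥S →ₗ[R] ↥S) := Cardinal.one_le_iff_ne_zero.2 (Cardinal.mk_ne_zero _)
    · -- use the first element to build an injection into End S
      set φ₀ : ↥S →ₗ[R] M := T.subtype ∘ₗ g₁ with hφ₀
      have hker : LinearMap.ker φ₀ = ⊥ := by
        rcases eq_bot_or_eq_top (LinearMap.ker φ₀) with h | h
        · exact h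
        · exfalso
          apply hb
          rw [← hg₁']
          exact LinearMap.range_eq_bot.2 (LinearMap.ker_eq_top.1 h)
      have hinj : Function.Injective φ₀ := LinearMap.ker_eq_bot.1 hker
      set e₁ := LinearEquiv.ofInjective φ₀ hinj with he₁
      have hrr : ∀ g : ↥(φ ⁻¹' {b}), ∀ x : ↥S,
          (T.subtype ∘ₗ g.1) x ∈ LinearMap.range φ₀ := by
        intro g x
        have : LinearMap.range (T.subtype ∘ₗ g.1) = LinearMap.range φ₀ := by
          have h3 : LinearMap.range (T.subtype ∘ₗ g.1) = b.1 := congrArg Subtype.val g.2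
          rw [h3, ← hg₁']
        rw [← this]
        exact LinearMap.mem_range_self _ x
      set F : ↥(φ ⁻¹' {b}) → (↥S →ₗ[R] ↥S) := fun g =>
        e₁.symm.toLinearMap ∘ₗ
          LinearMap.codRestrict (LinearMap.range φ₀) (T.subtype ∘ₗ g.1) (hrr g) with hF
      have hFinj : Function.Injective F := by
        intro g g' h
        have key : ∀ x : ↥S, ((g.1 : ↥S →ₗ[R] ↥T) x : M) = ((g'.1 : ↥S →ₗ[R] ↥T) x : M) := by
          intro x
          have h1 := congrArg (fun (u : ↥S →ₗ[R] ↥S) => (e₁ (u x) : M)) h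
          simpa [hF, LinearEquiv.apply_symm_apply] using h1
        apply Subtype.ext
        ext x
        exact key x
      exact Cardinal.mk_le_of_injective hFinj
  have main := Cardinal.mk_le_mk_mul_of_mk_preimage_le φ hfib
  refine main.trans (mul_le_mul_left ?_ _)
  calc Cardinal.mk ↥B ≤ Cardinal.mk ↥D + Cardinal.mk ↥(({T} : Set (Submodule R M)) ∪ {⊥}) :=
        Cardinal.mk_union_le _ _
    _ ≤ Cardinal.mk ↥D + (Cardinal.mk ↥({T} : Set (Submodule R M)) +
        Cardinal.mk ↥({⊥} : Set (Submodule R M))) :=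
        add_le_add_right (Cardinal.mk_union_le _ _) _
    _ = subdeg T + 2 := by
        rw [Cardinal.mk_singleton, Cardinal.mk_singleton, one_add_one_eq_two]
        rfl

lemma ess_inj (S S' K T : Submodule R M) (hST : S ⊓ T = ⊥) (hS'T : S' ≤ T)
    (hKT : K ≤ T) (hK : K ≠ ⊥) (hS'K : S' ⊓ K = ⊥) (hS'bot : S' ≠ ⊥)
    (e : ↥S ≃ₗ[R] ↥S') :
    Cardinal.mk (↥S →ₗ[R] ↥S) ≤ subdeg T := by
  classical
  set D := {K : Submodule R M | K ≠ ⊥ ∧ K ≠ ⊤ ∧ K ≠ T ∧ K ⊓ T ≠ ⊥} with hD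
  set ι : ↥S' →ₗ[R] ↥T := Submodule.inclusion hS'T with hι
  set f : (↥S →ₗ[R] ↥S) → (↥S →ₗ[R] ↥T) := fun h => ι ∘ₗ e.toLinearMap ∘ₗ h with hf
  have hfval : ∀ (h : ↥S →ₗ[R] ↥S) (s : ↥S), ((f h) s : M) = (e (h s) : M) := by
    intro h s; rfl
  have hfS' : ∀ (h : ↥S →ₗ[R] ↥S) (s : ↥S), ((f h) s : M) ∈ S' := by
    intro h s; rw [hfval]; exact (e (h s)).2
  set W : (↥S →ₗ[R] ↥S) → Submodule R M := fun h => graphMap S T (f h) ⊔ K with hW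
  -- S' ⊓ W h = ⊥
  have hS'W : ∀ h, S' ⊓ W h = ⊥ := by
    intro h
    rw [eq_bot_iff]
    rintro x ⟨hx1, hx2⟩
    obtain ⟨y, hy, k, hk, hyk⟩ := Submodule.mem_sup.1 hx2
    obtain ⟨s, rfl⟩ := mem_graphMap.1 hy
    have hsT : (s : M) ∈ T := by
      have hx : (s : M) = x - (f h s : M) - k := by
        rw [← hyk]; abel
      rw [hx]
      exact T.sub_mem (T.sub_mem (hS'T hx1) (hS'T (hfS' h s))) (hKT hk)
    have : (s : M) ∈ S ⊓ T := ⟨s.2, hsT⟩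
    rw [hST, Submodule.mem_bot] at this
    have hs0 : s = 0 := Subtype.ext this
    subst hs0
    have hx : x = k := by
      rw [← hyk]; simp
    have : x ∈ S' ⊓ K := ⟨hx1, hx ▸ hk⟩
    rw [hS'K, Submodule.mem_bot] at this
    simpa using this
  have hWD : ∀ h, W h ∈ D := by
    intro h
    refine ⟨?_, ?_, ?_, ?_⟩
    · intro hbot
      exact hK (le_antisymm (hbot ▸ le_sup_right) bot_le)
    · intro htop
      apply hS'bot
      rw [← inf_top_eq S', ← htop, hS'W h]
    · intro hWT
      apply hS'bot
      rw [← hS'W h, hWT, inf_eq_left.mpr hS'T]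
    · intro hbot
      apply hK
      rw [eq_bot_iff, ← hbot]
      exact le_inf le_sup_right hKT
  have hWinj : Function.Injective W := by
    intro h h' heq
    ext s
    have hmem : (s : M) + (f h s : M) ∈ W h' := by
      rw [← heq]
      exact Submodule.mem_sup_left (mem_graphMap.2 ⟨s, rfl⟩)
    obtain ⟨y, hy, k, hk, hyk⟩ := Submodule.mem_sup.1 hmem
    obtain ⟨s', rfl⟩ := mem_graphMap.1 hy
    have hd : (s : M) - (s' : M) ∈ S ⊓ T := by
      refine ⟨S.sub_mem s.2 s'.2, ?_⟩
      have hx : (s : M) - (s' : M) = (f h' s' : M) + k - (f h s : M) := by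
        rw [sub_eq_iff_eq_add]
        have : (s : M) = ((s' : M) + (f h' s' : M) + k) - (f h s : M) := by
          rw [hyk]; abel
        rw [this]; abel
      rw [hx]
      exact T.sub_mem (T.add_mem (hS'T (hfS' h' s')) (hKT hk)) (hS'T (hfS' h s))
    rw [hST, Submodule.mem_bot, sub_eq_zero] at hd
    have hss' : s = s' := Subtype.ext hd
    subst hss'
    have hkval : (f h s : M) - (f h' s : M) = k := by
      have := hyk
      rw [sub_eq_iff_eq_add]
      have h2 : (f h s : M) = ((s : M) + (f h s : M)) - (s : M) := by abel
      rw [h2, ← hyk]; abel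
    have hmem2 : (f h s : M) - (f h' s : M) ∈ S' ⊓ K := by
      refine ⟨S'.sub_mem (hfS' h s) (hfS' h' s), hkval ▸ hk⟩
    rw [hS'K, Submodule.mem_bot, sub_eq_zero] at hmem2
    rw [hfval, hfval] at hmem2
    have h4 := e.injective (Subtype.ext hmem2 : e (h s) = e (h' s))
    exact congrArg Subtype.val h4
  have hFinj : Function.Injective (fun h : ↥S →ₗ[R] ↥S => (⟨W h, hWD h⟩ : ↥D)) := by
    intro a b hab
    have h2 : W a = W b := congrArg Subtype.val hab
    exact hWinj h2
  calc Cardinal.mk (↥S →ₗ[R] ↥S) ≤ Cardinal.mk ↥D := Cardinal.mk_le_of_injective hFinj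
    _ = subdeg T := rfl



/-- If `T` has an essential (in `T`) atom `S'`, then every vertex adjacent to `T`
contains `S'`, hence `deg T ≤ |G(M/S')| + 1`. -/
lemma subdeg_le_of_essential (T S' : Submodule R M) (hS'T : S' ≤ T)
    (hatom : IsAtom S')
    (hess : ∀ K : Submodule R M, K ≤ T → K ≠ ⊥ → S' ⊓ K ≠ ⊥) :
    subdeg T ≤ graphOrder R (M ⧸ S') + 1 := by
  classical
  -- every K in the deg-set contains S'
  have hcont : ∀ K : Submodule R M, K ⊓ T ≠ ⊥ → S' ≤ K := by
    intro K hKT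
    have h1 : S' ⊓ (K ⊓ T) ≠ ⊥ := hess _ inf_le_right hKT
    have h2 : S' ⊓ K ≠ ⊥ := by
      intro h
      apply h1
      rw [← le_bot_iff, ← h]
      exact inf_le_inf_left _ inf_le_left
    have h3 : S' ⊓ K = S' := by
      rcases lt_or_eq_of_le (inf_le_left : S' ⊓ K ≤ S') with h | h
      · exact absurd (hatom.2 _ h) h2
      · exact h
    rw [← h3]; exact inf_le_right
  set D := {K : Submodule R M | K ≠ ⊥ ∧ K ≠ ⊤ ∧ K ≠ T ∧ K ⊓ T ≠ ⊥} with hD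
  set Vq := {N : Submodule R (M ⧸ S') | N ≠ ⊥ ∧ N ≠ ⊤} with hVq
  have key : ∀ K : ↥D, K.1 ≠ S' → Submodule.map S'.mkQ K.1 ∈ Vq := by
    rintro ⟨K, hK1, hK2, hK3, hK4⟩ hne
    have hle : S' ≤ K := hcont K hK4
    constructor
    · intro h
      have h2 := congrArg (Submodule.comap S'.mkQ) h
      rw [Submodule.comap_map_mkQ, Submodule.comap_bot, Submodule.ker_mkQ,
        sup_eq_right.mpr hle] at h2
      exact hne h2
    · intro h
      rw [Submodule.map_mkQ_eq_top, sup_eq_right.mpr hle] at h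
      exact hK2 h
  have : ∃ F : ↥D → Option ↥Vq, Function.Injective F := by
    refine ⟨fun K => if h : K.1 = S' then none else some ⟨Submodule.map S'.mkQ K.1, key K h⟩, ?_⟩
    intro K₁ K₂ hF
    by_cases h1 : K₁.1 = S' <;> by_cases h2 : K₂.1 = S' <;>
      simp only [h1, h2, dif_pos, dif_neg, not_false_iff] at hF
    · exact Subtype.ext (h1.trans h2.symm)
    · exact absurd hF (by simp [h1, h2])
    · exact absurd hF (by simp [h1, h2])
    · have hmap : Submodule.map S'.mkQ K₁.1 = Submodule.map S'.mkQ K₂.1 :=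
        congrArg Subtype.val (Option.some_injective _ hF)
      have e1 := congrArg (Submodule.comap S'.mkQ) hmap
      rw [Submodule.comap_map_mkQ, Submodule.comap_map_mkQ,
        sup_eq_right.mpr (hcont _ K₁.2.2.2.2), sup_eq_right.mpr (hcont _ K₂.2.2.2.2)] at e1
      exact Subtype.ext e1
  obtain ⟨F, hF⟩ := this
  calc subdeg T = Cardinal.mk ↥D := rfl
    _ ≤ Cardinal.mk (Option ↥Vq) := Cardinal.mk_le_of_injective hF
    _ = graphOrder R (M ⧸ S') + 1 := Cardinal.mk_option


lemma graphOrder_quot_le (T S' : Submodule R M) (hS'T : S' ≤ T) (hS'bot : S' ≠ ⊥)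
    (hTtop : T ≠ ⊤) :
    graphOrder R (M ⧸ S') ≤ subdeg T + 1 := by
  classical
  set D := {K : Submodule R M | K ≠ ⊥ ∧ K ≠ ⊤ ∧ K ≠ T ∧ K ⊓ T ≠ ⊥} with hD
  set Vq := {N : Submodule R (M ⧸ S') | N ≠ ⊥ ∧ N ≠ ⊤} with hVq
  have hsurj : Function.Surjective S'.mkQ := Submodule.mkQ_surjective S'
  have hrec : ∀ N : Submodule R (M ⧸ S'), Submodule.map S'.mkQ (Submodule.comap S'.mkQ N) = N :=
    Submodule.map_comap_eq_of_surjective hsurj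
  have key : ∀ N : ↥Vq, Submodule.comap S'.mkQ N.1 ≠ T → Submodule.comap S'.mkQ N.1 ∈ D := by
    rintro ⟨N, hN1, hN2⟩ hne
    have hle : S' ≤ Submodule.comap S'.mkQ N := Submodule.le_comap_mkQ S' N
    refine ⟨?_, ?_, hne, ?_⟩
    · intro h
      exact hS'bot (le_antisymm (h ▸ hle) bot_le)
    · intro h
      apply hN2
      rw [← hrec N, h, Submodule.map_top, Submodule.range_mkQ]
    · intro h
      exact hS'bot (le_antisymm (h ▸ le_inf hle hS'T) bot_le)
  have : ∃ F : ↥Vq → Option ↥D, Function.Injective F := by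
    refine ⟨fun N => if h : Submodule.comap S'.mkQ N.1 = T then none
      else some ⟨Submodule.comap S'.mkQ N.1, key N h⟩, ?_⟩
    intro N₁ N₂ hF
    by_cases h1 : Submodule.comap S'.mkQ N₁.1 = T <;>
      by_cases h2 : Submodule.comap S'.mkQ N₂.1 = T <;>
      simp only [h1, h2, dif_pos, dif_neg, not_false_iff] at hF
    · apply Subtype.ext
      rw [← hrec N₁.1, ← hrec N₂.1, h1, h2]
    · exact absurd hF (by simp)
    · exact absurd hF (by simp)
    · have hmap : Submodule.comap S'.mkQ N₁.1 = Submodule.comap S'.mkQ N₂.1 :=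
        congrArg Subtype.val (Option.some_injective _ hF)
      apply Subtype.ext
      rw [← hrec N₁.1, ← hrec N₂.1, hmap]
  obtain ⟨F, hF⟩ := this
  calc graphOrder R (M ⧸ S') = Cardinal.mk ↥Vq := rfl
    _ ≤ Cardinal.mk (Option ↥D) := Cardinal.mk_le_of_injective hF
    _ = subdeg T + 1 := Cardinal.mk_option

lemma mk_compl_eq_hom (S T : Submodule R M) (hST : IsCompl S T) (hT : IsCoatom T)
    (hTbot : T ≠ ⊥) :
    Cardinal.mk ↥{K : Submodule R M | K ≠ ⊥ ∧ K ⊓ T = ⊥} = Cardinal.mk (↥S →ₗ[R] ↥T) := by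
  have hSbot : S ≠ ⊥ := by
    intro h
    apply hT.1
    have h2 := codisjoint_iff.1 hST.2
    rw [h, bot_sup_eq] at h2
    exact h2
  have hinf : S ⊓ T = ⊥ := disjoint_iff.1 hST.1
  symm
  apply Cardinal.mk_congr
  refine Equiv.ofBijective
    (fun f => ⟨graphMap S T f, graphMap_ne_bot hinf hSbot f, graphMap_inf hinf f⟩)
    ⟨?_, ?_⟩
  · intro f f' h
    exact graphMap_injective hinf (congrArg Subtype.val h)
  · rintro ⟨K, hK1, hK2⟩
    obtain ⟨f, hf⟩ := graphMap_surjective hST hT K hK1 hK2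
    exact ⟨f, Subtype.ext hf⟩

end aux

/-- Let `T` be a maximal submodule of `M`.  The following are equivalent:
(1) `|G(M)|` is infinite and `deg(T) < |G(M)|`;
(2) (i) there is a simple submodule `S` with `S ⊓ T = ⊥`, `S ⊔ T = ⊤`;
(ii) `T` contains an essential simple submodule `S'` with `S ≅ S'`;
(iii) `|End(S)| = |G(M)|` and this cardinal is infinite;
(iv) `|G(M/S')| + 1 < |G(M)|`. -/
theorem statement5 {R : Type*} [Ring R] {M : Type*} [AddCommGroup M] [Module R M]
    (T : Submodule R M) (hT : IsCoatom T) :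
    (Cardinal.aleph0 ≤ graphOrder R M ∧ subdeg T < graphOrder R M) ↔
    (∃ S S' : Submodule R M,
      (IsSimpleModule R S ∧ S ⊓ T = ⊥ ∧ S ⊔ T = ⊤) ∧
      (S' ≤ T ∧ IsSimpleModule R S' ∧ Nonempty (S ≃ₗ[R] S') ∧
        (∀ K : Submodule R M, K ≤ T → K ≠ ⊥ → S' ⊓ K ≠ ⊥)) ∧
      (Cardinal.mk (Module.End R S) = graphOrder R M ∧
        Cardinal.aleph0 ≤ graphOrder R M) ∧
      (graphOrder R (M ⧸ S') + 1 < graphOrder R M)) := by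
  constructor
  · rintro ⟨hinf, hdeg⟩
    set g := graphOrder R M with hg
    have hTtop : T ≠ ⊤ := hT.1
    set V := {N : Submodule R M | N ≠ ⊥ ∧ N ≠ ⊤} with hV
    set D := {K : Submodule R M | K ≠ ⊥ ∧ K ≠ ⊤ ∧ K ≠ T ∧ K ⊓ T ≠ ⊥} with hD
    set C := {K : Submodule R M | K ≠ ⊥ ∧ K ⊓ T = ⊥} with hC
    have hone : (1 : Cardinal) < g := lt_of_lt_of_le Cardinal.one_lt_aleph0 hinf
    have hTbot : T ≠ ⊥ := by
      intro h
      haveI : IsEmpty ↥V := ⟨fun ⟨N, hN1, hN2⟩ =>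
        hN2 (hT.2 N (h ▸ (bot_lt_iff_ne_bot.2 hN1)))⟩
      have h0 : g = 0 := Cardinal.mk_eq_zero ↥V
      rw [h0] at hinf
      exact absurd hinf (by simp [Cardinal.aleph0_ne_zero])
    have hsplit : g ≤ Cardinal.mk ↥C + (subdeg T + 1) := by
      have hsub : V ⊆ C ∪ (D ∪ {T}) := by
        rintro N ⟨hN1, hN2⟩
        by_cases h1 : N ⊓ T = ⊥
        · exact Or.inl ⟨hN1, h1⟩
        by_cases h2 : N = T
        · exact Or.inr (Or.inr h2)
        · exact Or.inr (Or.inl ⟨hN1, hN2, h2, h1⟩)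
      calc g = Cardinal.mk ↥V := rfl
        _ ≤ Cardinal.mk ↥(C ∪ (D ∪ {T})) := Cardinal.mk_le_mk_of_subset hsub
        _ ≤ Cardinal.mk ↥C + Cardinal.mk ↥(D ∪ ({T} : Set (Submodule R M))) :=
            Cardinal.mk_union_le _ _
        _ ≤ Cardinal.mk ↥C + (Cardinal.mk ↥D +
              Cardinal.mk ↥({T} : Set (Submodule R M))) :=
            add_le_add_right (Cardinal.mk_union_le _ _) _
        _ = Cardinal.mk ↥C + (subdeg T + 1) := by rw [Cardinal.mk_singleton]; rfl
    have hCg : Cardinal.mk ↥C = g := by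
      refine le_antisymm (Cardinal.mk_le_mk_of_subset ?_) ?_
      · rintro K ⟨hK1, hK2⟩
        refine ⟨hK1, ?_⟩
        intro h
        rw [h, top_inf_eq] at hK2
        exact hTbot hK2
      · by_contra hlt
        push_neg at hlt
        have hlt2 : Cardinal.mk ↥C + (subdeg T + 1) < g :=
          Cardinal.add_lt_of_lt hinf hlt (Cardinal.add_lt_of_lt hinf hdeg hone)
        exact absurd hsplit (not_le.2 hlt2)
    have hCne : Nonempty ↥C := by
      have hne : Cardinal.mk ↥C ≠ 0 := by
        rw [hCg]
        intro h0
        rw [h0] at hinf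
        exact absurd hinf (by simp [Cardinal.aleph0_ne_zero])
      exact Cardinal.mk_ne_zero_iff.1 hne
    obtain ⟨⟨S, hSbot, hSinf⟩⟩ := hCne
    have hSnle : ¬S ≤ T := fun h => hSbot (by rw [← hSinf, inf_eq_left.mpr h])
    have hSsup : S ⊔ T = ⊤ := by
      rw [sup_comm]; exact hT.2 _ (left_lt_sup.2 hSnle)
    have hcompl : IsCompl S T := ⟨disjoint_iff.2 hSinf, codisjoint_iff.2 hSsup⟩
    haveI hqs : IsSimpleModule R (M ⧸ T) := isSimpleModule_iff_isCoatom.2 hT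
    haveI hSsimple : IsSimpleModule R ↥S :=
      IsSimpleModule.congr (Submodule.quotientEquivOfIsCompl T S hcompl.symm).symm
    have hHom : Cardinal.mk (↥S →ₗ[R] ↥T) = g := by
      rw [← mk_compl_eq_hom S T hcompl hT hTbot]
      exact hCg
    have h2lt : (1 : Cardinal) < Cardinal.mk (↥S →ₗ[R] ↥T) := by rw [hHom]; exact hone
    haveI hnt : Nontrivial (↥S →ₗ[R] ↥T) := Cardinal.one_lt_iff_nontrivial.1 h2lt
    obtain ⟨f₀, hf₀⟩ := exists_ne (0 : ↥S →ₗ[R] ↥T)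
    set φ₀ : ↥S →ₗ[R] M := T.subtype ∘ₗ f₀ with hφ₀
    have hfzero : φ₀ = 0 → False := by
      intro h
      apply hf₀
      ext x
      have hx : φ₀ x = 0 := by rw [h]; rfl
      have hx2 : ((f₀ x : ↥T) : M) = 0 := hx
      simp only [LinearMap.zero_apply]
      exact hx2.trans (ZeroMemClass.coe_zero _).symm
    have hker : LinearMap.ker φ₀ = ⊥ := by
      rcases eq_bot_or_eq_top (LinearMap.ker φ₀) with h | h
      · exact h
      · exact absurd (LinearMap.ker_eq_top.1 h) (fun hh => hfzero hh)
    have hinj₀ : Function.Injective φ₀ := LinearMap.ker_eq_bot.1 hker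
    set S' := LinearMap.range φ₀ with hS'
    have hS'T : S' ≤ T := by
      rintro x ⟨y, rfl⟩
      exact (f₀ y).2
    set e₁ := LinearEquiv.ofInjective φ₀ hinj₀ with he₁
    haveI hS'simple : IsSimpleModule R ↥S' := IsSimpleModule.congr e₁.symm
    have hS'bot : S' ≠ ⊥ := fun h => hfzero (LinearMap.range_eq_bot.1 h)
    have hEndle : Cardinal.mk (↥S →ₗ[R] ↥S) ≤ g := by
      rw [← hHom]
      refine Cardinal.mk_le_of_injective
        (f := fun h => (Submodule.inclusion hS'T) ∘ₗ e₁.toLinearMap ∘ₗ h) ?_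
      intro a b hab
      ext x
      have h1 := congrArg (fun u : ↥S →ₗ[R] ↥T => ((u x : ↥T) : M)) hab
      simp only [LinearMap.comp_apply] at h1
      have h2 : ((e₁ (a x) : ↥S') : M) = ((e₁ (b x) : ↥S') : M) := h1
      have h3 : e₁ (a x) = e₁ (b x) := Subtype.ext h2
      exact congrArg Subtype.val (e₁.injective h3)
    have hd2 : subdeg T + 2 < g := by
      have h2 : (2 : Cardinal) < g :=
        lt_of_lt_of_le (Cardinal.lt_aleph0.2 ⟨2, by norm_num⟩) hinf
      exact Cardinal.add_lt_of_lt hinf hdeg h2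
    have hEndge : g ≤ Cardinal.mk (↥S →ₗ[R] ↥S) := by
      by_contra hlt
      push_neg at hlt
      have hmul := mk_hom_le_mul S T hSsimple hTtop
      rw [hHom] at hmul
      exact absurd hmul (not_le.2 (Cardinal.mul_lt_of_lt hinf hd2 hlt))
    have hEnd : Cardinal.mk (↥S →ₗ[R] ↥S) = g := le_antisymm hEndle hEndge
    have hess : ∀ K : Submodule R M, K ≤ T → K ≠ ⊥ → S' ⊓ K ≠ ⊥ := by
      intro K hKT hK h0
      have hle := ess_inj S S' K T hSinf hS'T hKT hK h0 hS'bot e₁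
      rw [hEnd] at hle
      exact absurd hle (not_le.2 hdeg)
    refine ⟨S, S', ⟨hSsimple, hSinf, hSsup⟩, ⟨hS'T, hS'simple, ⟨e₁⟩, hess⟩,
      ⟨hEnd, hinf⟩, ?_⟩
    have h1 := graphOrder_quot_le T S' hS'T hS'bot hTtop
    calc graphOrder R (M ⧸ S') + 1 ≤ (subdeg T + 1) + 1 := add_le_add_left h1 1
      _ < g := Cardinal.add_lt_of_lt hinf (Cardinal.add_lt_of_lt hinf hdeg hone) hone
  · rintro ⟨S, S', ⟨hSsimp, hSinf, hSsup⟩, ⟨hS'T, hS'simp, ⟨e⟩, hess⟩, ⟨hEnd, hinf⟩, hiv⟩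
    refine ⟨hinf, ?_⟩
    have hatom : IsAtom S' := isSimpleModule_iff_isAtom.1 hS'simp
    have h1 := subdeg_le_of_essential T S' hS'T hatom hess
    have h2 : subdeg T ≤ graphOrder R (M ⧸ S') + 1 := h1
    exact lt_of_le_of_lt h2 hiv
end

section
/- If a left R-module M contains a nontrivial submodule N whose degree deg(N) in the intersection graph G(M) is finite, then N has only finitely many nontrivial submodules and M has finite length. -/
private lemma stab_of_finite {α : Type*} [PartialOrder α] (f : ℕ →o α) {T : Set α}
    (hT : T.Finite) (hf : ∀ n, f n ∈ T) : ∃ n, ∀ m, n ≤ m → f n = f m := by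
  obtain ⟨a, ha, hmax⟩ := Set.Finite.exists_maximalFor id _ (hT.subset (Set.range_subset_iff.2 hf))
    ⟨f 0, ⟨0, rfl⟩⟩
  obtain ⟨n, rfl⟩ := ha
  exact ⟨n, fun m hm => le_antisymm (f.mono hm) (hmax ⟨m, rfl⟩ (f.mono hm))⟩

/-- If a module `M` contains a nontrivial submodule `N` whose degree in the
intersection graph `G(M)` is finite, then `N` has only finitely many nontrivial submodules
and `M` has finite length. -/
theorem statement7 {R : Type*} [Ring R] {M : Type*} [AddCommGroup M] [Module R M]
    (N : Submodule R M) (hN : N ≠ ⊥) (hN' : N ≠ ⊤)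
    (hdeg : {K : Submodule R M | K ≠ ⊥ ∧ K ≠ ⊤ ∧ K ≠ N ∧ K ⊓ N ≠ ⊥}.Finite) :
    {W : Submodule R N | W ≠ ⊥ ∧ W ≠ ⊤}.Finite ∧ IsFiniteLength R M := by
  set T : Set (Submodule R M) :=
    insert ⊥ (insert ⊤ (insert N {K : Submodule R M | K ≠ ⊥ ∧ K ≠ ⊤ ∧ K ≠ N ∧ K ⊓ N ≠ ⊥}))
    with hTdef
  have hT : T.Finite := ((hdeg.insert N).insert ⊤).insert ⊥
  have memT_le : ∀ K : Submodule R M, K ≤ N → K ∈ T := by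
    intro K hK
    by_cases h1 : K = ⊥
    · exact Or.inl h1
    by_cases h3 : K = N
    · exact Or.inr (Or.inr (Or.inl h3))
    have h2 : K ≠ ⊤ := by
      rintro rfl
      exact hN' (top_le_iff.mp hK)
    refine Or.inr (Or.inr (Or.inr ⟨h1, h2, h3, ?_⟩))
    rwa [inf_eq_left.mpr hK]
  have memT_ge : ∀ K : Submodule R M, N ≤ K → K ∈ T := by
    intro K hK
    by_cases h2 : K = ⊤
    · exact Or.inr (Or.inl h2)
    by_cases h3 : K = N
    · exact Or.inr (Or.inr (Or.inl h3))
    have h1 : K ≠ ⊥ := by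
      rintro rfl
      exact hN (le_bot_iff.mp hK)
    refine Or.inr (Or.inr (Or.inr ⟨h1, h2, h3, ?_⟩))
    rwa [inf_eq_right.mpr hK]
  constructor
  · -- finitely many submodules of N
    have huniv : (Set.univ : Set (Submodule R N)).Finite := by
      apply Set.Finite.of_finite_image (f := Submodule.map N.subtype)
      · refine hT.subset ?_
        rintro _ ⟨W, -, rfl⟩
        exact memT_le _ (Submodule.map_subtype_le N W)
      · exact fun a _ b _ h =>
          Submodule.map_injective_of_injective N.injective_subtype h
    exact huniv.subset (Set.subset_univ _)
  · rw [isFiniteLength_iff_isNoetherian_isArtinian]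
    constructor
    · rw [← monotone_stabilizes_iff_noetherian]
      intro f
      obtain ⟨n1, h1⟩ := stab_of_finite
        ⟨fun n => f n ⊔ N, fun a b h => sup_le_sup_right (f.mono h) N⟩ hT
        (fun n => memT_ge _ le_sup_right)
      obtain ⟨n2, h2⟩ := stab_of_finite
        ⟨fun n => f n ⊓ N, fun a b h => inf_le_inf_right N (f.mono h)⟩ hT
        (fun n => memT_le _ inf_le_right)
      refine ⟨max n1 n2, fun m hm => ?_⟩
      set n := max n1 n2
      have hle : f n ≤ f m := f.mono hm
      have hsup : f n ⊔ N = f m ⊔ N :=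
        (h1 n (le_max_left _ _)).symm.trans (h1 m ((le_max_left _ _).trans hm))
      have hinf : f n ⊓ N = f m ⊓ N :=
        (h2 n (le_max_right _ _)).symm.trans (h2 m ((le_max_right _ _).trans hm))
      exact eq_of_le_of_inf_le_of_sup_le hle (le_of_eq hinf.symm) (le_of_eq hsup.symm)
    · rw [← monotone_stabilizes_iff_artinian]
      intro f
      obtain ⟨n1, h1⟩ := stab_of_finite (α := (Submodule R M)ᵒᵈ)
        ⟨fun n => OrderDual.toDual (OrderDual.ofDual (f n) ⊔ N),
          fun a b h => sup_le_sup_right (α := Submodule R M) (f.mono h) N⟩ hT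
        (fun n => memT_ge _ le_sup_right)
      obtain ⟨n2, h2⟩ := stab_of_finite (α := (Submodule R M)ᵒᵈ)
        ⟨fun n => OrderDual.toDual (OrderDual.ofDual (f n) ⊓ N),
          fun a b h => inf_le_inf_right (α := Submodule R M) N (f.mono h)⟩ hT
        (fun n => memT_le _ inf_le_right)
      refine ⟨max n1 n2, fun m hm => ?_⟩
      set n := max n1 n2
      have hle : OrderDual.ofDual (f m) ≤ OrderDual.ofDual (f n) := f.mono hm
      have hsup : OrderDual.ofDual (f m) ⊔ N = OrderDual.ofDual (f n) ⊔ N := by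
        have := (h1 n (le_max_left _ _)).symm.trans (h1 m ((le_max_left _ _).trans hm))
        exact (congrArg OrderDual.ofDual this).symm
      have hinf : OrderDual.ofDual (f m) ⊓ N = OrderDual.ofDual (f n) ⊓ N := by
        have := (h2 n (le_max_right _ _)).symm.trans (h2 m ((le_max_right _ _).trans hm))
        exact (congrArg OrderDual.ofDual this).symm
      have : OrderDual.ofDual (f m) = OrderDual.ofDual (f n) :=
        eq_of_le_of_inf_le_of_sup_le hle (le_of_eq hinf.symm) (le_of_eq hsup.symm)
      exact congrArg OrderDual.toDual this.symm
end

section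
/- Let T be a maximal submodule of a left R-module M such that T has only finitely many nontrivial submodules while M has infinitely many nontrivial submodules. Then: (1) T contains a submodule N such that the quotient M/N has infinitely many nontrivial submodules and the degree of T/N in the intersection graph G(M/N) is finite; (2) for this N, the module M/N contains simple submodules S and S' with S ∩ S' = 0, S ≅ S' as R-modules, and End(S) an infinite division ring. -/
/-- Let `T` be a maximal submodule of `M` such that `T` has only finitely many
nontrivial submodules while `M` has infinitely many.  Then (1) `T` contains a submodule `N`
such that `M/N` has infinitely many nontrivial submodules and the degree of `T/N` in
`G(M/N)` is finite; and (2) `M/N` contains simple submodules `S`, `S'` with `S ⊓ S' = ⊥`,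
`S ≅ S'`, and `End(S)` an infinite division ring. -/
theorem statement8 {R : Type*} [Ring R] {M : Type*} [AddCommGroup M] [Module R M]
    (T : Submodule R M) (hT : IsCoatom T)
    (hTfin : {W : Submodule R T | W ≠ ⊥ ∧ W ≠ ⊤}.Finite)
    (hMinf : {N : Submodule R M | N ≠ ⊥ ∧ N ≠ ⊤}.Infinite) :
    ∃ N : Submodule R M, N ≤ T ∧
      {W : Submodule R (M ⧸ N) | W ≠ ⊥ ∧ W ≠ ⊤}.Infinite ∧
      {K : Submodule R (M ⧸ N) | K ≠ ⊥ ∧ K ≠ ⊤ ∧ K ≠ T.map N.mkQ ∧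
        K ⊓ T.map N.mkQ ≠ ⊥}.Finite ∧
      ∃ S S' : Submodule R (M ⧸ N),
        IsSimpleModule R S ∧ IsSimpleModule R S' ∧ S ⊓ S' = ⊥ ∧
        Nonempty (S ≃ₗ[R] S') ∧
        Infinite (Module.End R S) ∧
        (∀ f : Module.End R S, f ≠ 0 → IsUnit f) := by
  classical
  -- `T` has finitely many submodules altogether
  have hTall : Finite (Submodule R T) := by
    rw [← Set.finite_univ_iff]
    have hsub : (Set.univ : Set (Submodule R T)) ⊆
        {W : Submodule R T | W ≠ ⊥ ∧ W ≠ ⊤} ∪ {⊥, ⊤} := by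
      intro W _
      by_cases h1 : W = ⊥
      · exact Or.inr (Or.inl h1)
      by_cases h2 : W = ⊤
      · exact Or.inr (Or.inr h2)
      · exact Or.inl ⟨h1, h2⟩
    exact ((hTfin.union ((Set.finite_singleton _).insert _))).subset hsub
  -- submodules of `M` below `T` form a finite type
  have hsubT : Finite {X : Submodule R M // X ≤ T} := by
    refine Finite.of_injective (fun X => Submodule.comap T.subtype X.1) ?_
    rintro ⟨X, hX⟩ ⟨Y, hY⟩ h
    have h2 := congrArg (Submodule.map T.subtype) h
    rw [Submodule.map_comap_subtype, Submodule.map_comap_subtype,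
      inf_eq_right.mpr hX, inf_eq_right.mpr hY] at h2
    exact Subtype.ext h2
  have hMi : Infinite (Submodule R M) := by
    have := Set.infinite_coe_iff.mpr hMinf
    exact Infinite.of_injective
      (Subtype.val : {N : Submodule R M | N ≠ ⊥ ∧ N ≠ ⊤} → Submodule R M)
      Subtype.val_injective
  -- pigeonhole: some value of `X ⊓ T` is attained by infinitely many `X`
  have hVne : ({V : {X : Submodule R M // X ≤ T} |
      ((fun X : Submodule R M => (⟨X ⊓ T, inf_le_right⟩ : {X : Submodule R M // X ≤ T}))
        ⁻¹' {V}).Infinite}).Nonempty := by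
    obtain ⟨V, hV⟩ := Finite.exists_infinite_fiber
      (fun X : Submodule R M => (⟨X ⊓ T, inf_le_right⟩ : {X : Submodule R M // X ≤ T}))
    exact ⟨V, Set.infinite_coe_iff.mp hV⟩
  obtain ⟨Nv, hNv, hNmax⟩ := Set.Finite.exists_maximalFor id _ (Set.toFinite _) hVne
  set N : Submodule R M := Nv.1 with hNdef
  have hNT : N ≤ T := Nv.2
  have hFN : {X : Submodule R M | X ⊓ T = N}.Infinite := by
    have : {X : Submodule R M | X ⊓ T = N} =
        (fun X : Submodule R M => (⟨X ⊓ T, inf_le_right⟩ : {X : Submodule R M // X ≤ T}))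
          ⁻¹' {Nv} := by
      ext X
      simp only [Set.mem_setOf_eq, Set.mem_preimage, Set.mem_singleton_iff, Subtype.ext_iff]
      exact Iff.rfl
    rw [this]
    exact hNv
  have hmax : ∀ V : Submodule R M, V ≤ T → N < V → {X : Submodule R M | X ⊓ T = V}.Finite := by
    intro V hVT hNV
    by_contra hinf
    rw [← Set.not_infinite, not_not] at hinf
    have hmem : (⟨V, hVT⟩ : {X : Submodule R M // X ≤ T}) ∈
        {V : {X : Submodule R M // X ≤ T} |
        ((fun X : Submodule R M => (⟨X ⊓ T, inf_le_right⟩ : {X : Submodule R M // X ≤ T}))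
          ⁻¹' {V}).Infinite} := by
      refine hinf.mono ?_
      intro X hX
      simp only [Set.mem_setOf_eq] at hX
      simp only [Set.mem_preimage, Set.mem_singleton_iff, Subtype.ext_iff, hX]
    have hle : Nv ≤ (⟨V, hVT⟩ : {X : Submodule R M // X ≤ T}) := le_of_lt hNV
    have := hNmax hmem hle
    exact absurd (lt_of_lt_of_le hNV (show V ≤ N from this)) (lt_irrefl _)
  -- the quotient by `N`
  set Tb : Submodule R (M ⧸ N) := T.map N.mkQ with hTbdef
  have hsurj : Function.Surjective N.mkQ := N.mkQ_surjective
  have hψinj : Function.Injective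
      (Submodule.comap N.mkQ : Submodule R (M ⧸ N) → Submodule R M) :=
    Submodule.comap_injective_of_surjective hsurj
  have hψbot : Submodule.comap N.mkQ (⊥ : Submodule R (M ⧸ N)) = N := by
    rw [Submodule.comap_bot, Submodule.ker_mkQ]
  have hψtop : Submodule.comap N.mkQ (⊤ : Submodule R (M ⧸ N)) = ⊤ :=
    Submodule.comap_top _
  have hψTb : Submodule.comap N.mkQ Tb = T := by
    rw [hTbdef, Submodule.comap_map_mkQ, sup_eq_right.mpr hNT]
  -- the infinite family of complements of `Tb`
  set A0 : Set (Submodule R (M ⧸ N)) :=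
    {W : Submodule R (M ⧸ N) | Submodule.comap N.mkQ W ⊓ T = N} with hA0def
  have hA0 : A0.Infinite := by
    have himg : {X : Submodule R M | X ⊓ T = N} ⊆
        (fun W : Submodule R (M ⧸ N) => Submodule.comap N.mkQ W) '' A0 := by
      intro X hX
      have hNX : N ≤ X := hX ▸ inf_le_left
      have hcm : Submodule.comap N.mkQ (Submodule.map N.mkQ X) = X := by
        rw [Submodule.comap_map_mkQ, sup_eq_right.mpr hNX]
      exact ⟨Submodule.map N.mkQ X, by simp only [hA0def, Set.mem_setOf_eq, hcm]; exact hX, hcm⟩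
    by_contra hfin
    rw [Set.not_infinite] at hfin
    exact hFN ((hfin.image _).subset himg)
  set A : Set (Submodule R (M ⧸ N)) := A0 \ {⊥, ⊤} with hAdef
  have hA : A.Infinite := hA0.diff ((Set.finite_singleton _).insert _)
  -- complements
  have hc : ∀ W ∈ A, IsCompl Tb W := by
    rintro W ⟨hW0, hWnt⟩
    simp only [Set.mem_insert_iff, Set.mem_singleton_iff, not_or] at hWnt
    obtain ⟨hWb, hWt⟩ := hWnt
    simp only [hA0def, Set.mem_setOf_eq] at hW0
    have hdisj : W ⊓ Tb = ⊥ := by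
      apply hψinj
      rw [Submodule.comap_inf, hψTb, hψbot, hW0]
    have hψWne : Submodule.comap N.mkQ W ≠ N := by
      intro h
      exact hWb (hψinj (h.trans hψbot.symm))
    have hnle : ¬ Submodule.comap N.mkQ W ≤ T := by
      intro h
      exact hψWne ((inf_eq_left.mpr h) ▸ hW0)
    have hsupM : T ⊔ Submodule.comap N.mkQ W = ⊤ := by
      refine hT.2 _ (lt_of_le_of_ne le_sup_left ?_)
      intro e
      exact hnle (e ▸ le_sup_right)
    have hsup : Tb ⊔ W = ⊤ := by
      have := congrArg (Submodule.map N.mkQ) hsupM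
      rwa [Submodule.map_sup, Submodule.map_comap_eq_of_surjective hsurj,
        Submodule.map_top, Submodule.range_mkQ] at this
    exact ⟨disjoint_iff.mpr (by rw [inf_comm] at hdisj; exact hdisj),
      codisjoint_iff.mpr hsup⟩
  -- `Tb` is a coatom, so the quotient is simple
  have hTbcoatom : IsCoatom Tb := by
    constructor
    · intro e
      exact hT.1 (by rw [← hψTb, e, hψtop])
    · intro b hb
      have hlt : T < Submodule.comap N.mkQ b := by
        refine lt_of_le_of_ne (hψTb ▸ Submodule.comap_mono hb.le) ?_
        intro e
        exact hb.ne (hψinj (by rw [← e, hψTb]))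
      exact hψinj (by rw [hψtop]; exact hT.2 _ hlt)
  have hQsimple : IsSimpleModule R ((M ⧸ N) ⧸ Tb) := isSimpleModule_iff_isCoatom.mpr hTbcoatom
  refine ⟨N, hNT, ?_, ?_, ?_⟩
  · -- infinitely many nontrivial submodules of `M ⧸ N`
    refine hA.mono ?_
    rintro W ⟨_, hWnt⟩
    simp only [Set.mem_insert_iff, Set.mem_singleton_iff, not_or] at hWnt
    exact hWnt
  · -- the degree of `Tb` is finite
    have hBsub : {K : Submodule R (M ⧸ N) | K ≠ ⊥ ∧ K ≠ ⊤ ∧ K ≠ T.map N.mkQ ∧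
        K ⊓ T.map N.mkQ ≠ ⊥} ⊆
        (fun K : Submodule R (M ⧸ N) => Submodule.comap N.mkQ K)
          ⁻¹' {X : Submodule R M | N < X ⊓ T} := by
      rintro K ⟨-, -, -, hKT⟩
      simp only [Set.mem_preimage, Set.mem_setOf_eq]
      have h1 : Submodule.comap N.mkQ K ⊓ T = Submodule.comap N.mkQ (K ⊓ Tb) := by
        rw [Submodule.comap_inf, hψTb]
      rw [h1]
      have hle : N ≤ Submodule.comap N.mkQ (K ⊓ Tb) :=
        hψbot.symm.trans_le (Submodule.comap_mono bot_le)
      refine lt_of_le_of_ne hle ?_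
      intro e
      exact hKT (hψinj (by rw [← e, hψbot]))
    have hBfin : {X : Submodule R M | N < X ⊓ T}.Finite := by
      have hsT : {V : Submodule R M | V ≤ T ∧ N < V}.Finite := by
        have h1 : {X : Submodule R M | X ≤ T}.Finite := Set.finite_coe_iff.mp hsubT
        exact h1.subset (fun V hV => hV.1)
      refine (hsT.biUnion (fun V hV => hmax V hV.1 hV.2)).subset ?_
      intro X hX
      simp only [Set.mem_setOf_eq] at hX
      exact Set.mem_biUnion ⟨inf_le_right, hX⟩ rfl
    exact (hBfin.preimage (Function.Injective.injOn hψinj)).subset hBsub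
  · -- two simple complements
    obtain ⟨W₁, hW₁⟩ := hA.nonempty
    obtain ⟨W₂, hW₂m⟩ := (hA.diff (Set.finite_singleton W₁)).nonempty
    obtain ⟨hW₂, hW₂ne⟩ := hW₂m
    rw [Set.mem_singleton_iff] at hW₂ne
    have hc₁ : IsCompl Tb W₁ := hc W₁ hW₁
    have hc₂ : IsCompl Tb W₂ := hc W₂ hW₂
    haveI := hQsimple
    have hs : ∀ W ∈ A, IsSimpleModule R W := fun W hW =>
      IsSimpleModule.congr (Submodule.quotientEquivOfIsCompl Tb W (hc W hW)).symm
    have hs₁ := hs W₁ hW₁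
    have hs₂ := hs W₂ hW₂
    have ha₁ : IsAtom W₁ := isSimpleModule_iff_isAtom.mp hs₁
    have ha₂ : IsAtom W₂ := isSimpleModule_iff_isAtom.mp hs₂
    have hinf12 : W₁ ⊓ W₂ = ⊥ := by
      rcases ha₁.le_iff.mp (inf_le_left : W₁ ⊓ W₂ ≤ W₁) with h | h
      · exact h
      · exfalso
        have hle : W₁ ≤ W₂ := h ▸ inf_le_right
        rcases ha₂.le_iff.mp hle with h2 | h2
        · exact ha₁.1 h2
        · exact hW₂ne h2.symm
    set e₁ := Submodule.quotientEquivOfIsCompl Tb W₁ hc₁ with he₁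
    set prT := Tb.linearProjOfIsCompl W₁ hc₁ with hprT
    -- the class of `e_W z` is `z`
    have hmkuz : ∀ (W) (hW : W ∈ A) (z : (M ⧸ N) ⧸ Tb),
        Tb.mkQ ((Submodule.quotientEquivOfIsCompl Tb W (hc W hW)) z : M ⧸ N) = z := by
      intro W hW z
      rw [Submodule.mkQ_apply]
      exact Submodule.mk_quotientEquivOfIsCompl_apply (hc W hW) z
    -- decomposition of `e_W z`
    have hdecomp : ∀ (W) (hW : W ∈ A) (z : (M ⧸ N) ⧸ Tb),
        ((Submodule.quotientEquivOfIsCompl Tb W (hc W hW)) z : M ⧸ N)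
          = (e₁ z : M ⧸ N)
            + (prT ((Submodule.quotientEquivOfIsCompl Tb W (hc W hW)) z : M ⧸ N) : M ⧸ N) := by
      intro W hW z
      set x : M ⧸ N := ((Submodule.quotientEquivOfIsCompl Tb W (hc W hW)) z : M ⧸ N) with hx
      have hdec : (Tb.linearProjOfIsCompl W₁ hc₁ x : M ⧸ N) + (W₁.linearProjOfIsCompl Tb hc₁.symm x : M ⧸ N) = x :=
        Submodule.projection_add_projection_eq_self hc₁ x
      have hρ : (W₁.linearProjOfIsCompl Tb hc₁.symm x : M ⧸ N) = (e₁ z : M ⧸ N) := by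
        have hW1mem : (W₁.linearProjOfIsCompl Tb hc₁.symm x : M ⧸ N)
            - (e₁ z : M ⧸ N) ∈ W₁ := sub_mem (SetLike.coe_mem _) (SetLike.coe_mem _)
        have hTbmem : (W₁.linearProjOfIsCompl Tb hc₁.symm x : M ⧸ N)
            - (e₁ z : M ⧸ N) ∈ Tb := by
          rw [← Submodule.Quotient.mk_eq_zero Tb]
          have hq1 : Submodule.Quotient.mk (p := Tb)
              (W₁.linearProjOfIsCompl Tb hc₁.symm x : M ⧸ N) = z := by
            have h5 := congrArg (Tb.mkQ) hdec
            rw [map_add] at h5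
            have h6 : Tb.mkQ ((Tb.linearProjOfIsCompl W₁ hc₁ x : M ⧸ N)) = 0 := by
              rw [Submodule.mkQ_apply, Submodule.Quotient.mk_eq_zero]
              exact SetLike.coe_mem _
            rw [h6, zero_add, hmkuz W hW z] at h5
            rw [← Submodule.mkQ_apply]
            exact h5
          have hq2 : Submodule.Quotient.mk (p := Tb) (e₁ z : M ⧸ N) = z := hmkuz W₁ hW₁ z
          rw [Submodule.Quotient.mk_sub, hq1, hq2, sub_self]
        have hmem : (W₁.linearProjOfIsCompl Tb hc₁.symm x : M ⧸ N)
            - (e₁ z : M ⧸ N) ∈ Tb ⊓ W₁ := ⟨hTbmem, hW1mem⟩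
        rw [hc₁.inf_eq_bot, Submodule.mem_bot] at hmem
        exact sub_eq_zero.mp hmem
      rw [← hρ, add_comm]
      exact hdec.symm
    haveI hAinf : Infinite ↥A := Set.infinite_coe_iff.mpr hA
    have hginj : Function.Injective (fun p : ↥A =>
        (prT ∘ₗ (p.1.subtype ∘ₗ
          (Submodule.quotientEquivOfIsCompl Tb p.1 (hc p.1 p.2)).toLinearMap)
          : ((M ⧸ N) ⧸ Tb) →ₗ[R] ↥Tb)) := by
      rintro ⟨Wa, ha⟩ ⟨Wb, hb⟩ hgeq
      simp only at hgeq
      apply Subtype.ext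
      have huv : ∀ z : (M ⧸ N) ⧸ Tb,
          ((Submodule.quotientEquivOfIsCompl Tb Wa (hc Wa ha)) z : M ⧸ N)
            = ((Submodule.quotientEquivOfIsCompl Tb Wb (hc Wb hb)) z : M ⧸ N) := by
        intro z
        have h3 := LinearMap.congr_fun hgeq z
        simp only [LinearMap.comp_apply, Submodule.subtype_apply,
          LinearEquiv.coe_toLinearMap] at h3
        rw [hdecomp Wa ha z, hdecomp Wb hb z, h3]
      have hWmem : ∀ (W) (hW : W ∈ A) (w : M ⧸ N) (hw : w ∈ W),
          ((Submodule.quotientEquivOfIsCompl Tb W (hc W hW))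
            (Submodule.Quotient.mk w) : M ⧸ N) = w := by
        intro W hW w hw
        exact congrArg Subtype.val
          (Submodule.quotientEquivOfIsCompl_apply_mk_coe (hc W hW) ⟨w, hw⟩)
      apply le_antisymm
      · intro w hw
        rw [← hWmem Wa ha w hw, huv]
        exact SetLike.coe_mem _
      · intro w hw
        rw [← hWmem Wb hb w hw, ← huv]
        exact SetLike.coe_mem _
    have hHomInf : Infinite (((M ⧸ N) ⧸ Tb) →ₗ[R] ↥Tb) := Infinite.of_injective _ hginj
    have hTbfin : Finite (Submodule R ↥Tb) := by
      refine Finite.of_injective (fun U : Submodule R ↥Tb =>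
        (⟨Submodule.comap N.mkQ (Submodule.map Tb.subtype U),
          le_of_le_of_eq (Submodule.comap_mono (Submodule.map_subtype_le Tb U)) hψTb⟩ :
          {X : Submodule R M // X ≤ T})) ?_
      intro U₁ U₂ h
      rw [Subtype.ext_iff] at h
      exact Submodule.map_injective_of_injective Tb.injective_subtype (hψinj h)
    obtain ⟨U, hU⟩ := Finite.exists_infinite_fiber
      (fun f : ((M ⧸ N) ⧸ Tb) →ₗ[R] ↥Tb => LinearMap.range f)
    have hUne : U ≠ ⊥ := by
      rintro rfl
      have hss : Subsingleton
          ↥((fun f : ((M ⧸ N) ⧸ Tb) →ₗ[R] ↥Tb => LinearMap.range f) ⁻¹' {⊥}) := by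
        constructor
        rintro ⟨f, hf⟩ ⟨g, hg⟩
        simp only [Set.mem_preimage, Set.mem_singleton_iff, LinearMap.range_eq_bot] at hf hg
        exact Subtype.ext (hf.trans hg.symm)
      exact absurd hss (by haveI := hU; exact not_subsingleton _)
    haveI := hU
    obtain ⟨⟨f₀, hf₀m⟩⟩ := (inferInstance : Nonempty
      ↥((fun f : ((M ⧸ N) ⧸ Tb) →ₗ[R] ↥Tb => LinearMap.range f) ⁻¹' {U}))
    have hf₀ : LinearMap.range f₀ = U := hf₀m
    have hf₀ne : f₀ ≠ 0 := fun e => hUne (by rw [← hf₀, e, LinearMap.range_zero])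
    have hker : LinearMap.ker f₀ = ⊥ := by
      rcases eq_bot_or_eq_top (LinearMap.ker f₀) with h | h
      · exact h
      · exact absurd (LinearMap.ker_eq_top.mp h) hf₀ne
    have hinj₀ : Function.Injective f₀ := LinearMap.ker_eq_bot.mp hker
    set e₀ : ((M ⧸ N) ⧸ Tb) ≃ₗ[R] ↥U :=
      (LinearEquiv.ofInjective f₀ hinj₀).trans (LinearEquiv.ofEq _ _ hf₀) with he₀
    have hΦinj : Function.Injective
        (fun p : ↥((fun f : ((M ⧸ N) ⧸ Tb) →ₗ[R] ↥Tb => LinearMap.range f) ⁻¹' {U}) =>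
        (e₀.symm.toLinearMap ∘ₗ LinearMap.codRestrict U p.1
          (fun x => (le_of_eq (show LinearMap.range p.1 = U from p.2))
            (LinearMap.mem_range_self _ x))
          : ((M ⧸ N) ⧸ Tb) →ₗ[R] ((M ⧸ N) ⧸ Tb))) := by
      rintro ⟨f, hf⟩ ⟨g, hg⟩ h
      simp only at h
      apply Subtype.ext
      apply LinearMap.ext
      intro x
      have h2 := LinearMap.congr_fun h x
      simp only [LinearMap.comp_apply, LinearEquiv.coe_toLinearMap] at h2
      have h3 := congrArg e₀ h2
      rw [LinearEquiv.apply_symm_apply, LinearEquiv.apply_symm_apply] at h3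
      have h4 := congrArg Subtype.val h3
      simpa only [LinearMap.codRestrict_apply] using h4
    have hEndQ : Infinite (((M ⧸ N) ⧸ Tb) →ₗ[R] ((M ⧸ N) ⧸ Tb)) :=
      Infinite.of_injective _ hΦinj
    have hEndW₁ : Infinite (Module.End R ↥W₁) := by
      refine Infinite.of_injective (fun g : ((M ⧸ N) ⧸ Tb) →ₗ[R] ((M ⧸ N) ⧸ Tb) =>
        (e₁.toLinearMap ∘ₗ g ∘ₗ e₁.symm.toLinearMap : ↥W₁ →ₗ[R] ↥W₁)) ?_
      intro g₁ g₂ h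
      apply LinearMap.ext
      intro z
      have h2 := LinearMap.congr_fun h (e₁ z)
      simp only [LinearMap.comp_apply, LinearEquiv.coe_toLinearMap,
        LinearEquiv.symm_apply_apply] at h2
      exact e₁.injective h2
    refine ⟨W₁, W₂, hs₁, hs₂, hinf12,
      ⟨e₁.symm.trans (Submodule.quotientEquivOfIsCompl Tb W₂ hc₂)⟩, hEndW₁, ?_⟩
    intro f hf
    haveI := hs₁
    rcases f.bijective_or_eq_zero with hb | h0
    · refine isUnit_iff_exists.mpr ⟨(LinearEquiv.ofBijective f hb).symm.toLinearMap, ?_, ?_⟩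
      · apply LinearMap.ext
        intro x
        rw [Module.End.mul_apply, Module.End.one_apply]
        have h5 := (LinearEquiv.ofBijective f hb).apply_symm_apply x
        rwa [LinearEquiv.ofBijective_apply] at h5
      · apply LinearMap.ext
        intro x
        rw [Module.End.mul_apply, Module.End.one_apply]
        have h5 := (LinearEquiv.ofBijective f hb).symm_apply_apply x
        rwa [LinearEquiv.ofBijective_apply] at h5
    · exact absurd h0 hf
end

section
/- Let M be a left R-module of finite length. Then M has infinitely many nontrivial submodules if and only if there exists a submodule K of M and simple submodules S, S' of the quotient module M/K such that S ∩ S' = 0, S ≅ S' as R-modules, and the endomorphism ring End(S) is an infinite division ring. -/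
open Submodule

section Statement9Helpers

variable {R : Type*} [Ring R]

/-- Transfer `Infinite (Module.End R ·)` along a linear equivalence. -/
private lemma s9_endInfinite {M N : Type*} [AddCommGroup M] [Module R M] [AddCommGroup N]
    [Module R N] (e : M ≃ₗ[R] N) [Infinite (Module.End R M)] : Infinite (Module.End R N) := by
  refine Infinite.of_injective
    (fun f : Module.End R M => e.toLinearMap ∘ₗ f ∘ₗ e.symm.toLinearMap) ?_
  intro f g h
  ext x
  have := LinearMap.congr_fun h (e x)
  simpa using this

/-- Graph lemma, part 1: the `t`-lift of `y : t2` decomposes as `y` plus its `q`-component,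
which is the value of the "graph hom" at `y`. -/
private lemma s9_graph1 {E : Type*} [AddCommGroup E] [Module R E] {t2 t3 t : Submodule R E}
    (hc23 : IsCompl t2 t3) (hct3 : IsCompl t t3) (y : t2) :
    ((t.linearProjOfIsCompl t3 hct3 (t2.subtype y) : t) : E)
      = (y : E) + ((t3.linearProjOfIsCompl t2 hc23.symm
          (t.subtype (t.linearProjOfIsCompl t3 hct3 (t2.subtype y))) : t3) : E) := by
  set p := t2.linearProjOfIsCompl t3 hc23
  set q := t3.linearProjOfIsCompl t2 hc23.symm
  set πT := t.linearProjOfIsCompl t3 hct3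
  set ρT := t3.linearProjOfIsCompl t hct3.symm
  set v : t := πT (t2.subtype y) with hv
  have hdec : ((πT (y : E) : t) : E) + ((ρT (y : E) : t3) : E) = (y : E) :=
    Submodule.projection_add_projection_eq_self hct3 (y : E)
  have hpy : p ((y : E)) = y := Submodule.linearProjOfIsCompl_apply_left hc23 y
  have hpv : p ((v : E)) = y := by
    have := congrArg p hdec
    rw [map_add] at this
    have h0 : p ((ρT (y : E) : t3) : E) = 0 :=
      Submodule.linearProjOfIsCompl_apply_right hc23 (ρT (y : E))
    rw [h0, add_zero, hpy] at this
    exact this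
  have hvdec : ((p (v : E) : t2) : E) + ((q (v : E) : t3) : E) = (v : E) :=
    Submodule.projection_add_projection_eq_self hc23 (v : E)
  rw [hpv] at hvdec
  rw [← hvdec]
  rfl

/-- Graph lemma, part 2: an element of `t` is recovered from its `p`-component. -/
private lemma s9_graph2 {E : Type*} [AddCommGroup E] [Module R E] {t2 t3 t : Submodule R E}
    (hc23 : IsCompl t2 t3) (hct3 : IsCompl t t3) (x : E) (hx : x ∈ t) :
    ((t.linearProjOfIsCompl t3 hct3
        (t2.subtype (t2.linearProjOfIsCompl t3 hc23 x)) : t) : E)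
      = x := by
  set p := t2.linearProjOfIsCompl t3 hc23
  set q := t3.linearProjOfIsCompl t2 hc23.symm
  set πT := t.linearProjOfIsCompl t3 hct3
  have hdec : ((p x : t2) : E) + ((q x : t3) : E) = x :=
    Submodule.projection_add_projection_eq_self hc23 x
  have h1 : (p x : E) = x - ((q x : t3) : E) := eq_sub_of_add_eq hdec
  have h2 : πT ((p x : t2) : E) = πT x - πT ((q x : t3) : E) := by
    rw [h1, map_sub]
  have h3 : πT x = ⟨x, hx⟩ := Submodule.linearProjOfIsCompl_apply_left hct3 ⟨x, hx⟩
  have h4 : πT ((q x : t3) : E) = 0 :=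
    Submodule.linearProjOfIsCompl_apply_right hct3 (q x)
  rw [Submodule.subtype_apply, h2, h3, h4, sub_zero]

/-- Core lemma: if a module has infinitely many submodules while the set of submodules above
any fixed nonzero submodule is finite, then it contains two disjoint isomorphic simple
submodules with infinite endomorphism ring. -/
private lemma s9_core {M : Type*} [AddCommGroup M] [Module R M] [IsArtinian R M]
    (h1 : (Set.univ : Set (Submodule R M)).Infinite)
    (h3 : ∀ P : Submodule R M, P ≠ ⊥ → {X : Submodule R M | P ≤ X}.Finite) :
    ∃ T₂ T₃ : Submodule R M, IsAtom T₂ ∧ IsAtom T₃ ∧ T₂ ⊓ T₃ = ⊥ ∧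
      Nonempty (T₂ ≃ₗ[R] T₃) ∧ Infinite (Module.End R T₂) := by
  haveI : IsAtomic (Submodule R M) :=
    isAtomic_of_orderBot_wellFounded_lt (wellFounded_lt)
  -- infinitely many atoms
  have hAtoms : {T : Submodule R M | IsAtom T}.Infinite := by
    by_contra hfin
    rw [Set.not_infinite] at hfin
    have hsub : {X : Submodule R M | X ≠ ⊥} ⊆
        ⋃ T ∈ {T : Submodule R M | IsAtom T}, {X | T ≤ X} := by
      intro X hX
      obtain ⟨a, ha, haX⟩ := (IsAtomic.eq_bot_or_exists_atom_le X).resolve_left hX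
      exact Set.mem_biUnion ha haX
    have hfin2 : {X : Submodule R M | X ≠ ⊥}.Finite :=
      (hfin.biUnion (fun T hT => h3 T hT.1)).subset hsub
    have hinf2 : {X : Submodule R M | X ≠ ⊥}.Infinite := by
      have := h1.diff (Set.finite_singleton (⊥ : Submodule R M))
      refine this.mono ?_
      intro X hX
      exact hX.2
    exact hinf2 hfin2
  obtain ⟨T1, hT1⟩ := hAtoms.nonempty
  have h𝒜₀ : ({T : Submodule R M | IsAtom T} \ {T1}).Infinite :=
    hAtoms.diff (Set.finite_singleton T1)
  -- some B₀ carries infinitely many atoms T with T ⊔ T1 = B₀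
  have hfib : ∃ B₀ : Submodule R M, T1 ≤ B₀ ∧
      {T | (IsAtom T ∧ T ≠ T1) ∧ T ⊔ T1 = B₀}.Infinite := by
    by_contra h
    push_neg at h
    have hcover : ({T : Submodule R M | IsAtom T} \ {T1}) ⊆
        ⋃ B ∈ {X : Submodule R M | T1 ≤ X}, {T | (IsAtom T ∧ T ≠ T1) ∧ T ⊔ T1 = B} := by
      intro T hT
      exact Set.mem_biUnion (le_sup_right : T1 ≤ T ⊔ T1) ⟨⟨hT.1, hT.2⟩, rfl⟩
    have : ({T : Submodule R M | IsAtom T} \ {T1}).Finite := by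
      refine (((h3 T1 hT1.1).biUnion (fun B hB => ?_)).subset hcover)
      have := h B hB
      exact this
    exact h𝒜₀ this
  obtain ⟨B₀, hT1B, h𝒜⟩ := hfib
  set 𝒜 : Set (Submodule R M) := {T | (IsAtom T ∧ T ≠ T1) ∧ T ⊔ T1 = B₀} with h𝒜def
  have hatom : ∀ T ∈ 𝒜, IsAtom T := fun T hT => hT.1.1
  have hsupT1 : ∀ T ∈ 𝒜, T ⊔ T1 = B₀ := fun T hT => hT.2
  have hleB : ∀ T ∈ 𝒜, T ≤ B₀ := fun T hT => (hsupT1 T hT) ▸ le_sup_left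
  have hdisj : ∀ T T' : Submodule R M, IsAtom T → IsAtom T' → T ≠ T' → T ⊓ T' = ⊥ :=
    fun T T' h h' hne => (IsAtom.disjoint_of_ne h h' hne).eq_bot
  -- covering: if T ∈ 𝒜 and T < X ≤ B₀ then X = B₀
  have hcov : ∀ T ∈ 𝒜, ∀ X : Submodule R M, T < X → X ≤ B₀ → X = B₀ := by
    intro T hT X hTX hXB
    have hmod : (T ⊔ T1) ⊓ X = T ⊔ (T1 ⊓ X) := sup_inf_assoc_of_le T1 hTX.le
    rw [hsupT1 T hT] at hmod
    rw [inf_eq_right.mpr hXB] at hmod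
    rcases hT1.le_iff.mp (inf_le_left : T1 ⊓ X ≤ T1) with h0 | h0
    · rw [h0, sup_bot_eq] at hmod
      exact absurd hmod.symm hTX.ne
    · rw [h0] at hmod
      rw [hmod, ← hsupT1 T hT]
  have hsup2 : ∀ T ∈ 𝒜, ∀ T' ∈ 𝒜, T ≠ T' → T ⊔ T' = B₀ := by
    intro T hT T' hT' hne
    refine hcov T hT _ ?_ (sup_le (hleB T hT) (hleB T' hT'))
    refine lt_of_le_of_ne le_sup_left (fun h => hne ?_)
    have hle : T' ≤ T := h ▸ le_sup_right
    exact (((hatom T hT).le_iff.mp hle).resolve_left (hatom T' hT').1).symm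
  -- pick two distinct elements of 𝒜
  obtain ⟨T2, hT2⟩ := h𝒜.nonempty
  obtain ⟨T3, hT3'⟩ := (h𝒜.diff (Set.finite_singleton T2)).nonempty
  obtain ⟨hT3, hT3ne⟩ := hT3'
  have hT3ne : T3 ≠ T2 := fun h => hT3ne (by simp [h])
  have h𝒜' : (𝒜 \ {T2, T3}).Infinite := h𝒜.diff (Set.Finite.insert _ (Set.finite_singleton _))
  -- complements inside B₀
  have hcompl : ∀ T ∈ 𝒜, ∀ T' ∈ 𝒜, T ≠ T' →
      IsCompl (comap B₀.subtype T) (comap B₀.subtype T') := by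
    intro T hT T' hT' hne
    constructor
    · rw [disjoint_iff, ← Submodule.comap_inf,
        hdisj T T' (hatom T hT) (hatom T' hT') hne, Submodule.comap_bot, Submodule.ker_subtype]
    · rw [codisjoint_iff]
      apply Submodule.map_injective_of_injective (Submodule.injective_subtype B₀)
      rw [Submodule.map_sup, Submodule.map_comap_subtype, Submodule.map_comap_subtype,
        Submodule.map_subtype_top, inf_eq_right.mpr (hleB T hT),
        inf_eq_right.mpr (hleB T' hT'), hsup2 T hT T' hT' hne]
  have hc23 : IsCompl (comap B₀.subtype T2) (comap B₀.subtype T3) :=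
    hcompl T2 hT2 T3 hT3 (Ne.symm hT3ne)
  set t2 := comap B₀.subtype T2 with ht2def
  set t3 := comap B₀.subtype T3 with ht3def
  set p := t2.linearProjOfIsCompl t3 hc23 with hpdef
  set q := t3.linearProjOfIsCompl t2 hc23.symm with hqdef
  have hmem : ∀ T ∈ 𝒜 \ ({T2, T3} : Set _), T ∈ 𝒜 ∧ T ≠ T2 ∧ T ≠ T3 := by
    intro T hT
    refine ⟨hT.1, ?_, ?_⟩ <;>
      · intro h; exact hT.2 (by simp [h])
  -- the graph hom associated to T
  let F : ∀ T ∈ 𝒜 \ ({T2, T3} : Set _), (t2 →ₗ[R] t3) := fun T hT =>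
    q ∘ₗ (comap B₀.subtype T).subtype ∘ₗ
      ((comap B₀.subtype T).linearProjOfIsCompl t3
        (hcompl T (hmem T hT).1 T3 hT3 (hmem T hT).2.2)) ∘ₗ t2.subtype
  have hF1 : ∀ (T) (hT : T ∈ 𝒜 \ ({T2, T3} : Set _)) (y : t2),
      (((comap B₀.subtype T).linearProjOfIsCompl t3
        (hcompl T (hmem T hT).1 T3 hT3 (hmem T hT).2.2) (t2.subtype y) : _) : B₀)
        = (y : B₀) + ((F T hT y : t3) : B₀) := by
    intro T hT y
    exact s9_graph1 hc23 (hcompl T (hmem T hT).1 T3 hT3 (hmem T hT).2.2) y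
  have hF2 : ∀ (T) (hT : T ∈ 𝒜 \ ({T2, T3} : Set _)) (x : B₀), x ∈ comap B₀.subtype T →
      ((F T hT (p x) : t3) : B₀) = ((q x : t3) : B₀) := by
    intro T hT x hx
    have h2 := s9_graph2 hc23 (hcompl T (hmem T hT).1 T3 hT3 (hmem T hT).2.2) x hx
    have h1 := hF1 T hT (p x)
    rw [h2] at h1
    have hdec : ((p x : t2) : B₀) + ((q x : t3) : B₀) = x :=
      Submodule.projection_add_projection_eq_self hc23 x
    have := h1.symm.trans hdec.symm
    exact add_left_cancel this
  -- injectivity of T ↦ F T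
  have hFinj : ∀ (T) (hT : T ∈ 𝒜 \ ({T2, T3} : Set _)) (T') (hT' : T' ∈ 𝒜 \ ({T2, T3} : Set _)),
      F T hT = F T' hT' → T = T' := by
    intro T hT T' hT' hFF
    have hle : T ≤ T' := by
      intro m hm
      have hmB : m ∈ B₀ := hleB T (hmem T hT).1 hm
      set x : B₀ := ⟨m, hmB⟩ with hxdef
      have hx : x ∈ comap B₀.subtype T := hm
      have e2 := hF2 T hT x hx
      have e1 := hF1 T' hT' (p x)
      rw [hFF] at e2
      rw [e2] at e1
      have hdec : ((p x : t2) : B₀) + ((q x : t3) : B₀) = x :=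
        Submodule.projection_add_projection_eq_self hc23 x
      rw [hdec] at e1
      have hmem' : ((((comap B₀.subtype T').linearProjOfIsCompl t3
          (hcompl T' (hmem T' hT').1 T3 hT3 (hmem T' hT').2.2) (t2.subtype (p x)) : _)) : B₀)
          ∈ comap B₀.subtype T' := Submodule.coe_mem _
      rw [e1] at hmem'
      exact hmem'
    exact (((hatom T' (hmem T' hT').1).le_iff.mp hle).resolve_left
      (hatom T (hmem T hT).1).1)
  -- simplicity instances
  haveI hS3 : IsSimpleModule R T3 := isSimpleModule_iff_isAtom.mpr (hatom T3 hT3)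
  haveI hS2 : IsSimpleModule R T2 := isSimpleModule_iff_isAtom.mpr (hatom T2 hT2)
  haveI hs3 : IsSimpleModule R t3 :=
    IsSimpleModule.congr (Submodule.comapSubtypeEquivOfLe (hleB T3 hT3))
  haveI hs2 : IsSimpleModule R t2 :=
    IsSimpleModule.congr (Submodule.comapSubtypeEquivOfLe (hleB T2 hT2))
  -- pick a base point T0 and show F T0 is bijective
  obtain ⟨T0, hT0⟩ := h𝒜'.nonempty
  have ht0t2 : comap B₀.subtype T0 ⊓ t2 = ⊥ :=
    (hcompl T0 (hmem T0 hT0).1 T2 hT2 (hmem T0 hT0).2.1).disjoint.eq_bot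
  have hF0inj : Function.Injective (F T0 hT0) := by
    rw [injective_iff_map_eq_zero]
    intro y hy
    have h1 := hF1 T0 hT0 y
    rw [hy] at h1
    simp only [ZeroMemClass.coe_zero, add_zero] at h1
    have hvmem : (((comap B₀.subtype T0).linearProjOfIsCompl t3
        (hcompl T0 (hmem T0 hT0).1 T3 hT3 (hmem T0 hT0).2.2) (t2.subtype y) : _) : B₀)
        ∈ comap B₀.subtype T0 := Submodule.coe_mem _
    rw [h1] at hvmem
    have : (y : B₀) ∈ comap B₀.subtype T0 ⊓ t2 := ⟨hvmem, Submodule.coe_mem y⟩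
    rw [ht0t2] at this
    exact Subtype.ext this
  have hF0surj : Function.Surjective (F T0 hT0) := by
    rcases eq_bot_or_eq_top (LinearMap.range (F T0 hT0)) with hr | hr
    · exfalso
      have hz : F T0 hT0 = 0 := LinearMap.range_eq_bot.mp hr
      haveI := IsSimpleModule.nontrivial R ↥t2
      obtain ⟨y, hy⟩ := exists_ne (0 : t2)
      exact hy (hF0inj (by rw [hz]; rfl))
    · exact LinearMap.range_eq_top.mp hr
  let e : t2 ≃ₗ[R] t3 := LinearEquiv.ofBijective (F T0 hT0) ⟨hF0inj, hF0surj⟩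
  haveI : Infinite ↥(𝒜 \ ({T2, T3} : Set _)) := h𝒜'.to_subtype
  have hHominf : Infinite (t2 →ₗ[R] t3) :=
    Infinite.of_injective (fun T : ↥(𝒜 \ ({T2, T3} : Set _)) => F T.1 T.2)
      (fun a b h => Subtype.ext (hFinj a.1 a.2 b.1 b.2 h))
  have hEndinf : Infinite (Module.End R t2) := by
    refine Infinite.of_injective (fun g : t2 →ₗ[R] t3 => e.symm.toLinearMap ∘ₗ g) ?_
    intro g g' h
    refine LinearMap.ext fun y => ?_
    have := LinearMap.congr_fun h y
    simp only [LinearMap.coe_comp, Function.comp_apply, LinearEquiv.coe_coe] at this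
    exact e.symm.injective this
  refine ⟨T2, T3, hatom T2 hT2, hatom T3 hT3,
    hdisj _ _ (hatom T2 hT2) (hatom T3 hT3) (Ne.symm hT3ne), ?_, ?_⟩
  · exact ⟨(Submodule.comapSubtypeEquivOfLe (hleB T2 hT2)).symm.trans
      (e.trans (Submodule.comapSubtypeEquivOfLe (hleB T3 hT3)))⟩
  · exact s9_endInfinite (Submodule.comapSubtypeEquivOfLe (hleB T2 hT2))

end Statement9Helpers

/-- Let `M` be a module of finite length.  Then `M` has infinitely many
nontrivial submodules if and only if there exist a submodule `K` of `M` and simple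
submodules `S`, `S'` of `M/K` with `S ⊓ S' = ⊥`, `S ≅ S'`, and `End(S)` an infinite
division ring. -/
theorem statement9 {R : Type*} [Ring R] {M : Type*} [AddCommGroup M] [Module R M]
    (hlen : IsFiniteLength R M) :
    {N : Submodule R M | N ≠ ⊥ ∧ N ≠ ⊤}.Infinite ↔
    ∃ K : Submodule R M, ∃ S S' : Submodule R (M ⧸ K),
      IsSimpleModule R S ∧ IsSimpleModule R S' ∧ S ⊓ S' = ⊥ ∧
      Nonempty (S ≃ₗ[R] S') ∧
      Infinite (Module.End R S) ∧
      (∀ f : Module.End R S, f ≠ 0 → IsUnit f) := by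
  obtain ⟨hNoeth, hArt⟩ := isFiniteLength_iff_isNoetherian_isArtinian.mp hlen
  constructor
  · -- forward direction
    intro hinf
    set 𝒞 : Set (Submodule R M) := {A | {X : Submodule R M | A ≤ X}.Infinite} with h𝒞
    have hbot : (⊥ : Submodule R M) ∈ 𝒞 := by
      have huniv : {X : Submodule R M | (⊥ : Submodule R M) ≤ X} = Set.univ := by
        ext X; simp
      rw [Set.mem_setOf_eq, huniv]
      exact hinf.mono (Set.subset_univ _)
    obtain ⟨A, hA, hAmax⟩ := (hNoeth.wellFoundedGT.wf).has_min 𝒞 ⟨⊥, hbot⟩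
    have hmaxfin : ∀ X : Submodule R M, A < X → {Z : Submodule R M | X ≤ Z}.Finite := by
      intro X hX
      rcases Set.finite_or_infinite {Z : Submodule R M | X ≤ Z} with h | h
      · exact h
      · exact absurd hX (hAmax X h)
    haveI : IsArtinian R (M ⧸ A) := inferInstance
    have hπ : Function.Surjective A.mkQ := Submodule.mkQ_surjective A
    have hΦinj : Function.Injective (comap A.mkQ : Submodule R (M ⧸ A) → Submodule R M) :=
      Submodule.comap_injective_of_surjective hπ
    have hΦbot : comap A.mkQ (⊥ : Submodule R (M ⧸ A)) = A := by
      rw [Submodule.comap_bot, Submodule.ker_mkQ]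
    have h1 : (Set.univ : Set (Submodule R (M ⧸ A))).Infinite := by
      by_contra h
      rw [Set.not_infinite] at h
      have himg : {X : Submodule R M | A ≤ X} ⊆
          (fun Y => comap A.mkQ Y) '' Set.univ := by
        intro X hX
        refine ⟨Submodule.map A.mkQ X, trivial, ?_⟩
        show comap A.mkQ (Submodule.map A.mkQ X) = X
        rw [Submodule.comap_map_mkQ, sup_eq_right.mpr hX]
      exact hA ((h.image _).subset himg)
    have h3 : ∀ P : Submodule R (M ⧸ A), P ≠ ⊥ → {X : Submodule R (M ⧸ A) | P ≤ X}.Finite := by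
      intro P hP
      have hle : A ≤ comap A.mkQ P :=
        le_of_eq hΦbot.symm |>.trans (Submodule.comap_mono bot_le)
      have hlt : A < comap A.mkQ P := by
        refine lt_of_le_of_ne hle (fun h => hP ?_)
        exact (hΦinj (by rw [← h, hΦbot])).symm
      refine Set.Finite.of_finite_image ?_ (hΦinj.injOn)
      refine (hmaxfin _ hlt).subset ?_
      rintro _ ⟨Y, hY, rfl⟩
      exact Submodule.comap_mono hY
    obtain ⟨T2, T3, ha2, ha3, hinf23, hiso, hend⟩ := s9_core h1 h3
    haveI h2s : IsSimpleModule R T2 := isSimpleModule_iff_isAtom.mpr ha2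
    refine ⟨A, T2, T3, h2s, isSimpleModule_iff_isAtom.mpr ha3, hinf23, hiso, hend, ?_⟩
    intro f hf
    rcases f.bijective_or_eq_zero with hb | hz
    · exact (Module.End.isUnit_iff f).mpr hb
    · exact absurd hz hf
  · -- backward direction
    rintro ⟨K, S, S', hS, hS', hSS', ⟨e⟩, hEnd, -⟩
    haveI := hS
    haveI := hS'
    haveI := hEnd
    set g : Module.End R S → (S →ₗ[R] M ⧸ K) :=
      fun f => S.subtype + (S'.subtype ∘ₗ (e.toLinearMap ∘ₗ f)) with hg
    have hgapply : ∀ (f : Module.End R S) (y : S),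
        g f y = (y : M ⧸ K) + ((e (f y) : S') : M ⧸ K) := fun f y => rfl
    set N : Module.End R S → Submodule R M :=
      fun f => comap K.mkQ (LinearMap.range (g f)) with hN
    have hzero : ∀ z : S, (z : M ⧸ K) ∈ S' → z = 0 := by
      intro z hz
      have hmem : (z : M ⧸ K) ∈ S ⊓ S' := ⟨SetLike.coe_mem z, hz⟩
      rw [hSS'] at hmem
      exact Subtype.ext hmem
    haveI := IsSimpleModule.nontrivial R ↥S
    haveI := IsSimpleModule.nontrivial R ↥S'
    have hNinj : Function.Injective N := by
      intro f f' hNf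
      have hG : LinearMap.range (g f) = LinearMap.range (g f') :=
        Submodule.comap_injective_of_surjective (Submodule.mkQ_surjective K) hNf
      refine LinearMap.ext fun y => ?_
      have hy : g f y ∈ LinearMap.range (g f') := by
        rw [← hG]; exact LinearMap.mem_range_self (g f) y
      obtain ⟨z, hz⟩ := hy
      rw [hgapply, hgapply] at hz
      have hz' : ((z - y : S) : M ⧸ K) = ((e (f y) - e (f' z) : S') : M ⧸ K) := by
        push_cast
        rw [sub_eq_sub_iff_add_eq_add, add_comm ((e (f y) : S') : M ⧸ K) (y : M ⧸ K)]
        exact hz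
      have hmemS' : ((z - y : S) : M ⧸ K) ∈ S' := by
        rw [hz']; exact SetLike.coe_mem _
      have hzy : z = y := sub_eq_zero.mp (hzero _ hmemS')
      rw [hzy] at hz
      have := add_left_cancel hz
      have := Subtype.coe_injective this
      have := e.injective this
      exact this.symm
    have hmemset : ∀ f : Module.End R S, N f ∈ {N : Submodule R M | N ≠ ⊥ ∧ N ≠ ⊤} := by
      intro f
      obtain ⟨y0, hy0⟩ := exists_ne (0 : S)
      constructor
      · intro hbot
        have hrange : LinearMap.range (g f) = ⊥ := by
          have hmap := congrArg (Submodule.map K.mkQ) hbot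
          rwa [Submodule.map_comap_eq_of_surjective (Submodule.mkQ_surjective K),
            Submodule.map_bot] at hmap
        have h0 : g f y0 = 0 := by
          have : g f y0 ∈ (⊥ : Submodule R (M ⧸ K)) := by
            rw [← hrange]; exact LinearMap.mem_range_self (g f) y0
          exact this
        rw [hgapply] at h0
        have hy0S' : (y0 : M ⧸ K) ∈ S' := by
          have h1 : (y0 : M ⧸ K) = -((e (f y0) : S') : M ⧸ K) :=
            eq_neg_of_add_eq_zero_left h0
          rw [h1]; exact neg_mem (SetLike.coe_mem _)
        exact hy0 (hzero y0 hy0S')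
      · intro htop
        have hrange : LinearMap.range (g f) = ⊤ := by
          have hmap := congrArg (Submodule.map K.mkQ) htop
          rw [Submodule.map_comap_eq_of_surjective (Submodule.mkQ_surjective K)] at hmap
          rw [hmap, Submodule.map_top, Submodule.range_mkQ]
        obtain ⟨s0, hs0⟩ := exists_ne (0 : S')
        have hs0mem : ((s0 : S') : M ⧸ K) ∈ LinearMap.range (g f) := by
          rw [hrange]; trivial
        obtain ⟨z, hz⟩ := hs0mem
        rw [hgapply] at hz
        have hzS' : (z : M ⧸ K) ∈ S' := by
          have : (z : M ⧸ K) = ((s0 : S') : M ⧸ K) - ((e (f z) : S') : M ⧸ K) :=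
            eq_sub_of_add_eq hz
          rw [this]; exact sub_mem (SetLike.coe_mem _) (SetLike.coe_mem _)
        have hz0 : z = 0 := hzero z hzS'
        rw [hz0] at hz
        rw [map_zero] at hz
        simp only [ZeroMemClass.coe_zero, map_zero, zero_add] at hz
        exact hs0 (Subtype.ext hz.symm)
    exact Set.infinite_of_injective_forall_mem hNinj hmemset
end

section
/- Let N be a nontrivial submodule of a left R-module M. The following conditions are equivalent: (1) M has infinitely many nontrivial submodules and deg(N) is finite; (2) all of the following hold: (i) N contains a unique simple submodule S; (ii) End(S) is infinite; (iii) the quotient module M/S has only finitely many nontrivial submodules; (iv) there exist submodules B ⊆ A of M such that N ∩ A = 0 and A/B ≅ S as R-modules. -/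
open Submodule Set Function LinearMap

section Helpers

variable {R : Type*} [Ring R] {M : Type*} [AddCommGroup M] [Module R M]

/-- Pigeonhole: an infinite set mapped into a finite set has an infinite fiber. -/
lemma infinite_fiber_aux {α β : Type*} {s : Set α} (hs : s.Infinite) (f : α → β)
    {t : Set β} (ht : t.Finite) (hmap : ∀ a ∈ s, f a ∈ t) :
    ∃ b, {a | a ∈ s ∧ f a = b}.Infinite := by
  by_contra h
  push_neg at h
  have hsub : s ⊆ ⋃ b ∈ t, {a | a ∈ s ∧ f a = b} := fun a ha =>
    Set.mem_biUnion (hmap a ha) ⟨ha, rfl⟩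
  exact hs ((ht.biUnion fun b _ => h b).subset hsub)

/-- A nonzero submodule below which there are only finitely many nonzero submodules
contains an atom. -/
lemma exists_atom_le_of_finite_aux (P : Submodule R M) (hP : P ≠ ⊥)
    (hfin : {K : Submodule R M | K ≠ ⊥ ∧ K ≤ P}.Finite) :
    ∃ S : Submodule R M, IsAtom S ∧ S ≤ P := by
  obtain ⟨S, hS, hmin⟩ := hfin.exists_minimal ⟨P, hP, le_rfl⟩
  refine ⟨S, ⟨hS.1, fun b hb => ?_⟩, hS.2⟩
  by_contra hb0
  exact hb.not_ge (hmin ⟨hb0, hb.le.trans hS.2⟩ hb.le)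

lemma isCompl_comap_aux {T K S' : Submodule R M} (hK : K ≤ T) (hS : S' ≤ T)
    (hdis : K ⊓ S' = ⊥) (hsup : K ⊔ S' = T) :
    IsCompl (K.comap T.subtype) (S'.comap T.subtype) := by
  constructor
  · rw [disjoint_iff, ← Submodule.comap_inf, hdis]
    rw [← Submodule.ker_subtype T]
    rfl
  · rw [codisjoint_iff]
    apply Submodule.map_injective_of_injective (Submodule.injective_subtype T)
    rw [Submodule.map_sup, Submodule.map_comap_subtype, Submodule.map_comap_subtype,
      Submodule.map_top, Submodule.range_subtype, inf_eq_right.mpr hK,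
      inf_eq_right.mpr hS, hsup]

end Helpers

section Main

variable {R : Type*} [Ring R] {M : Type*} [AddCommGroup M] [Module R M]

lemma backward_aux (N : Submodule R M) (hN : N ≠ ⊥) (hN' : N ≠ ⊤)
    (h : ∃ S : Submodule R M, S ≤ N ∧ IsSimpleModule R S ∧
      (∀ U : Submodule R M, U ≤ N → IsSimpleModule R U → U = S) ∧
      Infinite (Module.End R S) ∧
      {W : Submodule R (M ⧸ S) | W ≠ ⊥ ∧ W ≠ ⊤}.Finite ∧
      (∃ A B : Submodule R M, B ≤ A ∧ N ⊓ A = ⊥ ∧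
        Nonempty ((A ⧸ (B.comap A.subtype)) ≃ₗ[R] S))) :
    ({K : Submodule R M | K ≠ ⊥ ∧ K ≠ ⊤}.Infinite ∧
      {K : Submodule R M | K ≠ ⊥ ∧ K ≠ ⊤ ∧ K ≠ N ∧ K ⊓ N ≠ ⊥}.Finite) := by
  obtain ⟨S, hSN, hSsimple, huniq, hEnd, hQfin, A, B, hBA, hNA, ⟨e⟩⟩ := h
  have hSatom : IsAtom S := isSimpleModule_iff_isAtom.mp hSsimple
  -- the quotient M/S has finitely many submodules
  have hQuotFin : Finite (Submodule R (M ⧸ S)) := by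
    rw [← Set.finite_univ_iff]
    have : (Set.univ : Set (Submodule R (M ⧸ S))) ⊆
        insert ⊥ (insert ⊤ {W : Submodule R (M ⧸ S) | W ≠ ⊥ ∧ W ≠ ⊤}) := by
      intro W _
      by_cases h1 : W = ⊥
      · exact Set.mem_insert_iff.mpr (Or.inl h1)
      by_cases h2 : W = ⊤
      · exact Set.mem_insert_iff.mpr (Or.inr (Set.mem_insert_iff.mpr (Or.inl h2)))
      · exact Set.mem_insert_iff.mpr (Or.inr (Set.mem_insert_iff.mpr (Or.inr ⟨h1, h2⟩)))
    exact ((hQfin.insert ⊤).insert ⊥).subset this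
  -- every nonzero submodule of N contains S
  have hcontains : ∀ P : Submodule R M, P ≤ N → P ≠ ⊥ → S ≤ P := by
    intro P hPN hP0
    rcases hSatom.le_iff.mp (inf_le_left : S ⊓ P ≤ S) with hSP | hSP
    · -- S ⊓ P = ⊥ : find an atom below P, it must be S, contradiction
      exfalso
      have hIfin : {K : Submodule R M | K ≠ ⊥ ∧ K ≤ P}.Finite := by
        apply Set.Finite.of_finite_image (f := fun K => Submodule.map S.mkQ K)
        · exact Set.toFinite _
        · intro K₁ hK₁ K₂ hK₂ heq
          have hsup : K₁ ⊔ S = K₂ ⊔ S := by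
            have h1 := congrArg (Submodule.comap S.mkQ) heq
            rwa [Submodule.comap_map_eq, Submodule.comap_map_eq, Submodule.ker_mkQ] at h1
          have hle : ∀ K K' : Submodule R M, K ≤ P → K' ≤ P → K ⊔ S = K' ⊔ S → K ≤ K' := by
            intro K K' hKP hK'P hKK'
            have : K ≤ (K' ⊔ S) ⊓ P := le_inf (hKK' ▸ le_sup_left) hKP
            rwa [sup_inf_assoc_of_le _ hK'P, hSP, sup_bot_eq] at this
          exact le_antisymm (hle _ _ hK₁.2 hK₂.2 hsup) (hle _ _ hK₂.2 hK₁.2 hsup.symm)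
      obtain ⟨Q, hQatom, hQP⟩ := exists_atom_le_of_finite_aux P hP0 hIfin
      have hQS : Q = S := huniq Q (hQP.trans hPN) (isSimpleModule_iff_isAtom.mpr hQatom)
      rw [hQS] at hQP
      have : S ⊓ P = S := inf_eq_left.mpr hQP
      exact hSatom.1 (by rw [← hSP, this])
    · exact inf_eq_left.mp hSP
  constructor
  · -- infinitely many nontrivial submodules
    have hA0 : A ≠ ⊥ := by
      intro hA
      have : Subsingleton ↥A := by rw [hA]; infer_instance
      have : Subsingleton (A ⧸ (B.comap A.subtype)) := Quotient.instSubsingletonQuotient _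
      have hS' : Subsingleton ↥S := e.symm.toEquiv.subsingleton
      have : Nontrivial ↥S := IsSimpleModule.nontrivial R ↥S
      exact not_subsingleton_iff_nontrivial.mpr this hS'
    have hSA : S ⊓ A = ⊥ := by
      have : S ⊓ A ≤ N ⊓ A := inf_le_inf_right A hSN
      rw [hNA] at this
      exact le_bot_iff.mp this
    obtain ⟨x₀, hx₀A, hx₀⟩ := A.ne_bot_iff.mp hA0
    set π : ↥A →ₗ[R] ↥S := e.toLinearMap ∘ₗ (B.comap A.subtype).mkQ with hπ
    have hπsurj : Function.Surjective π := e.surjective.comp (Submodule.mkQ_surjective _)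
    set ψ : Module.End R ↥S → (↥A →ₗ[R] M) :=
      fun g => A.subtype + S.subtype ∘ₗ g ∘ₗ π with hψ
    have hψ_apply : ∀ g x, ψ g x = (x : M) + ((g (π x)) : M) := fun g x => rfl
    set C : Module.End R ↥S → Submodule R M := fun g => LinearMap.range (ψ g) with hC
    have hCN : ∀ g, C g ⊓ N = ⊥ := by
      intro g
      rw [eq_bot_iff]
      rintro y ⟨⟨x, rfl⟩, hyN⟩
      have hx : (x : M) ∈ N := by
        have h1 : ((g (π x)) : M) ∈ N := hSN (g (π x)).2
        have : (x : M) = ψ g x - ((g (π x)) : M) := by rw [hψ_apply]; abel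
        rw [this]
        exact N.sub_mem hyN h1
      have : (x : M) ∈ A ⊓ N := ⟨x.2, hx⟩
      rw [inf_comm, hNA] at this
      have hx0 : x = 0 := Subtype.ext this
      simp [hψ_apply, hx0]
    have hinj : Function.Injective C := by
      intro g h hgh
      ext s
      obtain ⟨x, rfl⟩ := hπsurj s
      have : ψ g x ∈ C h := hgh ▸ LinearMap.mem_range_self _ x
      obtain ⟨x', hx'⟩ := this
      have hxx' : (x : M) + ((g (π x)) : M) = (x' : M) + ((h (π x')) : M) := by
        rw [← hψ_apply, ← hψ_apply, hx']
      have hdiff : (x : M) - (x' : M) = ((h (π x')) : M) - ((g (π x)) : M) :=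
        sub_eq_sub_iff_add_eq_add.mpr (hxx'.trans (add_comm _ _))
      have hmem : (x : M) - (x' : M) ∈ A ⊓ S := by
        constructor
        · exact A.sub_mem x.2 x'.2
        · rw [hdiff]; exact S.sub_mem (h (π x')).2 (g (π x)).2
      rw [inf_comm, hSA] at hmem
      have hx_eq : x = x' := Subtype.ext (by rwa [Submodule.mem_bot, sub_eq_zero] at hmem)
      rw [← hx_eq] at hxx'
      exact add_left_cancel hxx'
    refine Set.infinite_of_injective_forall_mem hinj ?_
    intro g
    constructor
    · intro hbot
      have hm : ψ g ⟨x₀, hx₀A⟩ ∈ C g := LinearMap.mem_range_self _ _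
      rw [hbot, Submodule.mem_bot] at hm
      have hx₀S : x₀ ∈ S := by
        have h1 : (⟨x₀, hx₀A⟩ : ↥A) + ((g (π ⟨x₀, hx₀A⟩)) : M) = 0 := by
          rw [← hψ_apply, hm]
        have h2 : x₀ = -((g (π ⟨x₀, hx₀A⟩)) : M) := eq_neg_of_add_eq_zero_left h1
        rw [h2]
        exact S.neg_mem (g (π ⟨x₀, hx₀A⟩)).2
      have : x₀ ∈ S ⊓ A := ⟨hx₀S, hx₀A⟩
      rw [hSA, Submodule.mem_bot] at this
      exact hx₀ this
    · intro htop
      have := hCN g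
      rw [htop, top_inf_eq] at this
      exact hN this
  · -- deg(N) is finite
    apply Set.Finite.of_finite_image (f := fun K => Submodule.map S.mkQ K)
    · exact Set.toFinite _
    · intro K₁ hK₁ K₂ hK₂ heq
      have hS₁ : S ≤ K₁ := le_trans (hcontains _ inf_le_right hK₁.2.2.2) inf_le_left
      have hS₂ : S ≤ K₂ := le_trans (hcontains _ inf_le_right hK₂.2.2.2) inf_le_left
      have h1 := congrArg (Submodule.comap S.mkQ) heq
      rwa [Submodule.comap_map_eq, Submodule.comap_map_eq, Submodule.ker_mkQ,
        sup_eq_left.mpr hS₁, sup_eq_left.mpr hS₂] at h1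

end Main

section Forward

variable {R : Type*} [Ring R] {M : Type*} [AddCommGroup M] [Module R M]

lemma forward_aux (N : Submodule R M) (hN : N ≠ ⊥) (hN' : N ≠ ⊤)
    (hV : {K : Submodule R M | K ≠ ⊥ ∧ K ≠ ⊤}.Infinite)
    (hD : {K : Submodule R M | K ≠ ⊥ ∧ K ≠ ⊤ ∧ K ≠ N ∧ K ⊓ N ≠ ⊥}.Finite) :
    (∃ S : Submodule R M, S ≤ N ∧ IsSimpleModule R S ∧
      (∀ U : Submodule R M, U ≤ N → IsSimpleModule R U → U = S) ∧
      Infinite (Module.End R S) ∧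
      {W : Submodule R (M ⧸ S) | W ≠ ⊥ ∧ W ≠ ⊤}.Finite ∧
      (∃ A B : Submodule R M, B ≤ A ∧ N ⊓ A = ⊥ ∧
        Nonempty ((A ⧸ (B.comap A.subtype)) ≃ₗ[R] S))) := by
  classical
  set E : Set (Submodule R M) := insert N {K | K ≠ ⊥ ∧ K ≠ ⊤ ∧ K ≠ N ∧ K ⊓ N ≠ ⊥} with hEdef
  have hEfin : E.Finite := hD.insert N
  have hmemE : ∀ K : Submodule R M, K ≠ ⊥ → K ≠ ⊤ → K ⊓ N ≠ ⊥ → K ∈ E := by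
    intro K h1 h2 h3
    by_cases h4 : K = N
    · exact Set.mem_insert_iff.mpr (Or.inl h4)
    · exact Set.mem_insert_iff.mpr (Or.inr ⟨h1, h2, h4, h3⟩)
  -- an atom below N exists
  have hIfin : {K : Submodule R M | K ≠ ⊥ ∧ K ≤ N}.Finite := by
    apply hEfin.subset
    rintro K ⟨h1, h2⟩
    refine hmemE K h1 (fun htop => hN' (top_le_iff.mp (htop ▸ h2))) ?_
    rwa [inf_eq_left.mpr h2]
  obtain ⟨S, hSatom, hSN⟩ := exists_atom_le_of_finite_aux N hN hIfin
  have hSsimple : IsSimpleModule R ↥S := isSimpleModule_iff_isAtom.mpr hSatom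
  haveI := hSsimple
  -- (iii)  M ⧸ S has finitely many nontrivial submodules
  have hQfin : {W : Submodule R (M ⧸ S) | W ≠ ⊥ ∧ W ≠ ⊤}.Finite := by
    apply Set.Finite.of_finite_image (f := fun W => Submodule.comap S.mkQ W)
    · apply hEfin.subset
      rintro _ ⟨W, ⟨hW1, hW2⟩, rfl⟩
      have hker : S ≤ Submodule.comap S.mkQ W :=
        le_trans (le_of_eq (Submodule.ker_mkQ S).symm)
          (le_trans (le_of_eq (Submodule.comap_bot _).symm) (Submodule.comap_mono bot_le))
      refine hmemE _ (fun hb => hSatom.1 (le_bot_iff.mp (hb ▸ hker))) ?_ ?_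
      · intro htop
        apply hW2
        have h1 := congrArg (Submodule.map S.mkQ) htop
        rwa [Submodule.map_comap_eq, Submodule.range_mkQ, top_inf_eq, Submodule.map_top,
          Submodule.range_mkQ] at h1
      · intro hb
        exact hSatom.1 (le_bot_iff.mp (hb ▸ le_inf hker hSN))
    · exact (Submodule.comap_injective_of_surjective (Submodule.mkQ_surjective S)).injOn
  -- the set of nontrivial submodules meeting N trivially is infinite
  set Ws : Set (Submodule R M) := {K | (K ≠ ⊥ ∧ K ≠ ⊤) ∧ K ⊓ N = ⊥} with hWsdef
  have hW : Ws.Infinite := by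
    intro h
    apply hV
    apply (h.union hEfin).subset
    rintro K ⟨h1, h2⟩
    by_cases h3 : K ⊓ N = ⊥
    · exact Or.inl ⟨⟨h1, h2⟩, h3⟩
    · exact Or.inr (hmemE K h1 h2 h3)
  have hsupmem : ∀ K : Submodule R M, K ⊓ N = ⊥ → ∀ U : Submodule R M, U ≤ N → U ≠ ⊥ →
      K ⊔ U ∈ insert ⊤ E := by
    intro K hKN U hUN hU0
    by_cases htop : K ⊔ U = ⊤
    · exact Set.mem_insert_iff.mpr (Or.inl htop)
    · refine Set.mem_insert_iff.mpr (Or.inr (hmemE _ ?_ htop ?_))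
      · intro hb; exact hU0 (le_bot_iff.mp (hb ▸ le_sup_right))
      · intro hb; exact hU0 (le_bot_iff.mp (hb ▸ le_inf le_sup_right hUN))
  -- uniqueness of the simple submodule of N
  have huniq : ∀ U : Submodule R M, U ≤ N → IsAtom U → U = S := by
    intro U hUN hUatom
    obtain ⟨b, hbinf⟩ := infinite_fiber_aux hW (fun K => (K ⊔ S, K ⊔ U))
      ((hEfin.insert ⊤).prod (hEfin.insert ⊤))
      (fun K hK => Set.mem_prod.mpr ⟨hsupmem K hK.2 S hSN hSatom.1, hsupmem K hK.2 U hUN hUatom.1⟩)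
    obtain ⟨K₀, hK₀, K₁, hK₁, hne⟩ := hbinf.nontrivial
    have heqS : K₁ ⊔ S = K₀ ⊔ S := (Prod.ext_iff.mp (hK₁.2.trans hK₀.2.symm)).1
    have heqU : K₁ ⊔ U = K₀ ⊔ U := (Prod.ext_iff.mp (hK₁.2.trans hK₀.2.symm)).2
    set T : Submodule R M := (K₀ ⊔ S) ⊓ (K₀ ⊔ U) with hT
    have hK₀T : K₀ ≤ T := le_inf le_sup_left le_sup_left
    have hK₁T : K₁ ≤ T := le_inf (heqS ▸ le_sup_left) (heqU ▸ le_sup_left)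
    rcases hSatom.le_iff.mp (inf_le_left : S ⊓ T ≤ S) with hST | hST
    · exfalso
      have h0 : (K₀ ⊔ S) ⊓ T = T := inf_eq_right.mpr inf_le_left
      rw [sup_inf_assoc_of_le _ hK₀T, hST, sup_bot_eq] at h0
      have h1 : (K₁ ⊔ S) ⊓ T = T := inf_eq_right.mpr (heqS ▸ (inf_le_left : T ≤ K₀ ⊔ S))
      rw [sup_inf_assoc_of_le _ hK₁T, hST, sup_bot_eq] at h1
      exact hne (h1.symm ▸ h0.symm ▸ rfl)
    · have hSleT : S ≤ T := inf_eq_left.mp hST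
      have hmod : (U ⊔ K₀) ⊓ N = U := by
        rw [sup_inf_assoc_of_le _ hUN, hK₀.1.2, sup_bot_eq]
      have hSU : S ≤ U := by
        have h2 : S ≤ (U ⊔ K₀) ⊓ N :=
          le_inf (by rw [sup_comm]; exact hSleT.trans inf_le_right) hSN
        rwa [hmod] at h2
      rcases hUatom.le_iff.mp hSU with h | h
      · exact absurd h hSatom.1
      · exact h.symm
  -- infinite fiber for the map K ↦ K ⊔ S
  obtain ⟨T, hFT⟩ := infinite_fiber_aux hW (fun K => K ⊔ S) (hEfin.insert ⊤)
    (fun K hK => hsupmem K hK.2 S hSN hSatom.1)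
  obtain ⟨K₀, hK₀mem⟩ := hFT.nonempty
  have hK₀N : K₀ ⊓ N = ⊥ := hK₀mem.1.2
  have hK₀T : K₀ ⊔ S = T := hK₀mem.2
  have hK₀leT : K₀ ≤ T := hK₀T ▸ le_sup_left
  have hSleT : S ≤ T := hK₀T ▸ le_sup_right
  have hdisj : ∀ K : Submodule R M, K ⊓ N = ⊥ → K ⊓ S = ⊥ :=
    fun K hK => le_bot_iff.mp (le_trans (inf_le_inf_left K hSN) (le_of_eq hK))
  have hfibsub : ∀ K, K ∈ {a | a ∈ Ws ∧ a ⊔ S = T} → K ≤ T := fun K hK => hK.2 ▸ le_sup_left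
  have hcompl : ∀ K (hK : K ∈ {a | a ∈ Ws ∧ a ⊔ S = T}),
      IsCompl (K.comap T.subtype) (S.comap T.subtype) :=
    fun K hK => isCompl_comap_aux (hfibsub K hK) hSleT (hdisj K hK.1.2) hK.2
  -- Hom(K₀, S) is infinite
  have hHomInf : Infinite (↥K₀ →ₗ[R] ↥S) := by
    haveI hsub : Infinite ↥{a | a ∈ Ws ∧ a ⊔ S = T} := hFT.to_subtype
    refine Infinite.of_injective (fun K : ↥{a | a ∈ Ws ∧ a ⊔ S = T} =>
      (Submodule.comapSubtypeEquivOfLe hSleT).toLinearMap ∘ₗ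
        (Submodule.projectionOnto (S.comap T.subtype) (K.1.comap T.subtype)
          (hcompl K.1 K.2).symm) ∘ₗ Submodule.inclusion hK₀leT) ?_
    intro K₁ K₂ heq
    have hprj : Submodule.projectionOnto (S.comap T.subtype) (K₁.1.comap T.subtype)
          (hcompl K₁.1 K₁.2).symm =
        Submodule.projectionOnto (S.comap T.subtype) (K₂.1.comap T.subtype)
          (hcompl K₂.1 K₂.2).symm := by
      ext t
      have htop : t ∈ (K₀.comap T.subtype) ⊔ (S.comap T.subtype) := by
        rw [codisjoint_iff.mp (hcompl K₀ hK₀mem).2]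
        exact Submodule.mem_top
      obtain ⟨a, ha, c, hc, hac⟩ := Submodule.mem_sup.mp htop
      have hproja : ∀ (K : Submodule R M) (hK : K ∈ {a | a ∈ Ws ∧ a ⊔ S = T}),
          (Submodule.projectionOnto (S.comap T.subtype) (K.comap T.subtype)
            (hcompl K hK).symm) a =
          (Submodule.comapSubtypeEquivOfLe hSleT).symm
            ((Submodule.comapSubtypeEquivOfLe hSleT)
              ((Submodule.projectionOnto (S.comap T.subtype) (K.comap T.subtype)
                (hcompl K hK).symm) a)) := by
        intro K hK
        rw [LinearEquiv.symm_apply_apply]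
      have key : ∀ x : ↥K₀, (Submodule.projectionOnto (S.comap T.subtype)
            (K₁.1.comap T.subtype) (hcompl K₁.1 K₁.2).symm) (Submodule.inclusion hK₀leT x) =
          (Submodule.projectionOnto (S.comap T.subtype)
            (K₂.1.comap T.subtype) (hcompl K₂.1 K₂.2).symm) (Submodule.inclusion hK₀leT x) := by
        intro x
        have h1 := LinearMap.congr_fun heq x
        simp only [LinearMap.coe_comp, Function.comp_apply, LinearEquiv.coe_coe] at h1
        exact (Submodule.comapSubtypeEquivOfLe hSleT).injective h1
      have hxa : Submodule.inclusion hK₀leT (⟨(a : M), ha⟩ : ↥K₀) = a := Subtype.ext rfl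
      have ha12 : (Submodule.projectionOnto (S.comap T.subtype) (K₁.1.comap T.subtype)
            (hcompl K₁.1 K₁.2).symm) a =
          (Submodule.projectionOnto (S.comap T.subtype) (K₂.1.comap T.subtype)
            (hcompl K₂.1 K₂.2).symm) a := by
        rw [← hxa]; exact key _
      have hc1 : ∀ (K : Submodule R M) (hK : K ∈ {a | a ∈ Ws ∧ a ⊔ S = T}),
          (Submodule.projectionOnto (S.comap T.subtype) (K.comap T.subtype)
            (hcompl K hK).symm) c = ⟨c, hc⟩ :=
        fun K hK => Submodule.projectionOnto_apply_left (hcompl K hK).symm ⟨c, hc⟩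
      rw [← hac, map_add, map_add, ha12, hc1 K₁.1 K₁.2, hc1 K₂.1 K₂.2]
    have hker := congrArg LinearMap.ker hprj
    rw [Submodule.ker_projectionOnto, Submodule.ker_projectionOnto] at hker
    apply Subtype.ext
    have h1 := congrArg (Submodule.map T.subtype) hker
    rwa [Submodule.map_comap_subtype, Submodule.map_comap_subtype,
      inf_eq_right.mpr (hfibsub K₁.1 K₁.2), inf_eq_right.mpr (hfibsub K₂.1 K₂.2)] at h1
  -- a nonzero homomorphism K₀ → S exists, and every nonzero one is surjective
  have hfsurj : ∀ f : ↥K₀ →ₗ[R] ↥S, f ≠ 0 → Function.Surjective f := by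
    intro f hf
    rcases eq_bot_or_eq_top (LinearMap.range f) with h | h
    · exact absurd (LinearMap.range_eq_bot.mp h) hf
    · exact LinearMap.range_eq_top.mp h
  have hex : ∃ f : ↥K₀ →ₗ[R] ↥S, f ≠ 0 := by
    by_contra h
    push_neg at h
    haveI : Subsingleton (↥K₀ →ₗ[R] ↥S) := ⟨fun f g => (h f).trans (h g).symm⟩
    haveI := hHomInf
    exact not_finite (↥K₀ →ₗ[R] ↥S)
  obtain ⟨f₀, hf₀⟩ := hex
  have hK₀S : K₀ ⊓ S = ⊥ := hdisj K₀ hK₀N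
  have hmodK₀ : ∀ B' : Submodule R ↥K₀,
      (S ⊔ Submodule.map K₀.subtype B') ⊓ K₀ = Submodule.map K₀.subtype B' := by
    intro B'
    rw [sup_comm S (Submodule.map K₀.subtype B'),
      sup_inf_assoc_of_le _ (Submodule.map_subtype_le K₀ B'), inf_comm S K₀, hK₀S, sup_bot_eq]
  -- (ii) End(S) is infinite
  have hEnd : Infinite (Module.End R ↥S) := by
    by_contra hfin
    rw [not_infinite_iff_finite] at hfin
    set KS : Set (Submodule R ↥K₀) :=
      {B' | ∃ f : ↥K₀ →ₗ[R] ↥S, f ≠ 0 ∧ LinearMap.ker f = B'} with hKSdef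
    have hKSfin : KS.Finite := by
      apply Set.Finite.of_finite_image (f := fun B' => S ⊔ Submodule.map K₀.subtype B')
      · apply hEfin.subset
        rintro _ ⟨B', ⟨f, hf, hker⟩, rfl⟩
        refine hmemE _ (fun hb => hSatom.1 (le_bot_iff.mp (hb ▸ le_sup_left))) ?_
          (fun hb => hSatom.1 (le_bot_iff.mp (hb ▸ le_inf le_sup_left hSN)))
        intro htop
        have htop' : S ⊔ Submodule.map K₀.subtype B' = ⊤ := htop
        have h1 : Submodule.map K₀.subtype B' = K₀ := by
          have h2 := hmodK₀ B'
          rw [htop', top_inf_eq] at h2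
          exact h2.symm
        have h2 : B' = ⊤ := by
          apply Submodule.map_injective_of_injective (Submodule.injective_subtype K₀)
          rwa [Submodule.map_top, Submodule.range_subtype]
        exact hf (LinearMap.ker_eq_top.mp (hker.trans h2))
      · intro B₁ hB₁ B₂ hB₂ heq
        have key : ∀ Ba Bb : Submodule R ↥K₀,
            S ⊔ Submodule.map K₀.subtype Ba = S ⊔ Submodule.map K₀.subtype Bb → Ba ≤ Bb := by
          intro Ba Bb hBB
          have h1 : Submodule.map K₀.subtype Ba ≤ (S ⊔ Submodule.map K₀.subtype Bb) ⊓ K₀ :=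
            le_inf (hBB ▸ (le_sup_right : Submodule.map K₀.subtype Ba ≤
              S ⊔ Submodule.map K₀.subtype Ba)) (Submodule.map_subtype_le K₀ Ba)
          rw [hmodK₀ Bb] at h1
          exact (Submodule.map_le_map_iff_of_injective
            (Submodule.injective_subtype K₀) Ba Bb).mp h1
        exact le_antisymm (key B₁ B₂ heq) (key B₂ B₁ heq.symm)
    have hfiber : ∀ B' ∈ KS, {f : ↥K₀ →ₗ[R] ↥S | f ≠ 0 ∧ LinearMap.ker f = B'}.Finite := by
      intro B' hB'
      obtain ⟨f₁, hf₁, hker₁⟩ := hB'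
      have hs₁ : Function.Surjective f₁ := hfsurj f₁ hf₁
      rw [← Set.finite_coe_iff]
      haveI : Finite (Module.End R ↥S) := hfin
      apply Finite.of_injective (f := fun f : {f : ↥K₀ →ₗ[R] ↥S | f ≠ 0 ∧ LinearMap.ker f = B'} =>
        ((LinearMap.ker f₁).liftQ f.1 (le_of_eq (hker₁.trans f.2.2.symm))) ∘ₗ
          ((f₁.quotKerEquivOfSurjective hs₁).symm : ↥S →ₗ[R] (↥K₀ ⧸ LinearMap.ker f₁)))
      intro f g hfg
      apply Subtype.ext
      ext x
      have h1 := LinearMap.congr_fun hfg ((f₁.quotKerEquivOfSurjective hs₁)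
        (Submodule.Quotient.mk x))
      simp only [LinearMap.coe_comp, Function.comp_apply, LinearEquiv.coe_coe,
        LinearEquiv.symm_apply_apply] at h1
      have h2 : ∀ h, (LinearMap.ker f₁).liftQ f.1 h (Submodule.Quotient.mk x) = f.1 x :=
        fun h => Submodule.liftQ_apply _ _ x
      have h3 : ∀ h, (LinearMap.ker f₁).liftQ g.1 h (Submodule.Quotient.mk x) = g.1 x :=
        fun h => Submodule.liftQ_apply _ _ x
      rw [h2, h3] at h1
      exact congrArg Subtype.val h1
    have huniv : (Set.univ : Set (↥K₀ →ₗ[R] ↥S)).Finite := by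
      apply ((hKSfin.biUnion hfiber).insert 0).subset
      intro f _
      by_cases hf : f = 0
      · exact Set.mem_insert_iff.mpr (Or.inl hf)
      · exact Set.mem_insert_iff.mpr (Or.inr (Set.mem_biUnion ⟨f, hf, rfl⟩ ⟨hf, rfl⟩))
    haveI := hHomInf
    haveI : Finite (↥K₀ →ₗ[R] ↥S) := Set.finite_univ_iff.mp huniv
    exact not_finite (↥K₀ →ₗ[R] ↥S)
  -- (iv)
  have hsurj₀ : Function.Surjective f₀ := hfsurj f₀ hf₀
  have hcomap : (Submodule.map K₀.subtype (LinearMap.ker f₀)).comap K₀.subtype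
      = LinearMap.ker f₀ := by
    rw [Submodule.comap_map_eq, Submodule.ker_subtype, sup_bot_eq]
  refine ⟨S, hSN, hSsimple,
    (fun U hU hUs => huniq U hU (isSimpleModule_iff_isAtom.mp hUs)), hEnd, hQfin,
    K₀, Submodule.map K₀.subtype (LinearMap.ker f₀), Submodule.map_subtype_le _ _,
    by rw [inf_comm]; exact hK₀N,
    ⟨(Submodule.quotEquivOfEq _ _ hcomap).trans (f₀.quotKerEquivOfSurjective hsurj₀)⟩⟩

end Forward


/-- Let `N` be a nontrivial submodule of `M`.  The following are equivalent:
(1) `M` has infinitely many nontrivial submodules and `deg(N)` is finite;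
(2) (i) `N` contains a unique simple submodule `S`; (ii) `End(S)` is infinite;
(iii) `M/S` has only finitely many nontrivial submodules;
(iv) there are submodules `B ⊆ A ⊆ M` with `N ⊓ A = ⊥` and `A/B ≅ S`. -/
theorem statement10 {R : Type*} [Ring R] {M : Type*} [AddCommGroup M] [Module R M]
    (N : Submodule R M) (hN : N ≠ ⊥) (hN' : N ≠ ⊤) :
    ({K : Submodule R M | K ≠ ⊥ ∧ K ≠ ⊤}.Infinite ∧
      {K : Submodule R M | K ≠ ⊥ ∧ K ≠ ⊤ ∧ K ≠ N ∧ K ⊓ N ≠ ⊥}.Finite) ↔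
    (∃ S : Submodule R M, S ≤ N ∧ IsSimpleModule R S ∧
      (∀ U : Submodule R M, U ≤ N → IsSimpleModule R U → U = S) ∧
      Infinite (Module.End R S) ∧
      {W : Submodule R (M ⧸ S) | W ≠ ⊥ ∧ W ≠ ⊤}.Finite ∧
      (∃ A B : Submodule R M, B ≤ A ∧ N ⊓ A = ⊥ ∧
        Nonempty ((A ⧸ (B.comap A.subtype)) ≃ₗ[R] S))) :=
  ⟨fun h => forward_aux N hN hN' h.1 h.2, fun h => backward_aux N hN hN' h⟩
end

section
/- Let M be a left R-module such that M has infinitely many nontrivial submodules and the clique number ω(M) of the intersection graph G(M) is finite. Then: (i) M has finite length and Soc(M) is an essential submodule of M; (ii) there exist simple submodules S and S' of M with S ≅ S', S ∩ S' = 0, Soc(M) = S + S', and End(S) an infinite division ring; (iii) if N₁ and N₂ are nontrivial submodules of M neither of which contains Soc(M), then either N₁ ∩ N₂ = 0, or N₁ ∩ Soc(M) = N₂ ∩ Soc(M) and this intersection is a simple submodule of M. -/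
/-- A clique of the intersection graph `G(M)`: a set of nontrivial submodules any two
distinct members of which have nonzero intersection. -/
def IsIntClique {R : Type*} [Ring R] {M : Type*} [AddCommGroup M] [Module R M]
    (C : Set (Submodule R M)) : Prop :=
  (∀ N ∈ C, N ≠ ⊥ ∧ N ≠ ⊤) ∧ ∀ N ∈ C, ∀ K ∈ C, N ≠ K → N ⊓ K ≠ ⊥

/-- The clique number `ω(M)` of `G(M)`: the supremum of the cardinalities of cliques. -/
noncomputable def cliqueNumber (R : Type*) [Ring R] (M : Type*) [AddCommGroup M]
    [Module R M] : Cardinal :=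
  sSup {c : Cardinal | ∃ C : Set (Submodule R M), IsIntClique C ∧ c = Cardinal.mk C}

/-- The socle of a module: the sum of all its simple submodules. -/
def socle (R : Type*) [Ring R] (M : Type*) [AddCommGroup M] [Module R M] :
    Submodule R M :=
  sSup {A : Submodule R M | IsSimpleModule R A}

section Helpers

variable {R : Type*} [Ring R] {M : Type*} [AddCommGroup M] [Module R M]

lemma clique_finite (homega : cliqueNumber R M < Cardinal.aleph0)
    {C : Set (Submodule R M)} (hC : IsIntClique C) : C.Finite := by
  by_contra h
  rw [← Set.not_infinite, not_not] at h
  have hb : BddAbove {c : Cardinal | ∃ C : Set (Submodule R M), IsIntClique C ∧ c = Cardinal.mk C} := by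
    refine ⟨Cardinal.mk (Submodule R M), ?_⟩
    rintro c ⟨C', -, rfl⟩
    exact Cardinal.mk_set_le C'
  have h2 : Cardinal.mk C ≤ cliqueNumber R M := le_csSup hb ⟨C, hC, rfl⟩
  have : Infinite C := h.to_subtype
  exact absurd ((Cardinal.aleph0_le_mk C).trans h2) (not_le.mpr homega)

lemma atom_inf_eq_bot {A B : Submodule R M} (hA : IsAtom A) (hB : IsAtom B) (h : A ≠ B) :
    A ⊓ B = ⊥ := by
  rcases (hA.le_iff).mp inf_le_left with h1 | h1
  · exact h1
  · have hAB : A ≤ B := h1 ▸ inf_le_right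
    rcases (hB.le_iff).mp hAB with h2 | h2
    · exact absurd h2 hA.1
    · exact absurd h2 h

lemma atom_le_atom {A B : Submodule R M} (hA : IsAtom A) (hB : IsAtom B) (h : A ≤ B) :
    A = B := by
  rcases hB.le_iff.mp h with h1 | h1
  · exact absurd h1 hA.1
  · exact h1

lemma cov_of_atom {B X : Submodule R M} (hB : IsAtom B) (h : B ⊓ X = ⊥) : X ⋖ B ⊔ X :=
  covBy_sup_of_inf_covBy_left (h ▸ hB.bot_covBy)
lemma no_strictMono (homega : cliqueNumber R M < Cardinal.aleph0)
    (f : ℕ → Submodule R M) (hf : StrictMono f) : False := by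
  have hclique : IsIntClique (f '' Set.Ici 1) := by
    constructor
    · rintro N ⟨i, hi, rfl⟩
      constructor
      · intro hbot
        exact absurd (hbot ▸ hf (Nat.lt_of_lt_of_le Nat.zero_lt_one hi)) (by simp)
      · intro htop
        exact absurd (htop ▸ hf (Nat.lt_succ_self i)) (by simp)
    · rintro N ⟨i, hi, rfl⟩ K ⟨j, hj, rfl⟩ hne hbot
      have h1 : f 1 ≤ f i ⊓ f j := le_inf (hf.monotone hi) (hf.monotone hj)
      have h0 : f 0 < f 1 := hf Nat.zero_lt_one
      rw [hbot, le_bot_iff] at h1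
      exact absurd (h1 ▸ h0) (by simp)
  have hinf : (f '' Set.Ici 1).Infinite :=
    Set.infinite_of_injective_forall_mem (f := fun n : ℕ => f (n + 1))
      (fun a b hab => by simpa using hf.injective hab)
      (fun n => ⟨n + 1, by simp, rfl⟩)
  exact hinf (clique_finite homega hclique)

lemma no_strictAnti (homega : cliqueNumber R M < Cardinal.aleph0)
    (f : ℕ → Submodule R M) (hf : StrictAnti f) : False := by
  have hnebot : ∀ i, f i ≠ ⊥ := by
    intro i hbot
    exact absurd (hbot ▸ hf (Nat.lt_succ_self i)) (by simp)
  have hclique : IsIntClique (f '' Set.Ici 1) := by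
    constructor
    · rintro N ⟨i, hi, rfl⟩
      refine ⟨hnebot i, fun htop => ?_⟩
      exact absurd (htop ▸ hf (Nat.lt_of_lt_of_le Nat.zero_lt_one hi)) (by simp)
    · rintro N ⟨i, hi, rfl⟩ K ⟨j, hj, rfl⟩ hne hbot
      have h1 : f (max i j) ≤ f i ⊓ f j :=
        le_inf (hf.antitone (le_max_left i j)) (hf.antitone (le_max_right i j))
      rw [hbot, le_bot_iff] at h1
      exact hnebot _ h1
  have hinf : (f '' Set.Ici 1).Infinite :=
    Set.infinite_of_injective_forall_mem (f := fun n : ℕ => f (n + 1))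
      (fun a b hab => by simpa using hf.injective hab)
      (fun n => ⟨n + 1, by simp, rfl⟩)
  exact hinf (clique_finite homega hclique)

lemma noeth_of_homega (homega : cliqueNumber R M < Cardinal.aleph0) : IsNoetherian R M := by
  rw [isNoetherian_iff, RelEmbedding.wellFounded_iff_isEmpty]
  refine ⟨fun f => ?_⟩
  exact no_strictMono homega f (fun i j hij => f.map_rel_iff.mpr hij)

lemma artin_of_homega (homega : cliqueNumber R M < Cardinal.aleph0) : IsArtinian R M := by
  rw [isArtinian_iff, RelEmbedding.wellFounded_iff_isEmpty]
  refine ⟨fun f => ?_⟩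
  exact no_strictAnti homega f (fun i j hij => f.map_rel_iff.mpr hij)
lemma atomic_of_homega (homega : cliqueNumber R M < Cardinal.aleph0) :
    IsAtomic (Submodule R M) :=
  isAtomic_of_orderBot_wellFounded_lt ((isArtinian_iff R M).mp (artin_of_homega homega))

lemma over_finite (homega : cliqueNumber R M < Cardinal.aleph0)
    {X : Submodule R M} (hX : X ≠ ⊥) :
    {N : Submodule R M | (N ≠ ⊥ ∧ N ≠ ⊤) ∧ X ≤ N}.Finite := by
  apply clique_finite homega
  constructor
  · exact fun N hN => hN.1
  · rintro N ⟨-, hN⟩ K ⟨-, hK⟩ - hbot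
    exact hX (le_bot_iff.mp (hbot ▸ le_inf hN hK))

lemma atoms_infinite (hinf : {N : Submodule R M | N ≠ ⊥ ∧ N ≠ ⊤}.Infinite)
    (homega : cliqueNumber R M < Cardinal.aleph0) :
    {A : Submodule R M | IsAtom A}.Infinite := by
  have _inst := atomic_of_homega homega
  by_contra hfin
  rw [Set.not_infinite] at hfin
  refine hinf (Set.Finite.subset (hfin.biUnion (t := fun A =>
    {N : Submodule R M | (N ≠ ⊥ ∧ N ≠ ⊤) ∧ A ≤ N})
    (fun A hA => over_finite homega hA.1)) ?_)
  intro N hN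
  rcases (eq_bot_or_exists_atom_le N).resolve_left hN.1 with ⟨A, hA, hAN⟩
  exact Set.mem_biUnion hA ⟨hN, hAN⟩

lemma all_atoms_le (homega : cliqueNumber R M < Cardinal.aleph0)
    {P : Submodule R M} (hPtop : P ≠ ⊤)
    (hP : {T : Submodule R M | IsAtom T ∧ T ≤ P}.Infinite)
    {B : Submodule R M} (hB : IsAtom B) : B ≤ P := by
  by_contra hBP
  set AP := {T : Submodule R M | IsAtom T ∧ T ≤ P} with hAP
  have hinjOn : Set.InjOn (fun T => B ⊔ T) AP := by
    rintro T hT T' hT' heq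
    simp only at heq
    by_contra hne
    have hBne : B ≠ T' := fun h => hBP (h ▸ hT'.2)
    have hBT' : B ⊓ T' = ⊥ := atom_inf_eq_bot hB hT'.1 hBne
    have hc : T' ⋖ B ⊔ T' := cov_of_atom hB hBT'
    have hTT' : ¬ T ≤ T' := by
      intro hle
      exact hne (atom_le_atom hT.1 hT'.1 hle)
    have h1 : T' < T ⊔ T' := by
      refine lt_of_le_of_ne le_sup_right fun h => hTT' ?_
      rw [h]
      exact le_sup_left
    have h2 : T ⊔ T' ≤ B ⊔ T' := sup_le (heq ▸ le_sup_right) le_sup_right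
    have h3 : T ⊔ T' = B ⊔ T' := by
      rcases eq_or_lt_of_le h2 with h | h
      · exact h
      · exact absurd h (hc.2 h1)
    have : B ≤ T ⊔ T' := h3 ▸ le_sup_left
    exact hBP (this.trans (sup_le hT.2 hT'.2))
  have himg : ((fun T => B ⊔ T) '' AP).Infinite := hP.image hinjOn
  have hdiff : (((fun T => B ⊔ T) '' AP) \ {⊤}).Infinite :=
    himg.diff (Set.finite_singleton ⊤)
  refine hdiff (clique_finite homega ?_)
  constructor
  · rintro N ⟨⟨T, hT, rfl⟩, hNtop⟩
    refine ⟨fun h => hB.1 (le_bot_iff.mp (h ▸ le_sup_left)), hNtop⟩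
  · rintro N ⟨⟨T, hT, rfl⟩, -⟩ K ⟨⟨T', hT', rfl⟩, -⟩ - hbot
    exact hB.1 (le_bot_iff.mp (hbot ▸ le_inf le_sup_left le_sup_left))

lemma atom_le_socle {A : Submodule R M} (hA : IsAtom A) : A ≤ socle R M :=
  le_sSup (by rw [Set.mem_setOf_eq, isSimpleModule_iff_isAtom]; exact hA)

lemma socle_eq_sup (hinf : {N : Submodule R M | N ≠ ⊥ ∧ N ≠ ⊤}.Infinite)
    (homega : cliqueNumber R M < Cardinal.aleph0)
    {A : Submodule R M} (hA : IsAtom A) :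
    ∃ T, IsAtom T ∧ T ≠ A ∧ socle R M = A ⊔ T := by
  set 𝒯 := {T : Submodule R M | IsAtom T ∧ T ≠ A} with h𝒯def
  have h𝒯 : 𝒯.Infinite := by
    have : {T : Submodule R M | IsAtom T} \ {A} ⊆ 𝒯 := by
      rintro T ⟨hT, hTA⟩
      exact ⟨hT, by simpa using hTA⟩
    exact ((atoms_infinite hinf homega).diff (Set.finite_singleton A)).mono this
  by_cases hE : ∃ T ∈ 𝒯, A ⊔ T = ⊤
  · obtain ⟨T, hT, hTtop⟩ := hE
    refine ⟨T, hT.1, hT.2, le_antisymm ?_ (sup_le (atom_le_socle hA) (atom_le_socle hT.1))⟩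
    rw [hTtop]
    exact le_top
  · push_neg at hE
    set F := (fun T => A ⊔ T) '' 𝒯 with hFdef
    have hFfin : F.Finite := by
      apply clique_finite homega
      constructor
      · rintro N ⟨T, hT, rfl⟩
        exact ⟨fun h => hA.1 (le_bot_iff.mp (h ▸ le_sup_left)), hE T hT⟩
      · rintro N ⟨T, hT, rfl⟩ K ⟨T', hT', rfl⟩ - hbot
        exact hA.1 (le_bot_iff.mp (hbot ▸ le_inf le_sup_left le_sup_left))
    have hfib : ∃ P ∈ F, {T ∈ 𝒯 | A ⊔ T = P}.Infinite := by
      by_contra hcon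
      push_neg at hcon
      refine h𝒯 (Set.Finite.subset (hFfin.biUnion (t := fun P => {T ∈ 𝒯 | A ⊔ T = P})
        (fun P hP => hcon P hP)) ?_)
      intro T hT
      exact Set.mem_biUnion (Set.mem_image_of_mem _ hT) ⟨hT, rfl⟩
    obtain ⟨P, hPF, hPfib⟩ := hfib
    obtain ⟨T₁, hT₁, rfl⟩ := hPF
    have hPtop : A ⊔ T₁ ≠ ⊤ := hE T₁ hT₁
    have hatomsP : {T : Submodule R M | IsAtom T ∧ T ≤ A ⊔ T₁}.Infinite := by
      refine hPfib.mono ?_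
      rintro T ⟨hT, hTP⟩
      simp only at hTP
      exact ⟨hT.1, hTP ▸ le_sup_right⟩
    have hall : socle R M ≤ A ⊔ T₁ := by
      apply sSup_le
      intro S hS
      exact all_atoms_le homega hPtop hatomsP (isSimpleModule_iff_isAtom.mp hS)
    exact ⟨T₁, hT₁.1, hT₁.2, le_antisymm hall
      (sup_le (atom_le_socle hA) (atom_le_socle hT₁.1))⟩

lemma atom_covBy_socle (hinf : {N : Submodule R M | N ≠ ⊥ ∧ N ≠ ⊤}.Infinite)
    (homega : cliqueNumber R M < Cardinal.aleph0)
    {A : Submodule R M} (hA : IsAtom A) : A ⋖ socle R M := by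
  obtain ⟨T, hT, hTA, hsoc⟩ := socle_eq_sup hinf homega hA
  have h1 : T ⊓ A = ⊥ := atom_inf_eq_bot hT hA hTA
  have := cov_of_atom hT h1
  rwa [sup_comm, ← hsoc] at this

lemma atoms_sup_socle (hinf : {N : Submodule R M | N ≠ ⊥ ∧ N ≠ ⊤}.Infinite)
    (homega : cliqueNumber R M < Cardinal.aleph0)
    {T T' : Submodule R M} (hT : IsAtom T) (hT' : IsAtom T') (hne : T ≠ T') :
    T ⊔ T' = socle R M := by
  have hc : T ⋖ socle R M := atom_covBy_socle hinf homega hT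
  have h1 : T < T ⊔ T' := by
    refine lt_of_le_of_ne le_sup_left fun h => hne ?_
    exact (atom_le_atom hT' hT (by rw [h]; exact le_sup_right)).symm
  have h2 : T ⊔ T' ≤ socle R M := sup_le (atom_le_socle hT) (atom_le_socle hT')
  rcases eq_or_lt_of_le h2 with h | h
  · exact h
  · exact absurd h (hc.2 h1)

lemma compl_comap (hinf : {N : Submodule R M | N ≠ ⊥ ∧ N ≠ ⊤}.Infinite)
    (homega : cliqueNumber R M < Cardinal.aleph0)
    {T T' : Submodule R M} (hT : IsAtom T) (hT' : IsAtom T') (hne : T ≠ T') :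
    IsCompl (T.comap (socle R M).subtype) (T'.comap (socle R M).subtype) := by
  constructor
  · rw [disjoint_iff, ← Submodule.comap_inf, atom_inf_eq_bot hT hT' hne,
      Submodule.comap_bot, Submodule.ker_subtype]
  · rw [codisjoint_iff, eq_top_iff]
    rintro ⟨x, hx⟩ -
    have hx' : x ∈ T ⊔ T' := by rw [atoms_sup_socle hinf homega hT hT' hne]; exact hx
    rw [Submodule.mem_sup] at hx'
    obtain ⟨t, ht, t', ht', hsum⟩ := hx'
    exact Submodule.mem_sup.mpr ⟨⟨t, atom_le_socle hT ht⟩, Submodule.mem_comap.mpr ht,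
      ⟨t', atom_le_socle hT' ht'⟩, Submodule.mem_comap.mpr ht', Subtype.ext hsum⟩

end Helpers

/-- Let `M` have infinitely many nontrivial submodules and finite clique
number `ω(M)`.  Then: (i) `M` has finite length and `Soc(M)` is essential in `M`;
(ii) there are simple submodules `S ≅ S'` with `S ⊓ S' = ⊥`, `Soc(M) = S ⊔ S'` and `End(S)`
an infinite division ring; (iii) if `N₁`, `N₂` are nontrivial submodules neither of which
contains `Soc(M)`, then `N₁ ⊓ N₂ = ⊥`, or `N₁ ⊓ Soc(M) = N₂ ⊓ Soc(M)` and this intersection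
is a simple submodule of `M`. -/
theorem statement13 {R : Type*} [Ring R] {M : Type*} [AddCommGroup M] [Module R M]
    (hinf : {N : Submodule R M | N ≠ ⊥ ∧ N ≠ ⊤}.Infinite)
    (homega : cliqueNumber R M < Cardinal.aleph0) :
    (IsFiniteLength R M ∧
      (∀ K : Submodule R M, K ≠ ⊥ → socle R M ⊓ K ≠ ⊥)) ∧
    (∃ S S' : Submodule R M, IsSimpleModule R S ∧ IsSimpleModule R S' ∧
      Nonempty (S ≃ₗ[R] S') ∧ S ⊓ S' = ⊥ ∧ socle R M = S ⊔ S' ∧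
      Infinite (Module.End R S) ∧ (∀ f : Module.End R S, f ≠ 0 → IsUnit f)) ∧
    (∀ N₁ N₂ : Submodule R M, N₁ ≠ ⊥ → N₁ ≠ ⊤ → N₂ ≠ ⊥ → N₂ ≠ ⊤ →
      ¬ socle R M ≤ N₁ → ¬ socle R M ≤ N₂ →
      (N₁ ⊓ N₂ = ⊥ ∨
        (N₁ ⊓ socle R M = N₂ ⊓ socle R M ∧
          IsSimpleModule R ↥(N₁ ⊓ socle R M)))) := by
  have hart := artin_of_homega homega
  have hnoeth := noeth_of_homega homega
  have _inst := atomic_of_homega homega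
  have hFL : IsFiniteLength R M :=
    isFiniteLength_iff_isNoetherian_isArtinian.mpr ⟨hnoeth, hart⟩
  have hEss : ∀ K : Submodule R M, K ≠ ⊥ → socle R M ⊓ K ≠ ⊥ := by
    intro K hK
    obtain ⟨A, hA, hAK⟩ := (eq_bot_or_exists_atom_le K).resolve_left hK
    intro hbot
    exact hA.1 (le_bot_iff.mp (hbot ▸ le_inf (atom_le_socle hA) hAK))
  refine ⟨⟨hFL, hEss⟩, ?_, ?_⟩
  · -- part (ii)
    obtain ⟨S, hS⟩ := (atoms_infinite hinf homega).nonempty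
    obtain ⟨S', hS'mem⟩ :=
      (((atoms_infinite hinf homega).diff (Set.finite_singleton S))).nonempty
    have hS' : IsAtom S' := hS'mem.1
    have hSS' : S ≠ S' := fun h => hS'mem.2 (by simp [h])
    obtain ⟨T, hTmem⟩ :=
      (((atoms_infinite hinf homega).diff
        ((Set.finite_singleton S).insert S'))).nonempty
    have hT : IsAtom T := hTmem.1
    have hTS : T ≠ S := by
      intro h; exact hTmem.2 (by simp [h])
    have hTS' : T ≠ S' := by
      intro h; exact hTmem.2 (by simp [h])
    have hSsimple : IsSimpleModule R S := isSimpleModule_iff_isAtom.mpr hS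
    have hS'simple : IsSimpleModule R S' := isSimpleModule_iff_isAtom.mpr hS'
    -- isomorphism S ≃ S'
    have e1 := Submodule.quotientEquivOfIsCompl _ _
      (compl_comap hinf homega hT hS hTS)
    have e2 := Submodule.quotientEquivOfIsCompl _ _
      (compl_comap hinf homega hT hS' hTS')
    have eS := (e1.symm.trans e2 :
      (S.comap (socle R M).subtype) ≃ₗ[R] (S'.comap (socle R M).subtype))
    have isoSS' : (↥S) ≃ₗ[R] (↥S') :=
      ((Submodule.comapSubtypeEquivOfLe (atom_le_socle hS)).symm.trans eS).trans
        (Submodule.comapSubtypeEquivOfLe (atom_le_socle hS'))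
    -- Infinite End
    haveI hInfDom : Infinite {T : Submodule R M // IsAtom T ∧ T ≠ S} := by
      have h1 : {T : Submodule R M | IsAtom T ∧ T ≠ S}.Infinite :=
        ((atoms_infinite hinf homega).diff (Set.finite_singleton S)).mono
          (by rintro X ⟨h, hn⟩; exact ⟨h, by simpa using hn⟩)
      exact h1.to_subtype
    have hinj : Function.Injective
        (fun T : {T : Submodule R M // IsAtom T ∧ T ≠ S} =>
          (Submodule.projectionOnto _ _
            (compl_comap hinf homega hS T.2.1 (Ne.symm T.2.2))).comp
          (S'.comap (socle R M).subtype).subtype) := by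
      intro T T' heq
      simp only at heq
      have hsup : (S.comap (socle R M).subtype) ⊔ (S'.comap (socle R M).subtype) = ⊤ :=
        (compl_comap hinf homega hS hS' hSS').sup_eq_top
      have hpp : Submodule.projectionOnto _ _
            (compl_comap hinf homega hS T.2.1 (Ne.symm T.2.2)) =
          Submodule.projectionOnto _ _
            (compl_comap hinf homega hS T'.2.1 (Ne.symm T'.2.2)) := by
        rw [← LinearMap.eqLocus_eq_top, eq_top_iff, ← hsup]
        apply sup_le
        · intro x hx
          have h1 := Submodule.linearProjOfIsCompl_apply_left
            (compl_comap hinf homega hS T.2.1 (Ne.symm T.2.2)) ⟨x, hx⟩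
          have h2 := Submodule.linearProjOfIsCompl_apply_left
            (compl_comap hinf homega hS T'.2.1 (Ne.symm T'.2.2)) ⟨x, hx⟩
          exact LinearMap.mem_eqLocus.mpr (h1.trans h2.symm)
        · intro x hx
          have h3 := congrArg
            (fun g => g (⟨x, hx⟩ : (S'.comap (socle R M).subtype))) heq
          simpa using h3
      have hker := congrArg LinearMap.ker hpp
      rw [Submodule.linearProjOfIsCompl_ker, Submodule.linearProjOfIsCompl_ker] at hker
      have hmap := congrArg (Submodule.map (socle R M).subtype) hker
      rw [Submodule.map_comap_subtype, Submodule.map_comap_subtype,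
        inf_eq_right.mpr (atom_le_socle T.2.1),
        inf_eq_right.mpr (atom_le_socle T'.2.1)] at hmap
      exact Subtype.ext hmap
    haveI hInfHom : Infinite
        ((S'.comap (socle R M).subtype) →ₗ[R] (S.comap (socle R M).subtype)) :=
      Infinite.of_injective _ hinj
    have hInfEnd : Infinite (Module.End R S) := by
      set g : (S.comap (socle R M).subtype) ≃ₗ[R] S :=
        Submodule.comapSubtypeEquivOfLe (atom_le_socle hS) with hg
      refine Infinite.of_injective
        (fun f : ((S'.comap (socle R M).subtype) →ₗ[R] (S.comap (socle R M).subtype)) =>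
          ((g.toLinearMap.comp f).comp
            (eS.toLinearMap.comp g.symm.toLinearMap) : Module.End R S)) ?_
      intro f f' heq
      simp only at heq
      refine LinearMap.ext fun y => g.injective ?_
      have h3 := congrArg (fun F : Module.End R S => F (g (eS.symm y))) heq
      simpa using h3
    refine ⟨S, S', hSsimple, hS'simple, ⟨isoSS'⟩, atom_inf_eq_bot hS hS' hSS',
      (atoms_sup_socle hinf homega hS hS' hSS').symm, hInfEnd, ?_⟩
    intro f hf
    haveI := hSsimple
    rcases f.bijective_or_eq_zero with hb | h0
    · exact (Module.End.isUnit_iff f).mpr hb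
    · exact absurd h0 hf
  · -- part (iii)
    intro N₁ N₂ h1b h1t h2b h2t hs1 hs2
    have key : ∀ N : Submodule R M, N ≠ ⊥ → ¬ socle R M ≤ N →
        IsAtom (N ⊓ socle R M) := by
      intro N hb hns
      obtain ⟨A, hA, hAN⟩ := (eq_bot_or_exists_atom_le (N ⊓ socle R M)).resolve_left
        (by rw [inf_comm]; exact hEss N hb)
      rcases eq_or_lt_of_le hAN with h | h
      · exact h ▸ hA
      · exfalso
        have hc := atom_covBy_socle hinf homega hA
        have hNs : N ⊓ socle R M = socle R M := by
          rcases eq_or_lt_of_le (inf_le_right : N ⊓ socle R M ≤ socle R M) with h2 | h2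
          · exact h2
          · exact absurd h2 (hc.2 h)
        exact hns (inf_eq_right.mp hNs)
    have hA1 := key N₁ h1b hs1
    have hA2 := key N₂ h2b hs2
    by_cases hcase : N₁ ⊓ socle R M = N₂ ⊓ socle R M
    · exact Or.inr ⟨hcase, isSimpleModule_iff_isAtom.mpr hA1⟩
    · refine Or.inl ?_
      by_contra hbot
      obtain ⟨U, hU, hUle⟩ := (eq_bot_or_exists_atom_le (N₁ ⊓ N₂)).resolve_left hbot
      have hU1 : U ≤ N₁ ⊓ socle R M := le_inf (hUle.trans inf_le_left) (atom_le_socle hU)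
      have hU2 : U ≤ N₂ ⊓ socle R M := le_inf (hUle.trans inf_le_right) (atom_le_socle hU)
      exact hcase ((atom_le_atom hU hA1 hU1).symm.trans (atom_le_atom hU hA2 hU2))
end

section
/- For a left R-module M, the following conditions are equivalent: (1) M has infinitely many nontrivial submodules and the clique number ω(M) of the intersection graph G(M) is finite; (2) both of the following hold: (i) there exist simple submodules S and S' of M with S ≅ S', S ∩ S' = 0, Soc(M) = S + S', and End(S) an infinite division ring; (ii) all but finitely many submodules of M are contained in Soc(M). -/
open Submodule Set


open Submodule Set

/-- In a modular lattice, joining with an atom not below `a` covers `a`. -/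
lemma atom_covBy_sup {α : Type*} [Lattice α] [OrderBot α] [IsModularLattice α]
    {a b : α} (hb : IsAtom b) (h : ¬ b ≤ a) : a ⋖ a ⊔ b := by
  constructor
  · exact lt_of_le_of_ne le_sup_left fun he => h (by rw [he]; exact le_sup_right)
  · intro c hac hlt
    have h1 : (a ⊔ b) ⊓ c = a ⊔ b ⊓ c := sup_inf_assoc_of_le b hac.le
    have h2 : (a ⊔ b) ⊓ c = c := inf_eq_right.mpr hlt.le
    rcases hb.le_iff.mp (inf_le_left : b ⊓ c ≤ b) with h3 | h3
    · have : c = a := by rw [← h2, h1, h3, sup_bot_eq]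
      exact hac.ne' this
    · exact absurd (sup_le hac.le (inf_eq_left.mp h3)) (not_le_of_gt hlt)

lemma aux_pigeon {α β : Type*} {s : Set α} (hs : s.Infinite) {f : α → β} {t : Set β}
    (ht : t.Finite) (hmem : ∀ a ∈ s, f a ∈ t) :
    ∃ b ∈ t, {a | a ∈ s ∧ f a = b}.Infinite := by
  by_contra h
  push_neg at h
  have hsub : s ⊆ ⋃ b ∈ t, {a | a ∈ s ∧ f a = b} := fun a ha =>
    Set.mem_biUnion (hmem a ha) ⟨ha, rfl⟩
  exact hs ((ht.biUnion fun b hb => h b hb).subset hsub)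

lemma aux_two {α β : Type*} {s : Set α} (hs : s.Infinite) {f : α → β}
    (hfib : ∀ b, {a | a ∈ s ∧ f a = b}.Finite) (a₁ : α) (ha₁ : a₁ ∈ s) :
    ∃ a₂ ∈ s, f a₂ ≠ f a₁ := by
  by_contra h
  push_neg at h
  exact hs ((hfib (f a₁)).subset fun a ha => ⟨ha, h a ha⟩)

section Modules

variable {R : Type*} [Ring R] {M : Type*} [AddCommGroup M] [Module R M]

lemma aux_isCompl {S S' V : Submodule R M} (hd : S ⊓ S' = ⊥) (hSV : S ≤ V) (hS'V : S' ≤ V)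
    (hV : V ≤ S ⊔ S') : IsCompl (comap V.subtype S) (comap V.subtype S') := by
  constructor
  · rw [disjoint_iff, ← comap_inf, hd, comap_bot, ker_subtype]
  · rw [codisjoint_iff, eq_top_iff]
    rintro ⟨x, hx⟩ -
    obtain ⟨s, hs, t, ht, hst⟩ := mem_sup.mp (hV hx)
    refine mem_sup.mpr ⟨⟨s, hSV hs⟩, ?_, ⟨t, hS'V ht⟩, ?_, ?_⟩
    · simpa [mem_comap] using hs
    · simpa [mem_comap] using ht
    · exact Subtype.ext hst

lemma aux_bij {S S' V : Submodule R M} (hd : S ⊓ S' = ⊥) (hSV : S ≤ V) (hS'V : S' ≤ V)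
    (hV : V ≤ S ⊔ S') (hS'atom : IsAtom S') {K : Submodule R M} (hK : K ≤ V)
    (hKS : K ⊓ S = ⊥) (hKbot : K ≠ ⊥)
    (hc : IsCompl (comap V.subtype S) (comap V.subtype S')) :
    Function.Bijective ⇑((Submodule.linearProjOfIsCompl (comap V.subtype S')
      (comap V.subtype S) hc.symm).comp (comap V.subtype K).subtype) := by
  set A := comap V.subtype S with hA
  set B := comap V.subtype S' with hB
  set f := (Submodule.linearProjOfIsCompl B A hc.symm).comp (comap V.subtype K).subtype with hf
  have hinj0 : ∀ x : ↥(comap V.subtype K), f x = 0 → x = 0 := by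
    intro x hx
    have h1 : (↑x : ↥V) ∈ A := by
      rw [hf] at hx
      simp only [LinearMap.comp_apply, Submodule.coe_subtype] at hx
      exact (Submodule.linearProjOfIsCompl_apply_eq_zero_iff hc.symm).mp hx
    have h2 : (↑(↑x : ↥V) : M) ∈ K ⊓ S := ⟨x.2, h1⟩
    rw [hKS, Submodule.mem_bot] at h2
    exact Subtype.ext (Subtype.ext h2)
  have hinj : Function.Injective ⇑f := by
    intro x y hxy
    have : x - y = 0 := hinj0 _ (by rw [map_sub, hxy, sub_self])
    rw [sub_eq_zero] at this
    exact this
  haveI : IsSimpleModule R ↥S' := isSimpleModule_iff_isAtom.mpr hS'atom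
  haveI hsB : IsSimpleModule R ↥B := IsSimpleModule.congr (comapSubtypeEquivOfLe hS'V)
  have hKbot' : comap V.subtype K ≠ ⊥ := by
    intro h
    apply hKbot
    have h2 := congrArg (map V.subtype) h
    rwa [map_comap_subtype, inf_eq_right.mpr hK, Submodule.map_bot] at h2
  obtain ⟨x, hxK, hx0⟩ := (Submodule.ne_bot_iff _).mp hKbot'
  refine ⟨hinj, ?_⟩
  rw [← LinearMap.range_eq_top]
  rcases eq_bot_or_eq_top (LinearMap.range f) with hr | hr
  · exfalso
    have h3 : f ⟨x, hxK⟩ ∈ (⊥ : Submodule R ↥B) := hr ▸ LinearMap.mem_range_self f _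
    rw [Submodule.mem_bot] at h3
    have h4 := hinj0 _ h3
    rw [Subtype.ext_iff] at h4
    exact hx0 h4
  · exact hr

lemma aux_key1 {S S' : Submodule R M} (hS'atom : IsAtom S') (hd : S ⊓ S' = ⊥)
    {K : Submodule R M} (hK : K ≤ S ⊔ S') (hKS : K ⊓ S = ⊥) (hKbot : K ≠ ⊥) :
    Nonempty (↥K ≃ₗ[R] ↥S') := by
  have hc := aux_isCompl hd (le_sup_left : S ≤ S ⊔ S') le_sup_right le_rfl
  have hb := aux_bij hd le_sup_left le_sup_right le_rfl hS'atom hK hKS hKbot hc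
  exact ⟨((comapSubtypeEquivOfLe hK).symm.trans (LinearEquiv.ofBijective _ hb)).trans
    (comapSubtypeEquivOfLe le_sup_right)⟩

lemma aux_atom {S S' : Submodule R M} (hS'atom : IsAtom S') (hd : S ⊓ S' = ⊥)
    {K : Submodule R M} (hK : K ≤ S ⊔ S') (hKS : K ⊓ S = ⊥) (hKbot : K ≠ ⊥) : IsAtom K := by
  obtain ⟨e⟩ := aux_key1 hS'atom hd hK hKS hKbot
  haveI : IsSimpleModule R ↥S' := isSimpleModule_iff_isAtom.mpr hS'atom
  haveI : IsSimpleModule R ↥K := IsSimpleModule.congr e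
  exact isSimpleModule_iff_isAtom.mp ‹_›

lemma aux_sub_V {S S' : Submodule R M} (hS : IsAtom S) (hS' : IsAtom S') (hd : S ⊓ S' = ⊥)
    {K : Submodule R M} (hK : K ≤ S ⊔ S') : K = ⊥ ∨ IsAtom K ∨ K = S ⊔ S' := by
  by_cases hsk : S ≤ K
  · have h1 : (S ⊔ S') ⊓ K = S ⊔ S' ⊓ K := sup_inf_assoc_of_le S' hsk
    rw [inf_eq_right.mpr hK] at h1
    rcases hS'.le_iff.mp (inf_le_left : S' ⊓ K ≤ S') with h2 | h2
    · right; left; rw [h1, h2, sup_bot_eq]; exact hS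
    · right; right; rw [h1, h2]
  · have hKS : K ⊓ S = ⊥ := by
      rcases hS.le_iff.mp (inf_le_right : K ⊓ S ≤ S) with h | h
      · exact h
      · exact absurd (by rw [← h]; exact inf_le_left) hsk
    by_cases hKbot : K = ⊥
    · exact Or.inl hKbot
    · exact Or.inr (Or.inl (aux_atom hS' hd hK hKS hKbot))

end Modules


section Modules
variable {R : Type*} [Ring R] {M : Type*} [AddCommGroup M] [Module R M]


lemma aux_atoms_finite {S S' : Submodule R M} (hS : IsAtom S) (hS' : IsAtom S')
    (hd : S ⊓ S' = ⊥) (hall : ∀ T : Submodule R M, IsAtom T → T ≤ S ⊔ S')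
    (hfin : Finite (↥(comap (S ⊔ S').subtype S) →ₗ[R] ↥(comap (S ⊔ S').subtype S'))) :
    {T : Submodule R M | IsAtom T}.Finite := by
  set V := S ⊔ S' with hVdef
  have hc : IsCompl (comap V.subtype S) (comap V.subtype S') :=
    aux_isCompl hd le_sup_left le_sup_right le_rfl
  set A := comap V.subtype S with hA
  set B := comap V.subtype S' with hB
  set ρ := Submodule.linearProjOfIsCompl A B hc with hρ
  set π := Submodule.linearProjOfIsCompl B A hc.symm with hπ
  have hbij : ∀ T : ↥{T : Submodule R M | IsAtom T ∧ T ≠ S'},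
      Function.Bijective ⇑(ρ.comp (comap V.subtype T.1).subtype) := by
    rintro ⟨T, hT, hTS'⟩
    have h1 : T ⊓ S' = ⊥ := (hT.disjoint_of_ne hS' hTS').eq_bot
    have h2 := aux_bij (S := S') (S' := S) (V := V)
      (by rw [inf_comm]; exact hd) le_sup_right le_sup_left (sup_comm S S').le hS
      (hall T hT) h1 hT.1 hc.symm
    exact h2
  set g : ∀ T : ↥{T : Submodule R M | IsAtom T ∧ T ≠ S'},
      ↥A ≃ₗ[R] ↥(comap V.subtype T.1) := fun T =>
    (LinearEquiv.ofBijective _ (hbij T)).symm with hg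
  set G : ↥{T : Submodule R M | IsAtom T ∧ T ≠ S'} → (↥A →ₗ[R] ↥B) := fun T =>
    π.comp ((comap V.subtype T.1).subtype.comp (g T).toLinearMap) with hG
  have happ : ∀ (T : ↥{T : Submodule R M | IsAtom T ∧ T ≠ S'}) (a : ↥A),
      ρ ((g T a : ↥(comap V.subtype T.1)) : ↥V) = a := by
    intro T a
    have := (LinearEquiv.ofBijective _ (hbij T)).apply_symm_apply a
    exact this
  have hGapp : ∀ (T : ↥{T : Submodule R M | IsAtom T ∧ T ≠ S'}) (a : ↥A),
      G T a = π ((g T a : ↥(comap V.subtype T.1)) : ↥V) := fun T a => rfl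
  have hmem : ∀ (T : ↥{T : Submodule R M | IsAtom T ∧ T ≠ S'}) (x : ↥V),
      x ∈ comap V.subtype T.1 ↔ x = ↑(ρ x) + ↑(G T (ρ x)) := by
    intro T x
    constructor
    · intro hx
      have e0 : (LinearEquiv.ofBijective _ (hbij T)) ⟨x, hx⟩ = ρ x := rfl
      have e1 : g T (ρ x) = ⟨x, hx⟩ := by
        rw [hg, ← e0]
        exact (LinearEquiv.ofBijective _ (hbij T)).symm_apply_apply _
      have e2 : G T (ρ x) = π x := by rw [hGapp, e1]
      rw [e2]
      exact (Submodule.projection_add_projection_eq_self hc x).symm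
    · intro hx
      have h3 : ρ ((g T (ρ x) : ↥(comap V.subtype T.1)) : ↥V) = ρ x := happ T (ρ x)
      have h4 : (x : ↥V) = ((g T (ρ x) : ↥(comap V.subtype T.1)) : ↥V) := by
        conv_rhs => rw [← (show (↑(ρ ((g T (ρ x) : ↥(comap V.subtype T.1)) : ↥V)) : ↥V) + ↑(π ((g T (ρ x) : ↥(comap V.subtype T.1)) : ↥V)) = ((g T (ρ x) : ↥(comap V.subtype T.1)) : ↥V) from
          Submodule.projection_add_projection_eq_self hc ((g T (ρ x) : ↥(comap V.subtype T.1)) : ↥V))]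
        rw [h3, ← hGapp]
        exact hx
      rw [h4]
      exact (g T (ρ x)).2
  have hGinj : Function.Injective G := by
    intro T U hTU
    have hcomap : comap V.subtype T.1 = comap V.subtype U.1 := by
      ext x
      rw [hmem T x, hmem U x, hTU]
    have hT1 : T.1 = U.1 := by
      have h5 := congrArg (map V.subtype) hcomap
      rwa [map_comap_subtype, map_comap_subtype, inf_eq_right.mpr (hall T.1 T.2.1),
        inf_eq_right.mpr (hall U.1 U.2.1)] at h5
    exact Subtype.ext hT1
  haveI : Finite (↥A →ₗ[R] ↥B) := hfin
  have hfinD : {T : Submodule R M | IsAtom T ∧ T ≠ S'}.Finite :=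
    Set.finite_coe_iff.mp (Finite.of_injective G hGinj)
  refine (hfinD.insert S').subset ?_
  intro T hT
  by_cases h : T = S'
  · exact Set.mem_insert_iff.mpr (Or.inl h)
  · exact Set.mem_insert_iff.mpr (Or.inr ⟨hT, h⟩)

lemma aux_uniq {S S' : Submodule R M} (hd : S ⊓ S' = ⊥) (y z : ↥S) (u v : ↥S')
    (h : (↑y : M) + ↑u = ↑z + ↑v) : y = z ∧ u = v := by
  have h1 : (↑y - ↑z : M) = ↑v - ↑u := sub_eq_sub_iff_add_eq_add.mpr (by rw [h, add_comm])
  have h2 : (↑y - ↑z : M) ∈ S ⊓ S' := by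
    constructor
    · exact sub_mem y.2 z.2
    · rw [h1]; exact sub_mem v.2 u.2
  rw [hd, Submodule.mem_bot, sub_eq_zero] at h2
  have h3 : y = z := Subtype.ext h2
  refine ⟨h3, ?_⟩
  have h4 : (↑u : M) = ↑v := by
    have := h
    rw [h2] at this
    exact add_left_cancel this
  exact Subtype.ext h4

lemma aux_many {S S' : Submodule R M} (hSb : S ≠ ⊥) (hS'b : S' ≠ ⊥) (e : ↥S ≃ₗ[R] ↥S')
    (hd : S ⊓ S' = ⊥) [Infinite (Module.End R ↥S)] :
    {N : Submodule R M | N ≠ ⊥ ∧ N ≠ ⊤}.Infinite := by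
  set Φ : Module.End R ↥S → Submodule R M :=
    fun f => LinearMap.range (S.subtype + S'.subtype.comp (e.toLinearMap.comp f)) with hΦ
  have hel : ∀ (f : Module.End R ↥S) (x : M),
      x ∈ Φ f ↔ ∃ y : ↥S, (↑y : M) + ↑(e (f y)) = x := by
    intro f x
    rw [hΦ]
    simp [LinearMap.mem_range, LinearMap.add_apply, LinearMap.comp_apply]
  have hinj : Function.Injective Φ := by
    intro f g hfg
    ext y
    have h1 : ((↑y : M) + ↑(e (f y))) ∈ Φ g := by
      rw [← hfg, hel]; exact ⟨y, rfl⟩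
    obtain ⟨z, hz⟩ := (hel g _).mp h1
    obtain ⟨h2, h3⟩ := aux_uniq hd z y (e (g z)) (e (f y)) hz
    rw [← h2] at h3 ⊢
    exact congrArg Subtype.val (e.injective h3).symm
  have hmem : ∀ f : Module.End R ↥S, Φ f ∈ {N : Submodule R M | N ≠ ⊥ ∧ N ≠ ⊤} := by
    intro f
    obtain ⟨y0, hy0S, hy0⟩ := (Submodule.ne_bot_iff S).mp hSb
    constructor
    · rw [Submodule.ne_bot_iff]
      refine ⟨↑(⟨y0, hy0S⟩ : ↥S) + ↑(e (f ⟨y0, hy0S⟩)), (hel f _).mpr ⟨_, rfl⟩, ?_⟩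
      intro h0
      have : (↑(⟨y0, hy0S⟩ : ↥S) : M) + ↑(e (f ⟨y0, hy0S⟩)) = ↑(0 : ↥S) + ↑(0 : ↥S') := by
        simpa using h0
      obtain ⟨h1, -⟩ := aux_uniq hd _ _ _ _ this
      exact hy0 (by simpa using congrArg (Subtype.val) h1)
    · intro htop
      obtain ⟨z0, hz0S, hz0⟩ := (Submodule.ne_bot_iff S').mp hS'b
      have h1 : z0 ∈ Φ f := by rw [htop]; trivial
      obtain ⟨y, hy⟩ := (hel f _).mp h1
      have h2 : (↑y : M) + ↑(e (f y)) = ↑(0 : ↥S) + ↑(⟨z0, hz0S⟩ : ↥S') := by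
        simpa using hy
      obtain ⟨h3, h4⟩ := aux_uniq hd _ _ _ _ h2
      rw [h3] at h4
      simp only [map_zero] at h4
      exact hz0 (by simpa using (congrArg Subtype.val h4).symm)
  exact Set.infinite_of_injective_forall_mem hinj hmem

lemma aux_unit {S : Submodule R M} (hS : IsSimpleModule R ↥S) :
    ∀ f : Module.End R ↥S, f ≠ 0 → IsUnit f := by
  intro f hf
  haveI := hS
  have hb := f.bijective_or_eq_zero.resolve_right hf
  let e := LinearEquiv.ofBijective f hb
  refine ⟨⟨f, e.symm.toLinearMap, ?_, ?_⟩, rfl⟩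
  · ext x
    exact congrArg Subtype.val (e.apply_symm_apply x)
  · ext x
    exact congrArg Subtype.val (e.symm_apply_apply x)

end Modules

/-- For a module `M` the following are equivalent:
(1) `M` has infinitely many nontrivial submodules and `ω(M)` is finite;
(2) (i) there are simple submodules `S ≅ S'` of `M` with `S ⊓ S' = ⊥`,
`Soc(M) = S ⊔ S'`, and `End(S)` an infinite division ring; and
(ii) all but finitely many submodules of `M` are contained in `Soc(M)`. -/
theorem statement15 {R : Type*} [Ring R] {M : Type*} [AddCommGroup M] [Module R M] :
    ({N : Submodule R M | N ≠ ⊥ ∧ N ≠ ⊤}.Infinite ∧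
      cliqueNumber R M < Cardinal.aleph0) ↔
    ((∃ S S' : Submodule R M, IsSimpleModule R S ∧ IsSimpleModule R S' ∧
        Nonempty (S ≃ₗ[R] S') ∧ S ⊓ S' = ⊥ ∧ socle R M = S ⊔ S' ∧
        Infinite (Module.End R S) ∧ (∀ f : Module.End R S, f ≠ 0 → IsUnit f)) ∧
      {N : Submodule R M | ¬ N ≤ socle R M}.Finite) := by
  constructor
  · rintro ⟨hinf, hclique⟩
    -- every clique is finite
    have hCf : ∀ C : Set (Submodule R M), IsIntClique C → C.Finite := by
      intro C hC
      have hb : BddAbove {c : Cardinal |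
          ∃ C : Set (Submodule R M), IsIntClique C ∧ c = Cardinal.mk C} := by
        refine ⟨Cardinal.mk (Submodule R M), ?_⟩
        rintro c ⟨C, -, rfl⟩
        exact Cardinal.mk_set_le C
      have h1 : Cardinal.mk C ≤ cliqueNumber R M := le_csSup hb ⟨C, hC, rfl⟩
      exact Cardinal.lt_aleph0_iff_set_finite.mp (h1.trans_lt hclique)
    -- everything above a nonzero submodule is a finite family
    have hU : ∀ A : Submodule R M, A ≠ ⊥ → {K : Submodule R M | A ≤ K}.Finite := by
      intro A hA
      have hcl : IsIntClique {K : Submodule R M | A ≤ K ∧ K ≠ ⊤} := by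
        constructor
        · rintro N ⟨h1, h2⟩
          exact ⟨fun hb => hA (le_bot_iff.mp (hb ▸ h1)), h2⟩
        · rintro N ⟨h1, -⟩ K ⟨h2, -⟩ - hNK
          exact hA (le_bot_iff.mp (hNK ▸ le_inf h1 h2))
      refine ((hCf _ hcl).insert ⊤).subset ?_
      intro K hK
      by_cases h : K = ⊤
      · exact Set.mem_insert_iff.mpr (Or.inl h)
      · exact Set.mem_insert_iff.mpr (Or.inr ⟨hK, h⟩)
    -- Artinian: well-founded <
    have hwf : WellFounded ((· < ·) : Submodule R M → Submodule R M → Prop) := by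
      rw [RelEmbedding.wellFounded_iff_isEmpty]
      constructor
      intro f
      have hmono : ∀ {m n : ℕ}, m > n → f m < f n := fun h => f.map_rel_iff.mpr h
      have hfinj : Function.Injective f := by
        intro m n hmn
        rcases lt_trichotomy m n with h | h | h
        · exact absurd (hmono h).ne' (by rw [hmn]; exact fun hh => hh rfl)
        · exact h
        · exact absurd (hmono h).ne (by rw [hmn]; exact fun hh => hh rfl)
      have hcl : IsIntClique (Set.range fun n => f (n + 1)) := by
        constructor
        · rintro N ⟨n, rfl⟩
          constructor
          · exact ((bot_le.trans_lt (hmono (Nat.lt_succ_self (n + 1))))).ne'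
          · exact ((hmono (Nat.succ_pos n)).trans_le le_top).ne
        · rintro N ⟨n, rfl⟩ K ⟨m, rfl⟩ hne hbot
          have hmn : n ≠ m := fun h => hne (by rw [h])
          have hle : f (max n m + 1) ≤ f (n + 1) ⊓ f (m + 1) := by
            refine le_inf ?_ ?_
            · rcases Nat.lt_or_ge n (max n m) with h | h
              · exact (hmono (Nat.succ_lt_succ h)).le
              · have : n = max n m := le_antisymm (le_max_left n m) h
                rw [← this]
            · rcases Nat.lt_or_ge m (max n m) with h | h
              · exact (hmono (Nat.succ_lt_succ h)).le
              · have : m = max n m := le_antisymm (le_max_right n m) h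
                rw [← this]
          rw [hbot, le_bot_iff] at hle
          exact (bot_le.trans_lt (hmono (Nat.lt_succ_self (max n m + 1)))).ne' hle
      have : (Set.range fun n => f (n + 1)).Infinite :=
        Set.infinite_range_of_injective fun m n h => Nat.succ_injective (hfinj h)
      exact this (hCf _ hcl)
    haveI : IsAtomic (Submodule R M) := isAtomic_of_orderBot_wellFounded_lt hwf
    -- infinitely many atoms
    have hAinf : {T : Submodule R M | IsAtom T}.Infinite := by
      intro hfin
      apply hinf
      have hsub : {N : Submodule R M | N ≠ ⊥ ∧ N ≠ ⊤} ⊆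
          ⋃ T ∈ {T : Submodule R M | IsAtom T}, {K : Submodule R M | T ≤ K} := by
        rintro N ⟨hN1, -⟩
        obtain ⟨T, hT, hTN⟩ := (eq_bot_or_exists_atom_le N).resolve_left hN1
        exact Set.mem_biUnion hT hTN
      exact (hfin.biUnion fun T hT => hU T hT.1).subset hsub
    -- extract V
    obtain ⟨T₀, hT₀⟩ := hAinf.nonempty
    have hs : ({T : Submodule R M | IsAtom T} \ {T₀}).Infinite :=
      hAinf.diff (Set.finite_singleton T₀)
    obtain ⟨V, -, hA₁⟩ := aux_pigeon hs (f := fun T => T₀ ⊔ T) (hU T₀ hT₀.1)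
      (fun T _ => show T₀ ≤ T₀ ⊔ T from le_sup_left)
    set A₁ := {T | T ∈ ({T : Submodule R M | IsAtom T} \ {T₀}) ∧ T₀ ⊔ T = V} with hA₁def
    have hA₁atom : ∀ T ∈ A₁, IsAtom T := fun T hT => hT.1.1
    have hcov : ∀ T ∈ A₁, T ⋖ V := by
      intro T hT
      have h1 : ¬ T₀ ≤ T := by
        intro hle
        rcases (hT.1.1.le_iff).mp hle with h | h
        · exact hT₀.1 h
        · exact hT.1.2 (by rw [← h]; rfl)
      have h2 := atom_covBy_sup hT₀ h1
      rwa [sup_comm, hT.2] at h2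
    have hA₁sub : ∀ T ∈ A₁, T ≤ V := fun T hT => (hcov T hT).le
    have hjoin : ∀ T ∈ A₁, ∀ T' ∈ A₁, T ≠ T' → T ⊔ T' = V := by
      intro T hT T' hT' hne
      have h1 : T < T ⊔ T' := by
        refine lt_of_le_of_ne le_sup_left fun h => hne ?_
        have h2 : T' ≤ T := by rw [h]; exact le_sup_right
        rcases (hA₁atom T hT).le_iff.mp h2 with h3 | h3
        · exact absurd h3 (hA₁atom T' hT').1
        · exact h3.symm
      rcases lt_or_eq_of_le (sup_le (hA₁sub T hT) (hA₁sub T' hT')) with h | h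
      · exact absurd h ((hcov T hT).2 h1)
      · exact h
    have hallV : ∀ U : Submodule R M, IsAtom U → U ≤ V := by
      by_contra hcon
      push_neg at hcon
      obtain ⟨U, hUatom, hUV⟩ := hcon
      obtain ⟨W, -, hA₂⟩ := aux_pigeon hA₁ (f := fun T => U ⊔ T) (hU U hUatom.1)
        (fun T _ => show U ≤ U ⊔ T from le_sup_left)
      obtain ⟨T, hT⟩ := hA₂.nonempty
      obtain ⟨T', hT'⟩ := (hA₂.diff (Set.finite_singleton T)).nonempty
      have hne : T ≠ T' := fun h => hT'.2 (by rw [h]; rfl)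
      have hTA₁ : T ∈ A₁ := hT.1
      have hT'A₁ : T' ∈ A₁ := hT'.1.1
      have hV_le_W : V ≤ W := by
        rw [← hjoin T hTA₁ T' hT'A₁ hne]
        exact sup_le (by rw [← hT.2]; exact le_sup_right) (by rw [← hT'.1.2]; exact le_sup_right)
      have hVW : V ≠ W := by
        intro h
        apply hUV
        rw [h, ← hT.2]
        exact le_sup_left
      have h1 : ¬ U ≤ T := fun h => hUV (h.trans (hA₁sub T hTA₁))
      have hcovTW : T ⋖ W := by
        have h2 := atom_covBy_sup hUatom h1
        rwa [sup_comm, hT.2] at h2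
      exact (hcovTW.2 (hcov T hTA₁).lt) (lt_of_le_of_ne hV_le_W hVW)
    -- pick S, S'
    obtain ⟨S, hS⟩ := hA₁.nonempty
    obtain ⟨S', hS'0⟩ := (hA₁.diff (Set.finite_singleton S)).nonempty
    have hS' : S' ∈ A₁ := hS'0.1
    have hSS' : S ≠ S' := fun h => hS'0.2 (by rw [h]; rfl)
    have hSatom : IsAtom S := hA₁atom S hS
    have hS'atom : IsAtom S' := hA₁atom S' hS'
    have hVSS' : S ⊔ S' = V := hjoin S hS S' hS' hSS'
    have hdisj : S ⊓ S' = ⊥ := (hSatom.disjoint_of_ne hS'atom hSS').eq_bot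
    have hsocV : socle R M = V := by
      apply le_antisymm
      · refine sSup_le fun A hA => hallV A (isSimpleModule_iff_isAtom.mp hA)
      · rw [← hVSS']
        exact sup_le (le_sSup (isSimpleModule_iff_isAtom.mpr hSatom))
          (le_sSup (isSimpleModule_iff_isAtom.mpr hS'atom))
    have hsocle : socle R M = S ⊔ S' := by rw [hsocV, hVSS']
    -- any atom is covered by V, any two distinct atoms join to V
    have hcovany : ∀ T : Submodule R M, IsAtom T → T ⋖ V := by
      intro T hT
      by_cases h : T = S
      · rw [h]; exact hcov S hS
      · have h1 : ¬ S ≤ T := by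
          intro hle
          rcases hT.le_iff.mp hle with h2 | h2
          · exact hSatom.1 h2
          · exact h h2.symm
        have h2 := atom_covBy_sup hSatom h1
        have h3 : T ⊔ S = V := by
          rcases lt_or_eq_of_le (sup_le (hallV T hT) (hA₁sub S hS)) with h4 | h4
          · refine absurd h4 ((hcov S hS).2 ?_)
            refine lt_of_le_of_ne le_sup_right fun hh => h ?_
            have h5 : T ≤ S := by rw [hh]; exact le_sup_left
            exact (hSatom.le_iff.mp h5).resolve_left hT.1
          · exact h4
        rwa [h3] at h2
    have hjoin_any : ∀ T T' : Submodule R M, IsAtom T → IsAtom T' → T ≠ T' → T ⊔ T' = V := by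
      intro T T' hT hT' hne
      rcases lt_or_eq_of_le (sup_le (hallV T hT) (hallV T' hT')) with h | h
      · refine absurd h ((hcovany T hT).2 ?_)
        refine lt_of_le_of_ne le_sup_left fun hh => hne ?_
        have h2 : T' ≤ T := by rw [hh]; exact le_sup_right
        rcases hT.le_iff.mp h2 with h3 | h3
        · exact absurd h3 hT'.1
        · exact h3.symm
      · exact h
    have hVne : V ≠ ⊥ := fun h => hSatom.1 (le_bot_iff.mp (h ▸ hA₁sub S hS))
    -- part (ii)
    have hii : {N : Submodule R M | ¬ N ≤ socle R M}.Finite := by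
      rw [hsocV]
      by_contra hXinf0
      have hX : {N : Submodule R M | ¬ N ≤ V}.Infinite := hXinf0
      have hXmeet : ∀ N ∈ {N : Submodule R M | ¬ N ≤ V}, IsAtom (N ⊓ V) ∨ V ≤ N := by
        intro N hN
        have hNbot : N ≠ ⊥ := fun h => hN (h ▸ bot_le)
        obtain ⟨T, hTatom, hTN⟩ := (eq_bot_or_exists_atom_le N).resolve_left hNbot
        have hmeetbot : N ⊓ V ≠ ⊥ := fun h =>
          hTatom.1 (le_bot_iff.mp (h ▸ le_inf hTN (hallV T hTatom)))
        rcases aux_sub_V hSatom hS'atom hdisj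
            (show N ⊓ V ≤ S ⊔ S' by rw [hVSS']; exact inf_le_right) with h | h | h
        · exact absurd h hmeetbot
        · exact Or.inl h
        · right
          rw [hVSS'] at h
          exact inf_eq_right.mp h
      set X' := {N : Submodule R M | ¬ N ≤ V ∧ IsAtom (N ⊓ V)} with hX'def
      have hX'inf : X'.Infinite := by
        intro hfin
        apply hX
        have h1 : {N : Submodule R M | ¬ N ≤ V} ⊆ X' ∪ {N | V ≤ N} := fun N hN =>
          (hXmeet N hN).elim (fun h => Or.inl ⟨hN, h⟩) Or.inr
        exact (hfin.union (hU V hVne)).subset h1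
      obtain ⟨W, -, hY⟩ := aux_pigeon hX'inf (f := fun N => N ⊔ V) (hU V hVne)
        (fun N _ => show V ≤ N ⊔ V from le_sup_right)
      set Y := {N | N ∈ X' ∧ N ⊔ V = W} with hYdef
      obtain ⟨N₁, hN₁⟩ := hY.nonempty
      have hfib : ∀ b : Submodule R M, {N | N ∈ Y ∧ N ⊓ V = b}.Finite := by
        intro b
        by_cases hb : b = ⊥
        · refine Set.Finite.subset Set.finite_empty ?_
          rintro N ⟨hNY, hNb⟩
          exact absurd (show N ⊓ V = ⊥ by rw [← hb]; exact hNb) hNY.1.2.1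
        · refine (hU b hb).subset fun N hN => ?_
          simp only [Set.mem_setOf_eq]
          rw [← hN.2]
          exact inf_le_left
      obtain ⟨N₂, hN₂Y, hN₂ne⟩ := aux_two hY hfib N₁ hN₁
      set T₁ := N₁ ⊓ V with hT₁def
      set T₂ := N₂ ⊓ V with hT₂def
      have hT₁atom : IsAtom T₁ := hN₁.1.2
      have hT₂atom : IsAtom T₂ := hN₂Y.1.2
      have hVT : T₂ ⊔ T₁ = V := hjoin_any _ _ hT₂atom hT₁atom hN₂ne
      have hbotmeet : N₁ ⊓ N₂ = ⊥ := by
        by_contra h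
        obtain ⟨T, hTa, hTle⟩ := (eq_bot_or_exists_atom_le (N₁ ⊓ N₂)).resolve_left h
        have h1 : T ≤ T₁ := le_inf (hTle.trans inf_le_left) (hallV T hTa)
        have h2 : T ≤ T₂ := le_inf (hTle.trans inf_le_right) (hallV T hTa)
        have e1 : T = T₁ := (hT₁atom.le_iff.mp h1).resolve_left hTa.1
        have e2 : T = T₂ := (hT₂atom.le_iff.mp h2).resolve_left hTa.1
        exact hN₂ne (e2 ▸ e1)
      have hW1 : N₁ ⊔ V = W := hN₁.2
      have hW2 : N₂ ⊔ V = W := hN₂Y.2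
      have hWT : T₂ ⊔ N₁ = W := by
        apply le_antisymm
        · exact sup_le ((inf_le_right : T₂ ≤ V).trans (le_sup_right.trans hW1.le))
            (le_sup_left.trans hW1.le)
        · rw [← hW1, ← hVT]
          exact sup_le le_sup_right (sup_le le_sup_left
            ((inf_le_left : T₁ ≤ N₁).trans le_sup_right))
      have hmod : (T₂ ⊔ N₁) ⊓ N₂ = T₂ ⊔ (N₁ ⊓ N₂) :=
        sup_inf_assoc_of_le N₁ (inf_le_left : T₂ ≤ N₂)
      rw [hWT, hbotmeet, sup_bot_eq] at hmod
      have hN₂W : N₂ ≤ W := le_sup_left.trans hW2.le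
      rw [inf_eq_right.mpr hN₂W] at hmod
      exact hN₂Y.1.1 (hmod.le.trans inf_le_right)
    -- isomorphism S ≃ S' via a third atom
    obtain ⟨T, hTmem⟩ := (hAinf.diff ((Set.finite_singleton S').insert S)).nonempty
    have hTa : IsAtom T := hTmem.1
    have hTS : T ≠ S := fun h => hTmem.2 (by rw [h]; exact Set.mem_insert _ _)
    have hTS' : T ≠ S' := fun h => hTmem.2 (by rw [h]; exact Set.mem_insert_iff.mpr (Or.inr rfl))
    have hTle : T ≤ S ⊔ S' := by rw [hVSS']; exact hallV T hTa
    obtain ⟨f1⟩ := aux_key1 hS'atom hdisj hTle ((hTa.disjoint_of_ne hSatom hTS).eq_bot) hTa.1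
    obtain ⟨f2⟩ := aux_key1 (S := S') (S' := S) hSatom (by rw [inf_comm]; exact hdisj)
      (by rw [sup_comm]; exact hTle) ((hTa.disjoint_of_ne hS'atom hTS').eq_bot) hTa.1
    have eSS' : ↥S ≃ₗ[R] ↥S' := f2.symm.trans f1
    -- End S is infinite
    have hEndInf : Infinite (Module.End R ↥S) := by
      rw [← not_finite_iff_infinite]
      intro hfin
      have hfin2 : Finite (↥(comap (S ⊔ S').subtype S) →ₗ[R] ↥(comap (S ⊔ S').subtype S')) := by
        set eA := comapSubtypeEquivOfLe (le_sup_left : S ≤ S ⊔ S') with heA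
        set eB := comapSubtypeEquivOfLe (le_sup_right : S' ≤ S ⊔ S') with heB
        refine Finite.of_injective
          (fun f => (eSS'.symm.toLinearMap.comp (eB.toLinearMap.comp
            (f.comp eA.symm.toLinearMap)) : Module.End R ↥S)) ?_
        intro f g h
        ext x
        have h1 := LinearMap.congr_fun h (eA x)
        simp only [LinearMap.comp_apply, LinearEquiv.coe_coe, LinearEquiv.symm_apply_apply] at h1
        exact_mod_cast eB.injective (eSS'.symm.injective h1)
      exact hAinf (aux_atoms_finite hSatom hS'atom hdisj
        (fun T hT => by rw [hVSS']; exact hallV T hT) hfin2)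
    exact ⟨⟨S, S', isSimpleModule_iff_isAtom.mpr hSatom, isSimpleModule_iff_isAtom.mpr hS'atom,
      ⟨eSS'⟩, hdisj, hsocle, hEndInf, aux_unit (isSimpleModule_iff_isAtom.mpr hSatom)⟩, hii⟩
  · rintro ⟨⟨S, S', hS, hS', ⟨e⟩, hdisj, hsoc, hEinf, -⟩, hF⟩
    haveI := hEinf
    have hSatom : IsAtom S := isSimpleModule_iff_isAtom.mp hS
    have hS'atom : IsAtom S' := isSimpleModule_iff_isAtom.mp hS'
    constructor
    · exact aux_many hSatom.1 hS'atom.1 e hdisj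
    · have hFfin : ({N : Submodule R M | ¬ N ≤ socle R M} ∪ {socle R M}).Finite :=
        hF.union (Set.finite_singleton _)
      have hbd : ∀ c ∈ {c : Cardinal |
          ∃ C : Set (Submodule R M), IsIntClique C ∧ c = Cardinal.mk C},
          c ≤ Cardinal.mk ↥({N : Submodule R M | ¬ N ≤ socle R M} ∪ {socle R M}) + 1 := by
        rintro c ⟨C, hC, rfl⟩
        have ha : ∀ K ∈ C ∩ {K : Submodule R M | K ≤ socle R M ∧ K ≠ socle R M}, IsAtom K := by
          intro K hK
          rcases aux_sub_V hSatom hS'atom hdisj (show K ≤ S ⊔ S' by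
            rw [← hsoc]; exact hK.2.1) with h | h | h
          · exact absurd h (hC.1 K hK.1).1
          · exact h
          · exact absurd (by rw [h, ← hsoc]) hK.2.2
        have hss : (C ∩ {K : Submodule R M | K ≤ socle R M ∧ K ≠ socle R M}).Subsingleton := by
          intro K₁ hK₁ K₂ hK₂
          by_contra hne
          exact hC.2 K₁ hK₁.1 K₂ hK₂.1 hne
            (((ha K₁ hK₁).disjoint_of_ne (ha K₂ hK₂) hne).eq_bot)
        have hsub : C ⊆ ({N : Submodule R M | ¬ N ≤ socle R M} ∪ {socle R M}) ∪
            (C ∩ {K : Submodule R M | K ≤ socle R M ∧ K ≠ socle R M}) := by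
          intro K hK
          by_cases h1 : K ≤ socle R M
          · by_cases h2 : K = socle R M
            · exact Or.inl (Or.inr (by rw [h2]; rfl))
            · exact Or.inr ⟨hK, h1, h2⟩
          · exact Or.inl (Or.inl h1)
        calc Cardinal.mk ↥C
            ≤ Cardinal.mk ↥(({N : Submodule R M | ¬ N ≤ socle R M} ∪ {socle R M}) ∪
              (C ∩ {K : Submodule R M | K ≤ socle R M ∧ K ≠ socle R M})) :=
              Cardinal.mk_le_mk_of_subset hsub
          _ ≤ Cardinal.mk ↥({N : Submodule R M | ¬ N ≤ socle R M} ∪ {socle R M}) +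
              Cardinal.mk ↥(C ∩ {K : Submodule R M | K ≤ socle R M ∧ K ≠ socle R M}) :=
              Cardinal.mk_union_le _ _
          _ ≤ Cardinal.mk ↥({N : Submodule R M | ¬ N ≤ socle R M} ∪ {socle R M}) + 1 :=
              add_le_add le_rfl (Cardinal.mk_le_one_iff_set_subsingleton.mpr hss)
      have hne : {c : Cardinal |
          ∃ C : Set (Submodule R M), IsIntClique C ∧ c = Cardinal.mk C}.Nonempty :=
        ⟨_, ⟨∅, ⟨fun N hN => hN.elim, fun N hN => hN.elim⟩, rfl⟩⟩
      have hle : cliqueNumber R M ≤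
          Cardinal.mk ↥({N : Submodule R M | ¬ N ≤ socle R M} ∪ {socle R M}) + 1 :=
        csSup_le hne hbd
      exact lt_of_le_of_lt hle (Cardinal.add_lt_aleph0 hFfin.lt_aleph0 Cardinal.one_lt_aleph0)
end
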